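/- arXiv:2010.11470 — 5 statements merged into one kernel-verified Lean document; each statement's English description precedes it below -/
import Mathlib

section
/- Fix real numbers μ_1 ≠ μ_2 and set Δ = μ_2 − μ_1. There exist positive numerical constants c and c' such that, for every n > 4Δ^{−2} and every x ∈ [1/2, n/2 − 1 − 2Δ^{−2}), the minimax probability inf_{τ̂} sup_{τ* ∈ {2,…,n}} P_{θ(τ*,μ)}( |τ̂ − τ*| ≥ 2Δ^{−2} + x ) ≥ c e^{−c' x Δ²}, where the infimum is over all estimators τ̂ (measurable functions of Y with values in {2,…,n}). -/
open MeasureTheory ProbabilityTheory Finset Real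
open scoped ENNReal NNReal

/-- i.i.d. standard Gaussian noise hypotheses. -/
def IsStdGaussianNoise {Ω : Type} [MeasurableSpace Ω] (P : Measure Ω) (ε : ℕ → Ω → ℝ) : Prop :=
  (∀ i, Measurable (ε i)) ∧
  iIndepFun ε P ∧
  (∀ i, P.map (ε i) = gaussianReal 0 1)

/-- Signal with a single change-point at position `τ` and levels `μ₁, μ₂`. -/
def oneCP (τ : ℕ) (μ₁ μ₂ : ℝ) : ℕ → ℝ := fun i => if i < τ then μ₁ else μ₂


lemma gauss_tilt (a : ℝ) (g : ℝ → ℝ≥0∞) (hg : Measurable g) :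
    ∫⁻ x, g (x + a) ∂(gaussianReal 0 1) =
      ∫⁻ x, g x * ENNReal.ofReal (Real.exp (a * x - a ^ 2 / 2)) ∂(gaussianReal 0 1) := by
  have hpdf : Measurable (gaussianPDF 0 1) := measurable_gaussianPDF 0 1
  have hg2 : Measurable (fun x => g x * ENNReal.ofReal (Real.exp (a * x - a ^ 2 / 2))) :=
    hg.mul (ENNReal.measurable_ofReal.comp
      (Real.measurable_exp.comp ((measurable_const_mul a).sub measurable_const)))
  have hga : Measurable (fun x => g (x + a)) := hg.comp (measurable_add_const a)
  rw [gaussianReal_of_var_ne_zero 0 one_ne_zero,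
      lintegral_withDensity_eq_lintegral_mul _ hpdf hga,
      lintegral_withDensity_eq_lintegral_mul _ hpdf hg2]
  have key : ∀ x : ℝ, gaussianPDF 0 1 (x - a) =
      gaussianPDF 0 1 x * ENNReal.ofReal (Real.exp (a * x - a ^ 2 / 2)) := by
    intro x
    rw [gaussianPDF, gaussianPDF, ← ENNReal.ofReal_mul (gaussianPDFReal_nonneg _ _ _)]
    congr 1
    simp only [gaussianPDFReal, mul_assoc, ← Real.exp_add]
    congr 1
    push_cast
    ring
  calc ∫⁻ x, (gaussianPDF 0 1 * fun x => g (x + a)) x ∂volume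
      = ∫⁻ x, (fun y => gaussianPDF 0 1 (y - a) * g y) (x + a) ∂volume := by
        congr 1; ext x; simp
    _ = ∫⁻ y, gaussianPDF 0 1 (y - a) * g y ∂volume := lintegral_add_right_eq_self (μ := volume)
          (fun y => gaussianPDF 0 1 (y - a) * g y) a
    _ = ∫⁻ x, (gaussianPDF 0 1 * fun x => g x * ENNReal.ofReal (Real.exp (a * x - a ^ 2 / 2))) x
          ∂volume := by
        congr 1; ext x; rw [key x]; simp [mul_comm, mul_assoc, mul_left_comm]

lemma meas_Y {Ω : Type} (ε : ℕ → Ω → ℝ) (j : ℕ)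
    (M : MeasurableSpace Ω)
    (h : ∀ i, i ≠ j → MeasurableSpace.comap (ε i) inferInstance ≤ M) :
    @Measurable Ω (ℕ → ℝ) M _ (fun ω i => if i = j then 0 else ε i ω) := by
  letI := M
  refine measurable_pi_lambda _ fun i => ?_
  by_cases hij : i = j
  · simp only [hij, if_pos rfl]; exact measurable_const
  · simp only [if_neg hij]
    rw [measurable_iff_comap_le]
    exact h i hij

lemma indep_coord {Ω : Type} [MeasurableSpace Ω] {P : Measure Ω}
    {ε : ℕ → Ω → ℝ} (hmeas : ∀ i, Measurable (ε i))
    (hind : iIndepFun ε P) (j : ℕ) :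
    IndepFun (fun ω => fun i => if i = j then 0 else ε i ω) (ε j) P := by
  classical
  have h := indep_biSup_compl (fun i => (hmeas i).comap_le) hind.iIndep ({j}ᶜ : Set ℕ)
  rw [compl_compl] at h
  have h1 : MeasurableSpace.comap (fun ω => fun i => if i = j then 0 else ε i ω)
      (MeasurableSpace.pi) ≤ ⨆ i ∈ ({j}ᶜ : Set ℕ), MeasurableSpace.comap (ε i) inferInstance := by
    rw [← measurable_iff_comap_le]
    refine meas_Y ε j _ fun i hij => ?_
    exact le_biSup (fun i => MeasurableSpace.comap (ε i) inferInstance)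
      (by simp [hij] : i ∈ ({j}ᶜ : Set ℕ))
  have h2 : MeasurableSpace.comap (ε j) inferInstance
      ≤ ⨆ i ∈ ({j} : Set ℕ), MeasurableSpace.comap (ε i) inferInstance :=
    le_biSup (fun i => MeasurableSpace.comap (ε i) inferInstance) (by simp : j ∈ ({j} : Set ℕ))
  exact indep_of_indep_of_le_right (indep_of_indep_of_le_left h h1) h2

lemma tilt_one {Ω : Type} [MeasurableSpace Ω] (P : Measure Ω) [IsProbabilityMeasure P]
    (ε : ℕ → Ω → ℝ) (hmeas : ∀ i, Measurable (ε i))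
    (hind : iIndepFun ε P)
    (hlaw : ∀ i, P.map (ε i) = gaussianReal 0 1)
    (j : ℕ) (a : ℝ) (F : (ℕ → ℝ) → ℝ≥0∞) (hF : Measurable F) :
    ∫⁻ ω, F (fun i => ε i ω + if i = j then a else 0) ∂P =
      ∫⁻ ω, F (fun i => ε i ω) * ENNReal.ofReal (Real.exp (a * ε j ω - a ^ 2 / 2)) ∂P := by
  classical
  set Y : Ω → (ℕ → ℝ) := fun ω i => if i = j then 0 else ε i ω with hYdef
  have hYm : Measurable Y := by
    apply measurable_pi_lambda
    intro i
    by_cases hij : i = j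
    · simp only [hYdef, hij, if_pos rfl]; exact measurable_const
    · simp only [hYdef, if_neg hij]; exact hmeas i
  have hindep : IndepFun Y (ε j) P := indep_coord hmeas hind j
  have hpair : Measurable (fun ω => (Y ω, ε j ω)) := hYm.prodMk (hmeas j)
  have hmap : P.map (fun ω => (Y ω, ε j ω)) = (P.map Y).prod (gaussianReal 0 1) := by
    rw [← hlaw j]
    exact (indepFun_iff_map_prod_eq_prod_map_map hYm.aemeasurable
      (hmeas j).aemeasurable).mp hindep
  have hupd : Measurable (fun p : (ℕ → ℝ) × ℝ => Function.update p.1 j p.2) := by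
    apply measurable_pi_lambda
    intro i
    have : (fun p : (ℕ → ℝ) × ℝ => Function.update p.1 j p.2 i)
        = fun p : (ℕ → ℝ) × ℝ => if i = j then p.2 else p.1 i := by
      ext p; rw [Function.update_apply]
    rw [this]
    by_cases hij : i = j
    · simp only [if_pos hij]; exact measurable_snd
    · simp only [if_neg hij]; exact (measurable_pi_apply i).comp measurable_fst
  have hH : Measurable (fun p : (ℕ → ℝ) × ℝ => F (Function.update p.1 j (p.2 + a))) := by
    apply hF.comp
    exact hupd.comp (measurable_fst.prodMk (measurable_snd.add_const a))
  have hH2 : Measurable (fun p : (ℕ → ℝ) × ℝ =>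
      F (Function.update p.1 j p.2) * ENNReal.ofReal (Real.exp (a * p.2 - a ^ 2 / 2))) := by
    refine (hF.comp hupd).mul ?_
    exact ENNReal.measurable_ofReal.comp
      (Real.measurable_exp.comp ((measurable_snd.const_mul a).sub measurable_const))
  have eq1 : ∀ ω, (fun i => ε i ω + if i = j then a else 0)
      = Function.update (Y ω) j (ε j ω + a) := by
    intro ω; funext i
    rw [Function.update_apply]
    by_cases hij : i = j
    · subst hij; simp [hYdef]
    · simp [hYdef, hij]
  have eq2 : ∀ ω, (fun i => ε i ω) = Function.update (Y ω) j (ε j ω) := by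
    intro ω; funext i
    rw [Function.update_apply]
    by_cases hij : i = j
    · subst hij; simp [hYdef]
    · simp [hYdef, hij]
  calc ∫⁻ ω, F (fun i => ε i ω + if i = j then a else 0) ∂P
      = ∫⁻ ω, (fun p : (ℕ → ℝ) × ℝ => F (Function.update p.1 j (p.2 + a)))
          ((fun ω => (Y ω, ε j ω)) ω) ∂P := by
        congr 1; funext ω; rw [eq1 ω]
    _ = ∫⁻ p, F (Function.update p.1 j (p.2 + a)) ∂((P.map Y).prod (gaussianReal 0 1)) := by
        rw [← hmap, lintegral_map hH hpair]
    _ = ∫⁻ y, ∫⁻ t, F (Function.update y j (t + a)) ∂(gaussianReal 0 1) ∂(P.map Y) :=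
        lintegral_prod _ hH.aemeasurable
    _ = ∫⁻ y, ∫⁻ t, F (Function.update y j t) * ENNReal.ofReal (Real.exp (a * t - a ^ 2 / 2))
          ∂(gaussianReal 0 1) ∂(P.map Y) := by
        refine lintegral_congr fun y => ?_
        exact gauss_tilt a (fun t => F (Function.update y j t)) (hF.comp (measurable_update _))
    _ = ∫⁻ p, F (Function.update p.1 j p.2) * ENNReal.ofReal (Real.exp (a * p.2 - a ^ 2 / 2))
          ∂((P.map Y).prod (gaussianReal 0 1)) := (lintegral_prod _ hH2.aemeasurable).symm
    _ = ∫⁻ ω, (fun p : (ℕ → ℝ) × ℝ =>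
          F (Function.update p.1 j p.2) * ENNReal.ofReal (Real.exp (a * p.2 - a ^ 2 / 2)))
          ((fun ω => (Y ω, ε j ω)) ω) ∂P := by
        rw [← hmap, lintegral_map hH2 hpair]
    _ = ∫⁻ ω, F (fun i => ε i ω) * ENNReal.ofReal (Real.exp (a * ε j ω - a ^ 2 / 2)) ∂P := by
        refine lintegral_congr fun ω => ?_
        simp only
        rw [← eq2 ω]

lemma tilt_multi {Ω : Type} [MeasurableSpace Ω] (P : Measure Ω) [IsProbabilityMeasure P]
    (ε : ℕ → Ω → ℝ) (hmeas : ∀ i, Measurable (ε i))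
    (hind : iIndepFun ε P)
    (hlaw : ∀ i, P.map (ε i) = gaussianReal 0 1)
    (S : Finset ℕ) :
    ∀ (w : ℕ → ℝ), (∀ i ∉ S, w i = 0) →
    ∀ (F : (ℕ → ℝ) → ℝ≥0∞), Measurable F →
    ∫⁻ ω, F (fun i => ε i ω + w i) ∂P =
      ∫⁻ ω, F (fun i => ε i ω) *
        ENNReal.ofReal (Real.exp (∑ i ∈ S, (w i * ε i ω - w i ^ 2 / 2))) ∂P := by
  classical
  induction S using Finset.induction_on with
  | empty =>
    intro w hw F hF
    have h0 : ∀ ω : Ω, (fun i => ε i ω + w i) = fun i => ε i ω := fun ω =>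
      funext fun i => by rw [hw i (Finset.notMem_empty i), add_zero]
    simp only [Finset.sum_empty, Real.exp_zero, ENNReal.ofReal_one, mul_one]
    exact lintegral_congr fun ω => by rw [h0 ω]
  | @insert j S hj IH =>
    intro w hw F hF
    set a := w j with ha
    set w' := Function.update w j 0 with hw'def
    have hw'0 : ∀ i ∉ S, w' i = 0 := by
      intro i hi
      by_cases hij : i = j
      · subst hij; simp [hw'def]
      · rw [hw'def, Function.update_of_ne hij]
        exact hw i (by simp [hij, hi])
    have hw'j : w' j = 0 := by simp [hw'def]
    have hw'S : ∀ i ∈ S, w' i = w i := by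
      intro i hi
      have hij : i ≠ j := fun h => hj (h ▸ hi)
      rw [hw'def, Function.update_of_ne hij]
    -- F₁ e = F (fun i => e i + w' i)
    set F₁ : (ℕ → ℝ) → ℝ≥0∞ := fun e => F (fun i => e i + w' i) with hF₁def
    have hF₁ : Measurable F₁ :=
      hF.comp (measurable_pi_lambda _ fun i => by fun_prop)
    set F₂ : (ℕ → ℝ) → ℝ≥0∞ :=
      fun e => F e * ENNReal.ofReal (Real.exp (a * e j - a ^ 2 / 2)) with hF₂def
    have hF₂ : Measurable F₂ := by
      refine hF.mul ?_
      exact ENNReal.measurable_ofReal.comp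
        (Real.measurable_exp.comp (by fun_prop))
    have step1 : ∀ ω : Ω, (fun i => ε i ω + w i)
        = fun i => (ε i ω + if i = j then a else 0) + w' i := by
      intro ω; funext i
      by_cases hij : i = j
      · subst hij; rw [if_pos rfl, hw'j, ha]; ring
      · rw [if_neg hij, hw'def, Function.update_of_ne hij]; ring
    calc ∫⁻ ω, F (fun i => ε i ω + w i) ∂P
        = ∫⁻ ω, F₁ (fun i => ε i ω + if i = j then a else 0) ∂P := by
          refine lintegral_congr fun ω => ?_
          rw [hF₁def]; simp only; rw [step1 ω]
      _ = ∫⁻ ω, F₁ (fun i => ε i ω) * ENNReal.ofReal (Real.exp (a * ε j ω - a ^ 2 / 2)) ∂P :=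
          tilt_one P ε hmeas hind hlaw j a F₁ hF₁
      _ = ∫⁻ ω, F₂ (fun i => ε i ω + w' i) ∂P := by
          refine lintegral_congr fun ω => ?_
          rw [hF₂def, hF₁def]; simp only [hw'j, add_zero]
      _ = ∫⁻ ω, F₂ (fun i => ε i ω) *
            ENNReal.ofReal (Real.exp (∑ i ∈ S, (w' i * ε i ω - w' i ^ 2 / 2))) ∂P :=
          IH w' hw'0 F₂ hF₂
      _ = ∫⁻ ω, F (fun i => ε i ω) *
            ENNReal.ofReal (Real.exp (∑ i ∈ insert j S, (w i * ε i ω - w i ^ 2 / 2))) ∂P := by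
          refine lintegral_congr fun ω => ?_
          rw [hF₂def]; simp only
          rw [Finset.sum_insert hj, mul_assoc, ← ENNReal.ofReal_mul (Real.exp_nonneg _),
            ← Real.exp_add]
          have hsum : ∑ i ∈ S, (w' i * ε i ω - w' i ^ 2 / 2)
              = ∑ i ∈ S, (w i * ε i ω - w i ^ 2 / 2) :=
            Finset.sum_congr rfl fun i hi => by rw [hw'S i hi]
          rw [ha, hsum]

/-- Lemma 1 of the paper: minimax lower bound for the localization of a single
change-point with known levels `μ₁ ≠ μ₂`. -/
theorem single_change_point_localization_lower_bound (μ₁ μ₂ : ℝ) (hμ : μ₁ ≠ μ₂) :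
    ∃ c > (0 : ℝ), ∃ c' > (0 : ℝ),
    ∀ n : ℕ, (4 : ℝ) / (μ₂ - μ₁) ^ 2 < n →
    ∀ x : ℝ, 1/2 ≤ x → x < (n : ℝ)/2 - 1 - 2 / (μ₂ - μ₁) ^ 2 →
    ∀ (Ω : Type) (_ : MeasurableSpace Ω) (P : Measure Ω), IsProbabilityMeasure P →
    ∀ ε : ℕ → Ω → ℝ, IsStdGaussianNoise P ε →
    ∀ τhat : (ℕ → ℝ) → ℕ, Measurable τhat → (∀ y, τhat y ∈ Finset.Icc 2 n) →
      ENNReal.ofReal (c * Real.exp (-(c' * x * (μ₂ - μ₁) ^ 2))) ≤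
        ⨆ τ ∈ Finset.Icc 2 n, P {ω |
          2 / (μ₂ - μ₁) ^ 2 + x ≤ |((τhat (fun i => oneCP τ μ₁ μ₂ i + ε i ω) : ℝ)) - (τ : ℝ)|} := by
  classical
  have hΔ : μ₂ - μ₁ ≠ 0 := sub_ne_zero.2 (Ne.symm hμ)
  set d := (μ₂ - μ₁) ^ 2 with hddef
  have hd : 0 < d := lt_of_le_of_ne (sq_nonneg _) (Ne.symm (pow_ne_zero 2 hΔ))
  refine ⟨Real.exp (-(4 + d)) / 4, by positivity, 2, by norm_num, ?_⟩
  intro n hn x hx1 hx2 Ω mΩ P hP ε hε τhat hτm hτrange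
  obtain ⟨hεm, hεind, hεlaw⟩ := hε
  haveI := hP
  set r : ℝ := 2 / d + x with hrdef
  have h2d : 0 < 2 / d := by positivity
  have hxpos : 0 < x := lt_of_lt_of_le (by norm_num) hx1
  have hrpos : 0 < r := by rw [hrdef]; linarith
  set m : ℕ := ⌈2 * r⌉₊ with hmdef
  have hm1 : 2 * r ≤ (m : ℝ) := Nat.le_ceil _
  have hm2 : (m : ℝ) < 2 * r + 1 := Nat.ceil_lt_add_one (by positivity)
  have h2r : 2 * r < (n : ℝ) - 2 := by
    rw [hrdef]
    have h4d : (4 : ℝ) / d = 2 * (2 / d) := by ring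
    have := hx2
    linarith
  have hτ2n : 2 + m ≤ n := by
    have h1 : (m : ℝ) + 2 < (n : ℝ) + 1 := by linarith
    have h2 : m + 2 < n + 1 := by exact_mod_cast h1
    omega
  have hn2 : 2 ≤ n := by omega
  -- the weight vector
  set S : Finset ℕ := Finset.Ico 2 (2 + m) with hSdef
  set w : ℕ → ℝ := fun i => if i ∈ S then μ₁ - μ₂ else 0 with hwdef
  have hwsupp : ∀ i ∉ S, w i = 0 := fun i hi => by rw [hwdef]; simp [hi]
  have hsig : ∀ i, oneCP (2 + m) μ₁ μ₂ i = oneCP 2 μ₁ μ₂ i + w i := by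
    intro i
    rw [oneCP, oneCP, hwdef]
    by_cases h1 : i < 2
    · have h2 : i < 2 + m := by omega
      have hiS : i ∉ S := by rw [hSdef]; simp [Finset.mem_Ico]; omega
      simp [h1, h2, hiS]
    · by_cases h2 : i < 2 + m
      · have hiS : i ∈ S := by rw [hSdef]; exact Finset.mem_Ico.mpr ⟨by omega, h2⟩
        simp only [if_pos h2, if_neg h1, if_pos hiS]
        ring
      · have hiS : i ∉ S := by rw [hSdef]; simp [Finset.mem_Ico]; omega
        simp [h1, h2, hiS]
  have hsumsq : ∑ i ∈ S, w i ^ 2 = m * d := by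
    have hterm : ∀ i ∈ S, w i ^ 2 = d := by
      intro i hi
      rw [hwdef]; simp only [if_pos hi]; rw [hddef]; ring
    rw [Finset.sum_congr rfl hterm, Finset.sum_const, hSdef, Nat.card_Ico]
    simp [nsmul_eq_mul]
  -- densities
  set ρ : Ω → ℝ≥0∞ :=
    fun ω => ENNReal.ofReal (Real.exp (∑ i ∈ S, (w i * ε i ω - w i ^ 2 / 2))) with hρdef
  have hρm : Measurable ρ := ENNReal.measurable_ofReal.comp (Real.measurable_exp.comp
    (Finset.measurable_sum S fun i _ => ((hεm i).const_mul (w i)).sub measurable_const))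
  -- measurable ingredients
  have hy : ∀ τ : ℕ, Measurable (fun ω => (fun i => oneCP τ μ₁ μ₂ i + ε i ω)) := fun τ =>
    measurable_pi_lambda _ fun i => (hεm i).const_add _
  have hA : ∀ τ : ℕ, MeasurableSet {v : ℕ → ℝ | 2 / d + x ≤ |((τhat v : ℝ)) - (τ : ℝ)|} := by
    intro τ
    have h := hτm (MeasurableSpace.measurableSet_top
      (s := {k : ℕ | 2 / d + x ≤ |((k : ℝ)) - (τ : ℝ)|}))
    exact h
  set A2 : Set (ℕ → ℝ) := {v | 2 / d + x ≤ |((τhat v : ℝ)) - ((2 + m : ℕ) : ℝ)|} with hA2def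
  have hA2 : MeasurableSet A2 := hA (2 + m)
  set F : (ℕ → ℝ) → ℝ≥0∞ :=
    fun e => A2.indicator (fun _ => 1) (fun i => oneCP 2 μ₁ μ₂ i + e i) with hFdef
  have hshift : Measurable (fun e : ℕ → ℝ => (fun i => oneCP 2 μ₁ μ₂ i + e i)) :=
    measurable_pi_lambda _ fun i => (measurable_pi_apply i).const_add _
  have hFm : Measurable F := ((measurable_one.indicator hA2).comp hshift)
  -- event sets
  set D : Set Ω := (fun ω => (fun i => oneCP 2 μ₁ μ₂ i + ε i ω)) ⁻¹' A2 with hDdef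
  have hD : MeasurableSet D := hA2.preimage (hy 2)
  set E2 : Set Ω := (fun ω => (fun i => oneCP (2 + m) μ₁ μ₂ i + ε i ω)) ⁻¹' A2 with hE2def
  have hE2 : MeasurableSet E2 := hA2.preimage (hy (2 + m))
  -- step (1)+(2)+(3): P E2 = ∫ 1_D ρ
  have key1 : P E2 = ∫⁻ ω, D.indicator (fun _ => 1) ω * ρ ω ∂P := by
    have h1 : P E2 = ∫⁻ ω, F (fun i => ε i ω + w i) ∂P := by
      rw [← lintegral_indicator_one hE2]
      refine (lintegral_congr fun ω => ?_).symm
      rw [hFdef]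
      simp only
      have harg : (fun i => oneCP 2 μ₁ μ₂ i + (ε i ω + w i))
          = fun i => oneCP (2 + m) μ₁ μ₂ i + ε i ω := by
        funext i; rw [hsig i]; ring
      rw [harg]
      by_cases hω : ω ∈ E2
      · rw [Set.indicator_of_mem
            (show (fun i => oneCP (2 + m) μ₁ μ₂ i + ε i ω) ∈ A2 from hω),
          Set.indicator_of_mem hω]
        rfl
      · rw [Set.indicator_of_notMem
            (show (fun i => oneCP (2 + m) μ₁ μ₂ i + ε i ω) ∉ A2 from hω),
          Set.indicator_of_notMem hω]
    rw [h1, tilt_multi P ε hεm hεind hεlaw S w hwsupp F hFm]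
    refine lintegral_congr fun ω => ?_
    rw [hρdef, hFdef]
    simp only
    by_cases hω : ω ∈ D
    · rw [Set.indicator_of_mem
          (show (fun i => oneCP 2 μ₁ μ₂ i + ε i ω) ∈ A2 from hω),
        Set.indicator_of_mem hω]
    · rw [Set.indicator_of_notMem
          (show (fun i => oneCP 2 μ₁ μ₂ i + ε i ω) ∉ A2 from hω),
        Set.indicator_of_notMem hω]
  -- step (4): ∫ ρ = 1
  have key2 : ∫⁻ ω, ρ ω ∂P = 1 := by
    have := tilt_multi P ε hεm hεind hεlaw S w hwsupp (fun _ => 1) measurable_const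
    simp only [lintegral_const, measure_univ, mul_one, one_mul] at this
    rw [hρdef]
    exact this.symm
  -- step (5): ∫ ρ^2 = exp (m d)
  have key3 : ∫⁻ ω, ρ ω ^ (2:ℝ) ∂P = ENNReal.ofReal (Real.exp (m * d)) := by
    set w2 : ℕ → ℝ := fun i => 2 * w i with hw2def
    have hw2supp : ∀ i ∉ S, w2 i = 0 := fun i hi => by
      rw [hw2def]; simp [hwsupp i hi]
    have hpt : ∀ ω, ρ ω ^ (2:ℝ) =
        ENNReal.ofReal (Real.exp (∑ i ∈ S, (w2 i * ε i ω - w2 i ^ 2 / 2)))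
          * ENNReal.ofReal (Real.exp (m * d)) := by
      intro ω
      rw [hρdef]
      simp only
      rw [ENNReal.ofReal_rpow_of_pos (Real.exp_pos _),
        Real.rpow_def_of_pos (Real.exp_pos _), Real.log_exp,
        ← ENNReal.ofReal_mul (Real.exp_nonneg _), ← Real.exp_add]
      congr 2
      rw [← hsumsq, ← Finset.sum_add_distrib, Finset.sum_mul]
      refine Finset.sum_congr rfl fun i hi => ?_
      rw [hw2def]; ring
    have hw2m : Measurable (fun ωa : Ω =>
        ENNReal.ofReal (Real.exp (∑ i ∈ S, (w2 i * ε i ωa - w2 i ^ 2 / 2)))) := by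
      exact ENNReal.measurable_ofReal.comp (Real.measurable_exp.comp
        (Finset.measurable_sum S fun i _ => ((hεm i).const_mul (w2 i)).sub measurable_const))
    rw [lintegral_congr hpt, lintegral_mul_const _ hw2m]
    have := tilt_multi P ε hεm hεind hεlaw S w2 hw2supp (fun _ => 1) measurable_const
    simp only [lintegral_const, measure_univ, mul_one, one_mul] at this
    rw [← this, one_mul]
  -- D^c is contained in the event for τ = 2
  set E1 : Set Ω := {ω | 2 / d + x ≤
    |((τhat (fun i => oneCP 2 μ₁ μ₂ i + ε i ω) : ℝ)) - ((2 : ℕ) : ℝ)|} with hE1def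
  have hDc : Dᶜ ⊆ E1 := by
    intro ω hω
    have hω' : ¬ (2 / d + x ≤
        |((τhat (fun i => oneCP 2 μ₁ μ₂ i + ε i ω) : ℝ)) - ((2 + m : ℕ) : ℝ)|) := hω
    rw [not_le] at hω'
    set t : ℝ := ((τhat (fun i => oneCP 2 μ₁ μ₂ i + ε i ω) : ℝ)) with htdef
    have hcast : ((2 + m : ℕ) : ℝ) = 2 + (m : ℝ) := by push_cast; ring
    rw [hcast] at hω'
    have htri : |((2:ℝ)) - (2 + (m:ℝ))| ≤ |(2:ℝ) - t| + |t - (2 + (m:ℝ))| := abs_sub_le 2 t _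
    have h5 : |((2:ℝ)) - (2 + (m:ℝ))| = (m:ℝ) := by
      rw [show (2:ℝ) - (2 + (m:ℝ)) = -(m:ℝ) by ring, abs_neg,
        abs_of_nonneg (Nat.cast_nonneg m)]
    have h6 : |(2:ℝ) - t| = |t - (2:ℝ)| := abs_sub_comm _ _
    have hge : 2 * (2 / d + x) ≤ (m:ℝ) := by rw [← hrdef]; exact hm1
    show 2 / d + x ≤ |t - ((2:ℕ):ℝ)|
    have hcast2 : (((2:ℕ)) : ℝ) = (2:ℝ) := by norm_num
    rw [hcast2]
    linarith
  -- case distinction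
  by_cases hcase : ENNReal.ofReal (Real.exp (-((m:ℝ) * d)) / 4) ≤ P E1
  · -- use the hypothesis τ = 2
    refine le_trans ?_ (le_biSup
      (f := fun τ => P {ω | 2 / d + x ≤
        |((τhat (fun i => oneCP τ μ₁ μ₂ i + ε i ω) : ℝ)) - (τ : ℝ)|})
      (Finset.mem_Icc.mpr ⟨le_refl 2, hn2⟩))
    refine le_trans ?_ hcase
    apply ENNReal.ofReal_le_ofReal
    have hmd : (m:ℝ) * d ≤ 4 + d + 2 * x * d := by
      have h := mul_le_mul_of_nonneg_right hm2.le hd.le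
      have hrd : r * d = 2 + x * d := by
        rw [hrdef, add_mul, div_mul_cancel₀ _ (ne_of_gt hd)]
      nlinarith
    have hcomb : Real.exp (-(4 + d)) / 4 * Real.exp (-(2 * x * d))
        = Real.exp (-(4 + d) + -(2 * x * d)) / 4 := by rw [Real.exp_add]; ring
    rw [hcomb]
    gcongr
    linarith
  · -- use the hypothesis τ = 2 + m
    push_neg at hcase
    set b : ℝ≥0∞ := ∫⁻ ω, (Dᶜ).indicator (fun _ => (1:ℝ≥0∞)) ω * ρ ω ∂P with hbdef
    have hsum1 : P E2 + b = 1 := by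
      have hpt : ∀ ω, D.indicator (fun _ => (1:ℝ≥0∞)) ω * ρ ω
          + (Dᶜ).indicator (fun _ => (1:ℝ≥0∞)) ω * ρ ω = ρ ω := by
        intro ω
        by_cases hω : ω ∈ D
        · rw [Set.indicator_of_mem hω,
            Set.indicator_of_notMem (show ω ∉ Dᶜ by simp [hω])]
          simp
        · rw [Set.indicator_of_notMem hω,
            Set.indicator_of_mem (show ω ∈ Dᶜ by simp [hω])]
          simp
      rw [key1, hbdef,
        ← lintegral_add_left (f := fun ω => D.indicator (fun _ => (1:ℝ≥0∞)) ω * ρ ω) ((measurable_const.indicator hD).mul hρm), lintegral_congr hpt,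
        key2]
    have hfm : Measurable fun ω => (Dᶜ).indicator (fun _ => (1:ℝ≥0∞)) ω :=
      measurable_const.indicator hD.compl
    have hpq : Real.HolderConjugate 2 2 := Real.holderConjugate_iff.mpr ⟨one_lt_two, by norm_num⟩
    have hhold := ENNReal.lintegral_mul_le_Lp_mul_Lq P hpq hfm.aemeasurable hρm.aemeasurable
    simp only [Pi.mul_apply] at hhold
    have hind2 : ∫⁻ ω, ((Dᶜ).indicator (fun _ => (1:ℝ≥0∞)) ω) ^ (2:ℝ) ∂P = P Dᶜ := by
      have hpt2 : ∀ ω, ((Dᶜ).indicator (fun _ => (1:ℝ≥0∞)) ω) ^ (2:ℝ)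
          = (Dᶜ).indicator (1 : Ω → ℝ≥0∞) ω := by
        intro ω
        by_cases hω : ω ∈ Dᶜ
        · rw [Set.indicator_of_mem hω, Set.indicator_of_mem hω]
          exact ENNReal.one_rpow _
        · rw [Set.indicator_of_notMem hω, Set.indicator_of_notMem hω]
          exact ENNReal.zero_rpow_of_pos (by norm_num)
      rw [lintegral_congr hpt2, lintegral_indicator_one hD.compl]
    have hb2 : b ≤ (P Dᶜ) ^ ((1:ℝ)/2) * (ENNReal.ofReal (Real.exp ((m:ℝ) * d))) ^ ((1:ℝ)/2) := by
      rw [hbdef]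
      calc ∫⁻ ω, (Dᶜ).indicator (fun _ => (1:ℝ≥0∞)) ω * ρ ω ∂P
          ≤ (∫⁻ ω, ((Dᶜ).indicator (fun _ => (1:ℝ≥0∞)) ω) ^ (2:ℝ) ∂P) ^ ((1:ℝ)/2)
            * (∫⁻ ω, ρ ω ^ (2:ℝ) ∂P) ^ ((1:ℝ)/2) := hhold
        _ = (P Dᶜ) ^ ((1:ℝ)/2) * (ENNReal.ofReal (Real.exp ((m:ℝ) * d))) ^ ((1:ℝ)/2) := by
            rw [hind2, key3]
    have hPD : P Dᶜ ≤ ENNReal.ofReal (Real.exp (-((m:ℝ) * d)) / 4) :=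
      le_trans (measure_mono hDc) hcase.le
    have hhalf : ((1:ℝ)/4) ^ ((1:ℝ)/2) = (1/2 : ℝ) := by
      rw [show (1/4:ℝ) = (1/2)^(2:ℕ) by norm_num, ← Real.rpow_natCast ((1:ℝ)/2) 2,
        ← Real.rpow_mul (by norm_num : (0:ℝ) ≤ 1/2)]
      norm_num
    have hb3 : b ≤ ENNReal.ofReal (1/2 : ℝ) := by
      refine le_trans hb2 ?_
      calc (P Dᶜ) ^ ((1:ℝ)/2) * (ENNReal.ofReal (Real.exp ((m:ℝ) * d))) ^ ((1:ℝ)/2)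
          ≤ (ENNReal.ofReal (Real.exp (-((m:ℝ) * d)) / 4)) ^ ((1:ℝ)/2)
            * (ENNReal.ofReal (Real.exp ((m:ℝ) * d))) ^ ((1:ℝ)/2) := by
            exact mul_le_mul_left (ENNReal.rpow_le_rpow hPD (by norm_num)) _
        _ = ENNReal.ofReal ((Real.exp (-((m:ℝ) * d)) / 4) ^ ((1:ℝ)/2)
            * (Real.exp ((m:ℝ) * d)) ^ ((1:ℝ)/2)) := by
            rw [ENNReal.ofReal_rpow_of_pos (by positivity),
              ENNReal.ofReal_rpow_of_pos (Real.exp_pos _),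
              ← ENNReal.ofReal_mul (Real.rpow_nonneg (by positivity) _)]
        _ = ENNReal.ofReal (1/2 : ℝ) := by
            rw [← Real.mul_rpow (by positivity) (by positivity)]
            have hre : (Real.exp (-((m:ℝ) * d)) / 4) * Real.exp ((m:ℝ) * d) = 1/4 := by
              rw [div_mul_eq_mul_div, ← Real.exp_add]
              norm_num
            rw [hre, hhalf]
    have h12 : ENNReal.ofReal (1/2 : ℝ) ≤ P E2 := by
      have h1 : (1:ℝ≥0∞) ≤ P E2 + ENNReal.ofReal (1/2 : ℝ) := by
        rw [← hsum1]; exact add_le_add_right hb3 _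
      have h2 : (1:ℝ≥0∞) - ENNReal.ofReal (1/2 : ℝ) ≤ P E2 := tsub_le_iff_right.mpr h1
      refine le_trans (le_of_eq ?_) h2
      rw [← ENNReal.ofReal_one, ← ENNReal.ofReal_sub _ (by norm_num : (0:ℝ) ≤ 1/2)]
      norm_num
    refine le_trans ?_ (le_biSup
      (f := fun τ => P {ω | 2 / d + x ≤
        |((τhat (fun i => oneCP τ μ₁ μ₂ i + ε i ω) : ℝ)) - (τ : ℝ)|})
      (Finset.mem_Icc.mpr ⟨by omega, hτ2n⟩))
    show ENNReal.ofReal (Real.exp (-(4 + d)) / 4 * Real.exp (-(2 * x * d)))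
      ≤ P {ω | 2 / d + x ≤
        |((τhat (fun i => oneCP (2 + m) μ₁ μ₂ i + ε i ω) : ℝ)) - (((2 + m : ℕ)) : ℝ)|}
    have hPeq : P {ω | 2 / d + x ≤
        |((τhat (fun i => oneCP (2 + m) μ₁ μ₂ i + ε i ω) : ℝ)) - (((2 + m : ℕ)) : ℝ)|}
        = P E2 := rfl
    rw [hPeq]
    refine le_trans ?_ h12
    apply ENNReal.ofReal_le_ofReal
    have h1 : Real.exp (-(4 + d)) ≤ 1 := Real.exp_le_one_iff.mpr (by linarith)
    have h2 : Real.exp (-(2 * x * d)) ≤ 1 := Real.exp_le_one_iff.mpr (by nlinarith)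
    have h3 : 0 < Real.exp (-(2 * x * d)) := Real.exp_pos _
    have h4 : 0 < Real.exp (-(4 + d)) := Real.exp_pos _
    nlinarith
end

section
/- For any change-point vector τ = (τ_1 < … < τ_m) in {2,…,n} (with conventions τ_0 = 1 and τ_{m+1} = n+1), any l ∈ {1,…,m}, and any Y ∈ ℝ^n, one has Cr_0(Y,τ) − Cr_0(Y,τ^{(−l)}) = −C²(Y, (τ_{l−1}, τ_l, τ_{l+1})) + L [ 2 log( n(τ_{l+1} − τ_{l−1}) / ((τ_{l+1} − τ_l)(τ_l − τ_{l−1})) ) + q ], where τ^{(−l)} is the vector τ with the coordinate τ_l removed. -/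
open MeasureTheory ProbabilityTheory Finset Real

/-- independent centered 1-sub-Gaussian noise hypotheses. -/
def IsStdSubGaussian {Ω : Type} [MeasurableSpace Ω] (P : Measure Ω) (ε : ℕ → Ω → ℝ) : Prop :=
  (∀ i, Measurable (ε i)) ∧
  iIndepFun ε P ∧
  (∀ i, ∫ ω, ε i ω ∂P = 0) ∧
  (∀ i (t : ℝ), Integrable (fun ω => Real.exp (t * ε i ω)) P) ∧
  (∀ i (t : ℝ), ∫ ω, Real.exp (t * ε i ω) ∂P ≤ Real.exp (t ^ 2 / 2))

/-- Mean of `Y` over the integer interval `[a, b)`. -/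
noncomputable def segMean (Y : ℕ → ℝ) (a b : ℕ) : ℝ :=
  (∑ i ∈ Finset.Ico a b, Y i) / ((b : ℝ) - (a : ℝ))

/-- CUSUM statistic of `Y` at the triad `(t₁, t₂, t₃)`. -/
noncomputable def cusum (Y : ℕ → ℝ) (t₁ t₂ t₃ : ℕ) : ℝ :=
  (segMean Y t₂ t₃ - segMean Y t₁ t₂) *
    Real.sqrt ((((t₂ : ℝ) - t₁) * ((t₃ : ℝ) - t₂)) / ((t₃ : ℝ) - t₁))

/-- Largest boundary point (element of `S ∪ {1}`) which is `≤ i`. -/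
def prevPt (S : Finset ℕ) (i : ℕ) : ℕ :=
  if h : ((insert 1 S).filter (fun s => s ≤ i)).Nonempty
  then ((insert 1 S).filter (fun s => s ≤ i)).max' h else 1

/-- Smallest boundary point (element of `S ∪ {n+1}`) which is `> i`. -/
def nextPt (n : ℕ) (S : Finset ℕ) (i : ℕ) : ℕ :=
  if h : ((insert (n + 1) S).filter (fun s => i < s)).Nonempty
  then ((insert (n + 1) S).filter (fun s => i < s)).min' h else n + 1

/-- Orthogonal projection of `Y` onto vectors that are constant on each segment determined by
the change-point set `S ⊆ {2,…,n}` (the value at `i` is the mean of `Y` on the segment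
containing `i`). -/
noncomputable def projCP (n : ℕ) (S : Finset ℕ) (Y : ℕ → ℝ) (i : ℕ) : ℝ :=
  segMean Y (prevPt S i) (nextPt n S i)

/-- The multiscale penalty `pen₀(τ, q) = q|τ| + 2 Σ log(n / (τ_i - τ_{i-1}))`, where the sum runs
over the left endpoints of the segments determined by the change-point set `S`. -/
noncomputable def pen0 (n : ℕ) (q : ℝ) (S : Finset ℕ) : ℝ :=
  q * S.card + 2 * ∑ s ∈ insert 1 S, Real.log ((n : ℝ) / ((nextPt n S s : ℝ) - (s : ℝ)))

/-- The multiscale penalized least-squares criterion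
`Cr₀(Y, τ) = ‖Y - Π_τ Y‖² + L pen₀(τ, q)`. -/
noncomputable def Cr0 (n : ℕ) (L q : ℝ) (Y : ℕ → ℝ) (S : Finset ℕ) : ℝ :=
  (∑ i ∈ Finset.Icc 1 n, (Y i - projCP n S Y i) ^ 2) + L * pen0 n q S

/- ========================= auxiliary lemmas ========================= -/

lemma prevPt_eq_of (S : Finset ℕ) (i p : ℕ) (hp : p ∈ insert 1 S) (hpi : p ≤ i)
    (hmax : ∀ t ∈ insert 1 S, t ≤ i → t ≤ p) : prevPt S i = p := by
  have hmem : p ∈ (insert 1 S).filter (fun s => s ≤ i) := Finset.mem_filter.2 ⟨hp, hpi⟩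
  have hne : ((insert 1 S).filter (fun s => s ≤ i)).Nonempty := ⟨p, hmem⟩
  rw [prevPt, dif_pos hne]
  apply le_antisymm
  · exact Finset.max'_le _ _ _ (fun y hy => by
      obtain ⟨hy1, hy2⟩ := Finset.mem_filter.1 hy; exact hmax y hy1 hy2)
  · exact Finset.le_max' _ _ hmem

lemma nextPt_eq_of (n : ℕ) (S : Finset ℕ) (i p : ℕ) (hp : p ∈ insert (n + 1) S) (hip : i < p)
    (hmin : ∀ t ∈ insert (n + 1) S, i < t → p ≤ t) : nextPt n S i = p := by
  have hmem : p ∈ (insert (n + 1) S).filter (fun s => i < s) := Finset.mem_filter.2 ⟨hp, hip⟩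
  have hne : ((insert (n + 1) S).filter (fun s => i < s)).Nonempty := ⟨p, hmem⟩
  rw [nextPt, dif_pos hne]
  apply le_antisymm
  · exact Finset.min'_le _ _ hmem
  · exact Finset.le_min' _ _ _ (fun y hy => by
      obtain ⟨hy1, hy2⟩ := Finset.mem_filter.1 hy; exact hmin y hy1 hy2)

lemma prevPt_spec (S : Finset ℕ) (i : ℕ) (hi : 1 ≤ i) :
    prevPt S i ∈ insert 1 S ∧ prevPt S i ≤ i ∧
      ∀ t ∈ insert 1 S, t ≤ i → t ≤ prevPt S i := by
  have hmem : (1 : ℕ) ∈ (insert 1 S).filter (fun s => s ≤ i) :=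
    Finset.mem_filter.2 ⟨Finset.mem_insert_self _ _, hi⟩
  have hne : ((insert 1 S).filter (fun s => s ≤ i)).Nonempty := ⟨1, hmem⟩
  rw [prevPt, dif_pos hne]
  have h1 := Finset.max'_mem _ hne
  obtain ⟨h2, h3⟩ := Finset.mem_filter.1 h1
  refine ⟨h2, h3, fun t ht hti => ?_⟩
  have hmem' : t ∈ (insert 1 S).filter (fun s => s ≤ i) := Finset.mem_filter.2 ⟨ht, hti⟩
  exact Finset.le_max' _ _ hmem'

lemma nextPt_spec (n : ℕ) (S : Finset ℕ) (i : ℕ) (hi : i ≤ n) :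
    nextPt n S i ∈ insert (n + 1) S ∧ i < nextPt n S i ∧
      ∀ t ∈ insert (n + 1) S, i < t → nextPt n S i ≤ t := by
  have hmem : (n + 1 : ℕ) ∈ (insert (n + 1) S).filter (fun s => i < s) :=
    Finset.mem_filter.2 ⟨Finset.mem_insert_self _ _, by omega⟩
  have hne : ((insert (n + 1) S).filter (fun s => i < s)).Nonempty := ⟨n + 1, hmem⟩
  rw [nextPt, dif_pos hne]
  have h1 := Finset.min'_mem _ hne
  obtain ⟨h2, h3⟩ := Finset.mem_filter.1 h1
  refine ⟨h2, h3, fun t ht hti => ?_⟩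
  have hmem' : t ∈ (insert (n + 1) S).filter (fun s => i < s) := Finset.mem_filter.2 ⟨ht, hti⟩
  exact Finset.min'_le _ _ hmem'

lemma sum_sq_sub_const (a b : ℕ) (hab : a ≤ b) (Y : ℕ → ℝ) (m : ℝ) :
    ∑ i ∈ Finset.Ico a b, (Y i - m) ^ 2 =
      (∑ i ∈ Finset.Ico a b, (Y i) ^ 2) - 2 * m * (∑ i ∈ Finset.Ico a b, Y i)
        + ((b : ℝ) - (a : ℝ)) * m ^ 2 := by
  have h : ∀ i ∈ Finset.Ico a b, (Y i - m) ^ 2 = (Y i) ^ 2 - 2 * m * Y i + m ^ 2 :=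
    fun i _ => by ring
  rw [Finset.sum_congr rfl h]
  simp only [Finset.sum_add_distrib, Finset.sum_sub_distrib, ← Finset.mul_sum, Finset.sum_const,
    Nat.card_Ico, nsmul_eq_mul, Nat.cast_sub hab]
  try ring

lemma key_alg (a s c : ℕ) (Y : ℕ → ℝ) (has : a < s) (hsc : s < c) :
    ((∑ i ∈ Finset.Ico a s, ((Y i - segMean Y a s) ^ 2 - (Y i - segMean Y a c) ^ 2)) +
      (∑ i ∈ Finset.Ico s c, ((Y i - segMean Y s c) ^ 2 - (Y i - segMean Y a c) ^ 2))) =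
      -(cusum Y a s c) ^ 2 := by
  set n₁ : ℝ := (s : ℝ) - (a : ℝ) with hn₁
  set n₂ : ℝ := (c : ℝ) - (s : ℝ) with hn₂
  have hn₁pos : 0 < n₁ := by rw [hn₁]; rw [sub_pos]; exact_mod_cast has
  have hn₂pos : 0 < n₂ := by rw [hn₂]; rw [sub_pos]; exact_mod_cast hsc
  set S₁ : ℝ := ∑ i ∈ Finset.Ico a s, Y i with hS₁
  set S₂ : ℝ := ∑ i ∈ Finset.Ico s c, Y i with hS₂
  have hsum : ∑ i ∈ Finset.Ico a c, Y i = S₁ + S₂ := by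
    rw [hS₁, hS₂, Finset.sum_Ico_consecutive _ has.le hsc.le]
  have hca : (c : ℝ) - (a : ℝ) = n₁ + n₂ := by rw [hn₁, hn₂]; ring
  have hm1 : segMean Y a s = S₁ / n₁ := rfl
  have hm2 : segMean Y s c = S₂ / n₂ := rfl
  have hm : segMean Y a c = (S₁ + S₂) / (n₁ + n₂) := by
    rw [segMean, hsum, hca]
  rw [Finset.sum_sub_distrib, Finset.sum_sub_distrib,
    sum_sq_sub_const a s has.le Y (segMean Y a s),
    sum_sq_sub_const a s has.le Y (segMean Y a c),
    sum_sq_sub_const s c hsc.le Y (segMean Y s c),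
    sum_sq_sub_const s c hsc.le Y (segMean Y a c)]
  rw [cusum, mul_pow, Real.sq_sqrt (by rw [hca]; positivity)]
  rw [hm1, hm2, hm, ← hS₁, ← hS₂, ← hn₁, ← hn₂, hca]
  have h12 : n₁ + n₂ ≠ 0 := by positivity
  field_simp
  ring

/-- Lemma 1/decomposition of the criterion: removing one change-point `s` from
the change-point vector `S` changes the criterion by `-C²(Y, (τ_{l-1}, s, τ_{l+1}))` plus the
penalty difference. -/
theorem criterion_difference_one_change_point
    (n : ℕ) (L q : ℝ) (Y : ℕ → ℝ) (S : Finset ℕ) (hS : S ⊆ Finset.Icc 2 n)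
    (s : ℕ) (hs : s ∈ S) :
    Cr0 n L q Y S - Cr0 n L q Y (S.erase s) =
      -(cusum Y (prevPt S (s - 1)) s (nextPt n S s)) ^ 2 +
        L * (2 * Real.log ((n : ℝ) * ((nextPt n S s : ℝ) - (prevPt S (s - 1) : ℝ)) /
              (((nextPt n S s : ℝ) - (s : ℝ)) * ((s : ℝ) - (prevPt S (s - 1) : ℝ)))) + q) := by
  obtain ⟨hs2, hsn⟩ := Finset.mem_Icc.1 (hS hs)
  obtain ⟨ha_mem, ha_le', ha_max'⟩ := prevPt_spec S (s - 1) (by omega)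
  obtain ⟨hc_mem, hc_gt, hc_min⟩ := nextPt_spec n S s hsn
  set E := S.erase s with hE
  have hES : E ⊆ S := Finset.erase_subset _ _
  set a := prevPt S (s - 1) with ha
  set c := nextPt n S s with hc
  have ha_le : a ≤ s - 1 := ha_le'
  have ha_lt : a < s := by omega
  have ha_max : ∀ t ∈ insert 1 S, t < s → t ≤ a := fun t ht hts => ha_max' t ht (by omega)
  have hc_le : c ≤ n + 1 := by
    rcases Finset.mem_insert.1 hc_mem with h | h
    · omega
    · exact le_of_lt (by have := Finset.mem_Icc.1 (hS h); omega)
  have ha1 : 1 ≤ a := by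
    rcases Finset.mem_insert.1 ha_mem with h | h
    · omega
    · have := Finset.mem_Icc.1 (hS h); omega
  -- memberships for the erased set
  have haE : a ∈ insert 1 E := by
    rcases Finset.mem_insert.1 ha_mem with h | h
    · rw [h]; exact Finset.mem_insert_self _ _
    · exact Finset.mem_insert_of_mem (Finset.mem_erase.2 ⟨by omega, h⟩)
  have hcE : c ∈ insert (n + 1) E := by
    rcases Finset.mem_insert.1 hc_mem with h | h
    · rw [h]; exact Finset.mem_insert_self _ _
    · exact Finset.mem_insert_of_mem (Finset.mem_erase.2 ⟨by omega, h⟩)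
  have hins1E : ∀ t, t ∈ insert 1 E → t ∈ insert 1 S := fun t ht => by
    rcases Finset.mem_insert.1 ht with h | h
    · rw [h]; exact Finset.mem_insert_self _ _
    · exact Finset.mem_insert_of_mem (hES h)
  have hinsnE : ∀ t, t ∈ insert (n + 1) E → t ∈ insert (n + 1) S := fun t ht => by
    rcases Finset.mem_insert.1 ht with h | h
    · rw [h]; exact Finset.mem_insert_self _ _
    · exact Finset.mem_insert_of_mem (hES h)
  have hmem1SE : ∀ t, t ∈ insert 1 S → t ≠ s → t ∈ insert 1 E := fun t ht hts => by
    rcases Finset.mem_insert.1 ht with h | h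
    · rw [h]; exact Finset.mem_insert_self _ _
    · exact Finset.mem_insert_of_mem (Finset.mem_erase.2 ⟨hts, h⟩)
  -- gap facts
  have hgap_left : ∀ t ∈ insert 1 S, a < t → t < s → False := fun t ht h1 h2 =>
    absurd (ha_max t ht h2) (by omega)
  have hgap_right : ∀ t ∈ insert (n + 1) S, s < t → t < c → False := fun t ht h1 h2 =>
    absurd (hc_min t ht h1) (by omega)
  -- segment computations
  have hprevS_left : ∀ i, a ≤ i → i < s → prevPt S i = a := fun i h1 h2 =>
    prevPt_eq_of S i a ha_mem h1 (fun t ht hti => ha_max t ht (by omega))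
  have hprevE_left : ∀ i, a ≤ i → i < s → prevPt E i = a := fun i h1 h2 =>
    prevPt_eq_of E i a haE h1 (fun t ht hti => ha_max t (hins1E t ht) (by omega))
  have hnextS_left : ∀ i, a ≤ i → i < s → nextPt n S i = s := fun i h1 h2 =>
    nextPt_eq_of n S i s (Finset.mem_insert_of_mem hs) h2 (fun t ht hti => by
      by_contra hlt
      push_neg at hlt
      have ht1 : t ∈ insert 1 S := by
        rcases Finset.mem_insert.1 ht with h | h
        · omega
        · exact Finset.mem_insert_of_mem h
      exact absurd (ha_max t ht1 (by omega)) (by omega))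
  have hnextE_left : ∀ i, a ≤ i → i < s → nextPt n E i = c := fun i h1 h2 =>
    nextPt_eq_of n E i c hcE (by omega) (fun t ht hti => by
      have htS := hinsnE t ht
      have hts : t ≠ s := by
        rintro rfl
        rcases Finset.mem_insert.1 ht with h | h
        · omega
        · exact (Finset.mem_erase.1 h).1 rfl
      rcases lt_trichotomy t s with h | h | h
      · have ht1 : t ∈ insert 1 S := by
          rcases Finset.mem_insert.1 htS with hh | hh
          · omega
          · exact Finset.mem_insert_of_mem hh
        exact absurd (ha_max t ht1 h) (by omega)
      · omega
      · exact hc_min t htS h)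
  have hprevS_right : ∀ i, s ≤ i → i < c → prevPt S i = s := fun i h1 h2 =>
    prevPt_eq_of S i s (Finset.mem_insert_of_mem hs) h1 (fun t ht hti => by
      by_contra hlt
      push_neg at hlt
      have htn : t ∈ insert (n + 1) S := by
        rcases Finset.mem_insert.1 ht with h | h
        · omega
        · exact Finset.mem_insert_of_mem h
      exact absurd (hc_min t htn hlt) (by omega))
  have hprevE_right : ∀ i, s ≤ i → i < c → prevPt E i = a := fun i h1 h2 =>
    prevPt_eq_of E i a haE (by omega) (fun t ht hti => by
      have htS := hins1E t ht
      have hts : t ≠ s := by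
        rintro rfl
        rcases Finset.mem_insert.1 ht with h | h
        · omega
        · exact (Finset.mem_erase.1 h).1 rfl
      rcases lt_trichotomy t s with h | h | h
      · exact ha_max t htS h
      · omega
      · have htn : t ∈ insert (n + 1) S := by
          rcases Finset.mem_insert.1 htS with hh | hh
          · omega
          · exact Finset.mem_insert_of_mem hh
        exact absurd (hc_min t htn h) (by omega))
  have hnextS_right : ∀ i, s ≤ i → i < c → nextPt n S i = c := fun i h1 h2 =>
    nextPt_eq_of n S i c hc_mem h2 (fun t ht hti => hc_min t ht (by omega))
  have hnextE_right : ∀ i, s ≤ i → i < c → nextPt n E i = c := fun i h1 h2 =>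
    nextPt_eq_of n E i c hcE h2 (fun t ht hti => hc_min t (hinsnE t ht) (by omega))
  -- outside computations
  have hprev_lt : ∀ i, 1 ≤ i → i < a → prevPt S i = prevPt E i := fun i h1 h2 => by
    obtain ⟨hp1, hp2, hp3⟩ := prevPt_spec E i h1
    exact prevPt_eq_of S i (prevPt E i) (hins1E _ hp1) hp2 (fun t ht hti => by
      have hts : t ≠ s := by omega
      exact hp3 t (hmem1SE t ht hts) hti)
  have hnext_lt : ∀ i, 1 ≤ i → i < a → nextPt n S i = nextPt n E i := fun i h1 h2 => by
    have hin : i ≤ n := by omega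
    obtain ⟨hp1, hp2, hp3⟩ := nextPt_spec n E i hin
    have haE' : a ∈ insert (n + 1) E := by
      rcases Finset.mem_insert.1 haE with h | h
      · omega
      · exact Finset.mem_insert_of_mem h
    have hpa : nextPt n E i ≤ a := hp3 a haE' h2
    exact nextPt_eq_of n S i (nextPt n E i) (hinsnE _ hp1) hp2 (fun t ht hti => by
      rcases Finset.mem_insert.1 ht with h | h
      · omega
      · rcases eq_or_ne t s with h' | h'
        · omega
        · exact hp3 t (Finset.mem_insert_of_mem (Finset.mem_erase.2 ⟨h', h⟩)) hti)
  have hprev_ge : ∀ i, c ≤ i → i ≤ n → prevPt S i = prevPt E i := fun i h1 h2 => by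
    have h1' : 1 ≤ i := by omega
    obtain ⟨hp1, hp2, hp3⟩ := prevPt_spec E i h1'
    have hcE' : c ∈ insert 1 E := by
      rcases Finset.mem_insert.1 hcE with h | h
      · omega
      · exact Finset.mem_insert_of_mem h
    have hpc : c ≤ prevPt E i := hp3 c hcE' h1
    exact prevPt_eq_of S i (prevPt E i) (hins1E _ hp1) hp2 (fun t ht hti => by
      rcases eq_or_ne t s with h' | h'
      · omega
      · exact hp3 t (hmem1SE t ht h') hti)
  have hnext_ge : ∀ i, c ≤ i → i ≤ n → nextPt n S i = nextPt n E i := fun i h1 h2 => by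
    obtain ⟨hp1, hp2, hp3⟩ := nextPt_spec n E i h2
    exact nextPt_eq_of n S i (nextPt n E i) (hinsnE _ hp1) hp2 (fun t ht hti => by
      have hts : t ≠ s := by omega
      rcases Finset.mem_insert.1 ht with h | h
      · subst h; exact hp3 _ (Finset.mem_insert_self _ _) hti
      · exact hp3 t (Finset.mem_insert_of_mem (Finset.mem_erase.2 ⟨hts, h⟩)) hti)
  -- positivity for the logs
  have hnpos : (0 : ℝ) < (n : ℝ) := by exact_mod_cast (by omega : 0 < n)
  have hcsR : (0 : ℝ) < (c : ℝ) - (s : ℝ) := by rw [sub_pos]; exact_mod_cast hc_gt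
  have hsaR : (0 : ℝ) < (s : ℝ) - (a : ℝ) := by rw [sub_pos]; exact_mod_cast ha_lt
  have hcaR : (0 : ℝ) < (c : ℝ) - (a : ℝ) := by rw [sub_pos]; exact_mod_cast (by omega : a < c)
  -- residual difference
  have hresid : (∑ i ∈ Finset.Icc 1 n, (Y i - projCP n S Y i) ^ 2) -
      (∑ i ∈ Finset.Icc 1 n, (Y i - projCP n E Y i) ^ 2) = -(cusum Y a s c) ^ 2 := by
    rw [← Finset.sum_sub_distrib]
    have hsub : Finset.Ico a c ⊆ Finset.Icc 1 n := fun x hx => by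
      obtain ⟨hx1, hx2⟩ := Finset.mem_Ico.1 hx
      exact Finset.mem_Icc.2 ⟨by omega, by omega⟩
    have hzero : ∀ x ∈ Finset.Icc 1 n, x ∉ Finset.Ico a c →
        (Y x - projCP n S Y x) ^ 2 - (Y x - projCP n E Y x) ^ 2 = 0 := fun x hx hx' => by
      obtain ⟨hx1, hx2⟩ := Finset.mem_Icc.1 hx
      rw [Finset.mem_Ico] at hx'
      push_neg at hx'
      have hcase : x < a ∨ c ≤ x := by omega
      have : projCP n S Y x = projCP n E Y x := by
        rcases hcase with h | h
        · rw [projCP, projCP, hprev_lt x hx1 h, hnext_lt x hx1 h]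
        · rw [projCP, projCP, hprev_ge x h hx2, hnext_ge x h hx2]
      rw [this, sub_self]
    rw [← Finset.sum_subset hsub hzero]
    rw [← Finset.sum_Ico_consecutive
      (f := fun i => (Y i - projCP n S Y i) ^ 2 - (Y i - projCP n E Y i) ^ 2)
      ha_lt.le (by omega : s ≤ c)]
    have h1 : ∀ i ∈ Finset.Ico a s,
        (Y i - projCP n S Y i) ^ 2 - (Y i - projCP n E Y i) ^ 2 =
        (Y i - segMean Y a s) ^ 2 - (Y i - segMean Y a c) ^ 2 := fun i hi => by
      obtain ⟨h1, h2⟩ := Finset.mem_Ico.1 hi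
      rw [projCP, projCP, hprevS_left i h1 h2, hnextS_left i h1 h2,
        hprevE_left i h1 h2, hnextE_left i h1 h2]
    have h2 : ∀ i ∈ Finset.Ico s c,
        (Y i - projCP n S Y i) ^ 2 - (Y i - projCP n E Y i) ^ 2 =
        (Y i - segMean Y s c) ^ 2 - (Y i - segMean Y a c) ^ 2 := fun i hi => by
      obtain ⟨h1, h2⟩ := Finset.mem_Ico.1 hi
      rw [projCP, projCP, hprevS_right i h1 h2, hnextS_right i h1 h2,
        hprevE_right i h1 h2, hnextE_right i h1 h2]
    rw [Finset.sum_congr rfl h1, Finset.sum_congr rfl h2]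
    exact key_alg a s c Y ha_lt (by omega)
  -- penalty difference
  have hpen : pen0 n q S - pen0 n q E =
      2 * Real.log ((n : ℝ) * ((c : ℝ) - (a : ℝ)) /
        (((c : ℝ) - (s : ℝ)) * ((s : ℝ) - (a : ℝ)))) + q := by
    have hcard : (S.card : ℝ) = (E.card : ℝ) + 1 := by
      have := Finset.card_erase_add_one hs
      rw [hE]
      exact_mod_cast this.symm
    have hsplit : insert 1 S = insert s (insert 1 E) := by
      rw [hE, Finset.insert_comm, Finset.insert_erase hs]
    have hsnot : s ∉ insert 1 E := by
      simp only [Finset.mem_insert]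
      push_neg
      exact ⟨by omega, Finset.notMem_erase s S⟩
    have hsumS : ∑ t ∈ insert 1 S, Real.log ((n : ℝ) / ((nextPt n S t : ℝ) - (t : ℝ))) =
        Real.log ((n : ℝ) / ((c : ℝ) - (s : ℝ))) +
        ∑ t ∈ insert 1 E, Real.log ((n : ℝ) / ((nextPt n S t : ℝ) - (t : ℝ))) := by
      rw [hsplit, Finset.sum_insert hsnot, ← hc]
    have hdiff : ∑ t ∈ insert 1 E, (Real.log ((n : ℝ) / ((nextPt n S t : ℝ) - (t : ℝ))) -
        Real.log ((n : ℝ) / ((nextPt n E t : ℝ) - (t : ℝ)))) =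
        Real.log ((n : ℝ) / ((s : ℝ) - (a : ℝ))) - Real.log ((n : ℝ) / ((c : ℝ) - (a : ℝ))) := by
      rw [Finset.sum_eq_single_of_mem a haE]
      · rw [hnextS_left a le_rfl ha_lt, hnextE_left a le_rfl ha_lt]
      · intro t ht hta
        have htS := hins1E t ht
        have hts : t ≠ s := fun h => hsnot (h ▸ ht)
        have ht1 : 1 ≤ t := by
          rcases Finset.mem_insert.1 htS with h | h
          · omega
          · have := Finset.mem_Icc.1 (hS h); omega
        rcases lt_trichotomy t s with h | h | h
        · have hta' : t < a := lt_of_le_of_ne (ha_max t htS h) hta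
          rw [hnext_lt t ht1 hta', sub_self]
        · omega
        · have htn : t ∈ insert (n + 1) S := by
            rcases Finset.mem_insert.1 htS with hh | hh
            · omega
            · exact Finset.mem_insert_of_mem hh
          have htc : c ≤ t := hc_min t htn h
          have htle : t ≤ n := by
            rcases Finset.mem_insert.1 htS with hh | hh
            · omega
            · exact (Finset.mem_Icc.1 (hS hh)).2
          rw [hnext_ge t htc htle, sub_self]
    have hlog : Real.log ((n : ℝ) / ((c : ℝ) - (s : ℝ))) +
        (Real.log ((n : ℝ) / ((s : ℝ) - (a : ℝ))) - Real.log ((n : ℝ) / ((c : ℝ) - (a : ℝ)))) =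
        Real.log ((n : ℝ) * ((c : ℝ) - (a : ℝ)) /
          (((c : ℝ) - (s : ℝ)) * ((s : ℝ) - (a : ℝ)))) := by
      rw [Real.log_div hnpos.ne' hcsR.ne', Real.log_div hnpos.ne' hsaR.ne',
        Real.log_div hnpos.ne' hcaR.ne',
        Real.log_div (by positivity) (by positivity),
        Real.log_mul hnpos.ne' hcaR.ne', Real.log_mul hcsR.ne' hsaR.ne']
      ring
    rw [pen0, pen0, hcard, hsumS]
    rw [show (∑ t ∈ insert 1 E, Real.log ((n : ℝ) / ((nextPt n S t : ℝ) - (t : ℝ)))) =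
      (∑ t ∈ insert 1 E, Real.log ((n : ℝ) / ((nextPt n E t : ℝ) - (t : ℝ)))) +
      (∑ t ∈ insert 1 E, (Real.log ((n : ℝ) / ((nextPt n S t : ℝ) - (t : ℝ))) -
        Real.log ((n : ℝ) / ((nextPt n E t : ℝ) - (t : ℝ))))) by
        rw [← Finset.sum_add_distrib]; apply Finset.sum_congr rfl; intros; ring]
    rw [hdiff, ← hlog]
    ring
  -- assemble
  simp only [Cr0]
  have : (∑ i ∈ Finset.Icc 1 n, (Y i - projCP n S Y i) ^ 2) + L * pen0 n q S -
      ((∑ i ∈ Finset.Icc 1 n, (Y i - projCP n E Y i) ^ 2) + L * pen0 n q E) =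
      ((∑ i ∈ Finset.Icc 1 n, (Y i - projCP n S Y i) ^ 2) -
        (∑ i ∈ Finset.Icc 1 n, (Y i - projCP n E Y i) ^ 2)) +
      L * (pen0 n q S - pen0 n q E) := by ring
  rw [this, hresid, hpen]
end

section
/- Assume Gaussian noise. For any fixed L < 1, any q > 0, any n large enough, and any θ ∈ Θ_0 (constant signal), the penalized least-squares estimator τ̂ minimizing Cr_0(Y,·) satisfies P_θ( |τ̂| ≥ 1 ) ≥ 1 − n^{−1}, i.e. with probability at least 1 − 1/n at least one spurious change-point is selected. -/
open MeasureTheory ProbabilityTheory Finset Real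

section Aux

variable {Y : ℕ → ℝ}

lemma segMean_sum {a b : ℕ} (h : a < b) (Y : ℕ → ℝ) :
    ∑ i ∈ Finset.Ico a b, Y i = ((b : ℝ) - a) * segMean Y a b := by
  have hne : ((b : ℝ) - a) ≠ 0 := by
    have : (a : ℝ) < b := by exact_mod_cast h
    linarith
  rw [segMean, mul_div_cancel₀ _ hne]

lemma seg_sq_expand {a b : ℕ} (h : a < b) (Y : ℕ → ℝ) (C : ℝ) :
    ∑ i ∈ Finset.Ico a b, (Y i - C) ^ 2
      = ∑ i ∈ Finset.Ico a b, (Y i - segMean Y a b) ^ 2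
        + ((b : ℝ) - a) * (segMean Y a b - C) ^ 2 := by
  set A := segMean Y a b with hA
  have hsum : ∑ i ∈ Finset.Ico a b, Y i = ((b : ℝ) - a) * A := segMean_sum h Y
  have hcard : ((Finset.Ico a b).card : ℝ) = (b : ℝ) - a := by
    rw [Nat.card_Ico]
    have : a ≤ b := h.le
    push_cast [Nat.cast_sub this]
    ring
  have hpt : ∀ i ∈ Finset.Ico a b,
      (Y i - C) ^ 2 = (Y i - A) ^ 2 + (2 * (A - C) * Y i + (C ^ 2 - A ^ 2)) := by
    intro i _; ring
  rw [Finset.sum_congr rfl hpt, Finset.sum_add_distrib, Finset.sum_add_distrib,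
    ← Finset.mul_sum, Finset.sum_const, hsum]
  have : ((Finset.Ico a b).card : ℝ) • (C ^ 2 - A ^ 2) = ((b:ℝ) - a) * (C ^ 2 - A ^ 2) := by
    rw [smul_eq_mul, hcard]
  rw [nsmul_eq_mul, hcard]
  ring

lemma seg_sq_ge {a b : ℕ} (Y : ℕ → ℝ) (C : ℝ) :
    ∑ i ∈ Finset.Ico a b, (Y i - segMean Y a b) ^ 2
      ≤ ∑ i ∈ Finset.Ico a b, (Y i - C) ^ 2 := by
  rcases lt_or_ge a b with h | h
  · rw [seg_sq_expand h Y C]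
    have h1 : 0 ≤ ((b : ℝ) - a) := by
      have : (a:ℝ) ≤ b := by exact_mod_cast h.le
      linarith
    nlinarith [sq_nonneg (segMean Y a b - C)]
  · rw [Finset.Ico_eq_empty (by omega)]
    simp

lemma segMean_single (Y : ℕ → ℝ) (j : ℕ) : segMean Y j (j + 1) = Y j := by
  rw [segMean]
  rw [Nat.Ico_succ_singleton, Finset.sum_singleton]
  push_cast
  simp

lemma prevPt_eval {S : Finset ℕ} {i p : ℕ} (hp : p ∈ insert 1 S) (hpi : p ≤ i)
    (hmax : ∀ s ∈ insert 1 S, s ≤ i → s ≤ p) : prevPt S i = p := by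
  have hmem : p ∈ (insert 1 S).filter (fun s => s ≤ i) := Finset.mem_filter.2 ⟨hp, hpi⟩
  have hne : ((insert 1 S).filter (fun s => s ≤ i)).Nonempty := ⟨p, hmem⟩
  rw [prevPt, dif_pos hne]
  apply le_antisymm
  · apply Finset.max'_le
    intro y hy
    rcases Finset.mem_filter.1 hy with ⟨hy1, hy2⟩
    exact hmax y hy1 hy2
  · exact Finset.le_max' _ _ hmem

lemma nextPt_eval {n : ℕ} {S : Finset ℕ} {i p : ℕ} (hp : p ∈ insert (n+1) S) (hpi : i < p)
    (hmin : ∀ s ∈ insert (n+1) S, i < s → p ≤ s) : nextPt n S i = p := by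
  have hmem : p ∈ (insert (n+1) S).filter (fun s => i < s) := Finset.mem_filter.2 ⟨hp, hpi⟩
  have hne : ((insert (n+1) S).filter (fun s => i < s)).Nonempty := ⟨p, hmem⟩
  rw [nextPt, dif_pos hne]
  apply le_antisymm
  · exact Finset.min'_le _ _ hmem
  · apply Finset.le_min'
    intro y hy
    rcases Finset.mem_filter.1 hy with ⟨hy1, hy2⟩
    exact hmin y hy1 hy2

lemma prevPt_empty {i : ℕ} (h : 1 ≤ i) : prevPt ∅ i = 1 :=
  prevPt_eval (by simp) h (by simp)

lemma nextPt_empty {n i : ℕ} (h : i ≤ n) : nextPt n ∅ i = n + 1 :=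
  nextPt_eval (by simp) (by omega) (by simp)

lemma mem_pair_insert {j x : ℕ} :
    x ∈ insert 1 ({j, j+1} : Finset ℕ) ↔ x = 1 ∨ x = j ∨ x = j + 1 := by
  simp [Finset.mem_insert, Finset.mem_singleton]

lemma mem_pair_insert' {n j x : ℕ} :
    x ∈ insert (n+1) ({j, j+1} : Finset ℕ) ↔ x = n+1 ∨ x = j ∨ x = j + 1 := by
  simp [Finset.mem_insert, Finset.mem_singleton]

lemma prevPt_pair_lt {j i : ℕ} (h1 : 1 ≤ i) (h2 : i < j) : prevPt ({j, j+1} : Finset ℕ) i = 1 :=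
  prevPt_eval (by simp) h1 (by intro s hs hsi; rw [mem_pair_insert] at hs; omega)

lemma prevPt_pair_eq {j : ℕ} : prevPt ({j, j+1} : Finset ℕ) j = j :=
  prevPt_eval (by simp) le_rfl
    (by intro s hs hsi; rw [mem_pair_insert] at hs; omega)

lemma prevPt_pair_gt {j i : ℕ} (h : j + 1 ≤ i) : prevPt ({j, j+1} : Finset ℕ) i = j + 1 :=
  prevPt_eval (by simp) h
    (by intro s hs hsi; rw [mem_pair_insert] at hs; omega)

lemma nextPt_pair_lt {n j i : ℕ} (_hjn : j ≤ n) (h : i < j) :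
    nextPt n ({j, j+1} : Finset ℕ) i = j :=
  nextPt_eval (by simp) h
    (by intro s hs hsi; rw [mem_pair_insert'] at hs; omega)

lemma nextPt_pair_eq {n j : ℕ} (hjn : j + 1 ≤ n + 1) :
    nextPt n ({j, j+1} : Finset ℕ) j = j + 1 :=
  nextPt_eval (by simp) (by omega)
    (by intro s hs hsi; rw [mem_pair_insert'] at hs; omega)

lemma nextPt_pair_gt {n j i : ℕ} (h : j + 1 ≤ i) (hin : i ≤ n) :
    nextPt n ({j, j+1} : Finset ℕ) i = n + 1 :=
  nextPt_eval (by simp) (by omega)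
    (by intro s hs hsi; rw [mem_pair_insert'] at hs; omega)

end Aux
section Aux2

lemma pen0_empty {n : ℕ} (hn : 1 ≤ n) (q : ℝ) : pen0 n q ∅ = 0 := by
  rw [pen0]
  simp only [Finset.card_empty, Nat.cast_zero, mul_zero, LawfulSingleton.insert_empty_eq,
    Finset.sum_singleton, zero_add]
  rw [nextPt_empty hn]
  have : ((n + 1 : ℕ) : ℝ) - (1 : ℕ) = (n : ℝ) := by push_cast; ring
  rw [this]
  rw [div_self (by positivity : (n:ℝ) ≠ 0)]
  simp

lemma pair_card {j : ℕ} : ({j, j+1} : Finset ℕ).card = 2 := by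
  rw [Finset.card_insert_of_notMem (by simp), Finset.card_singleton]

lemma pen0_pair {n j : ℕ} (h2 : 2 ≤ j) (hjn : j + 1 ≤ n) (q : ℝ) :
    pen0 n q ({j, j+1} : Finset ℕ)
      = q * 2 + 2 * (Real.log ((n:ℝ) / ((j:ℝ) - 1)) + Real.log (n:ℝ)
          + Real.log ((n:ℝ) / ((n:ℝ) - (j:ℝ)))) := by
  rw [pen0, pair_card]
  have h1 : (1 : ℕ) ∉ ({j, j+1} : Finset ℕ) := by simp; omega
  have hj : j ∉ ({j+1} : Finset ℕ) := by simp
  rw [Finset.sum_insert h1, show ({j, j+1} : Finset ℕ) = insert j {j+1} from rfl,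
    Finset.sum_insert hj, Finset.sum_singleton]
  rw [nextPt_pair_lt (by omega) (by omega), nextPt_pair_eq (by omega),
    nextPt_pair_gt le_rfl (by omega)]
  have e1 : ((j : ℕ) : ℝ) - (1 : ℕ) = (j:ℝ) - 1 := by push_cast; ring
  have e2 : ((j + 1 : ℕ) : ℝ) - (j : ℕ) = (1 : ℝ) := by push_cast; ring
  have e3 : ((n + 1 : ℕ) : ℝ) - ((j + 1 : ℕ) : ℝ) = (n:ℝ) - (j:ℝ) := by push_cast; ring
  rw [e1, e2, e3, div_one]
  push_cast
  ring

lemma pen0_pair_nonneg {n j : ℕ} (h2 : 2 ≤ j) (hjn : j + 1 ≤ n) {q : ℝ} (hq : 0 ≤ q) :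
    0 ≤ pen0 n q ({j, j+1} : Finset ℕ) := by
  rw [pen0_pair h2 hjn]
  have hn : (1:ℝ) ≤ (n:ℝ) := by exact_mod_cast (by omega : 1 ≤ n)
  have hj1 : (1:ℝ) ≤ (j:ℝ) - 1 := by
    have : (2:ℝ) ≤ (j:ℝ) := by exact_mod_cast h2
    linarith
  have hjn' : (j:ℝ) + 1 ≤ (n:ℝ) := by exact_mod_cast hjn
  have l1 : 0 ≤ Real.log ((n:ℝ) / ((j:ℝ) - 1)) := by
    apply Real.log_nonneg
    rw [le_div_iff₀ (by linarith)]
    linarith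
  have l2 : 0 ≤ Real.log (n:ℝ) := Real.log_nonneg hn
  have l3 : 0 ≤ Real.log ((n:ℝ) / ((n:ℝ) - (j:ℝ))) := by
    apply Real.log_nonneg
    rw [le_div_iff₀ (by linarith)]
    linarith
  nlinarith

lemma pen0_pair_le {n j : ℕ} (h2 : 2 ≤ j) (hjn : j + 1 ≤ n)
    (hleft : (n:ℝ) ≤ 4 * ((j:ℝ) - 1)) (hright : (n:ℝ) ≤ 4 * ((n:ℝ) - (j:ℝ)))
    {q : ℝ} (hq : 0 ≤ q) :
    pen0 n q ({j, j+1} : Finset ℕ) ≤ 2*q + 2 * Real.log (n:ℝ) + 4 * Real.log 4 := by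
  rw [pen0_pair h2 hjn]
  have hj1 : (1:ℝ) ≤ (j:ℝ) - 1 := by
    have : (2:ℝ) ≤ (j:ℝ) := by exact_mod_cast h2
    linarith
  have hjn' : (j:ℝ) + 1 ≤ (n:ℝ) := by exact_mod_cast hjn
  have hn0 : (0:ℝ) < (n:ℝ) := by linarith
  have l1 : Real.log ((n:ℝ) / ((j:ℝ) - 1)) ≤ Real.log 4 := by
    apply Real.log_le_log (div_pos hn0 (by linarith))
    rw [div_le_iff₀ (by linarith)]
    linarith
  have l3 : Real.log ((n:ℝ) / ((n:ℝ) - (j:ℝ))) ≤ Real.log 4 := by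
    apply Real.log_le_log (div_pos hn0 (by linarith))
    rw [div_le_iff₀ (by linarith)]
    linarith
  nlinarith

lemma Cr0_empty {n : ℕ} (hn : 1 ≤ n) (L q : ℝ) (Y : ℕ → ℝ) :
    Cr0 n L q Y ∅ = ∑ i ∈ Finset.Icc 1 n, (Y i - segMean Y 1 (n+1)) ^ 2 := by
  rw [Cr0, pen0_empty hn, mul_zero, add_zero]
  apply Finset.sum_congr rfl
  intro i hi
  rcases Finset.mem_Icc.1 hi with ⟨h1, h2⟩
  rw [projCP, prevPt_empty h1, nextPt_empty h2]

lemma Cr0_pair {n j : ℕ} (h2 : 2 ≤ j) (hjn : j + 1 ≤ n) (L q : ℝ) (Y : ℕ → ℝ) :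
    Cr0 n L q Y ({j, j+1} : Finset ℕ)
      = (∑ i ∈ Finset.Ico 1 j, (Y i - segMean Y 1 j) ^ 2)
        + (∑ i ∈ Finset.Ico (j+1) (n+1), (Y i - segMean Y (j+1) (n+1)) ^ 2)
        + L * pen0 n q ({j, j+1} : Finset ℕ) := by
  rw [Cr0]
  congr 1
  rw [← Finset.Ico_add_one_right_eq_Icc,
    ← Finset.sum_Ico_consecutive _ (by omega : 1 ≤ j) (by omega : j ≤ n + 1),
    ← Finset.sum_Ico_consecutive _ (by omega : j ≤ j + 1) (by omega : j + 1 ≤ n + 1)]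
  have hmid : ∑ i ∈ Finset.Ico j (j+1), (Y i - projCP n ({j, j+1} : Finset ℕ) Y i) ^ 2 = 0 := by
    rw [Nat.Ico_succ_singleton, Finset.sum_singleton, projCP, prevPt_pair_eq,
      nextPt_pair_eq (by omega), segMean_single]
    ring
  rw [hmid, zero_add]
  congr 1
  · apply Finset.sum_congr rfl
    intro i hi
    rcases Finset.mem_Ico.1 hi with ⟨ha, hb⟩
    rw [projCP, prevPt_pair_lt ha hb, nextPt_pair_lt (by omega) hb]
  · apply Finset.sum_congr rfl
    intro i hi
    rcases Finset.mem_Ico.1 hi with ⟨ha, hb⟩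
    rw [projCP, prevPt_pair_gt ha, nextPt_pair_gt ha (by omega)]

lemma crit_lt {n j : ℕ} (h2 : 2 ≤ j) (hjn : j + 1 ≤ n) (L q : ℝ) (Y : ℕ → ℝ)
    (hkey : L * pen0 n q ({j, j+1} : Finset ℕ) < (Y j - segMean Y 1 (n+1)) ^ 2) :
    Cr0 n L q Y ({j, j+1} : Finset ℕ) < Cr0 n L q Y ∅ := by
  set C := segMean Y 1 (n+1) with hC
  have hsplit : Cr0 n L q Y ∅
      = (∑ i ∈ Finset.Ico 1 j, (Y i - C) ^ 2) + (Y j - C) ^ 2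
        + (∑ i ∈ Finset.Ico (j+1) (n+1), (Y i - C) ^ 2) := by
    rw [Cr0_empty (by omega) L q Y, ← Finset.Ico_add_one_right_eq_Icc,
      ← Finset.sum_Ico_consecutive _ (by omega : 1 ≤ j) (by omega : j ≤ n + 1),
      ← Finset.sum_Ico_consecutive _ (by omega : j ≤ j + 1) (by omega : j + 1 ≤ n + 1),
      Nat.Ico_succ_singleton, Finset.sum_singleton]
    ring
  have h1 := seg_sq_ge (a := 1) (b := j) Y C
  have h3 := seg_sq_ge (a := j+1) (b := n+1) Y C
  rw [hsplit, Cr0_pair h2 hjn]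
  linarith

end Aux2
section Aux3

open scoped ENNReal NNReal

lemma gauss_pdf_identity (t x : ℝ) :
    Real.exp (t * x) * gaussianPDFReal 0 1 x
      = Real.exp (t ^ 2 / 2) * gaussianPDFReal t 1 x := by
  rw [gaussianPDFReal, gaussianPDFReal]
  have h1 : Real.exp (t * x) * ((Real.sqrt (2 * π * ((1:ℝ≥0):ℝ)))⁻¹
      * Real.exp (- (x - 0)^2 / (2 * ((1:ℝ≥0):ℝ))))
      = (Real.sqrt (2 * π * ((1:ℝ≥0):ℝ)))⁻¹ * (Real.exp (t * x) * Real.exp (- (x - 0)^2 / (2 * ((1:ℝ≥0):ℝ)))) := by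
    ring
  rw [h1, ← Real.exp_add]
  have h2 : Real.exp (t ^ 2 / 2) * ((Real.sqrt (2 * π * ((1:ℝ≥0):ℝ)))⁻¹
      * Real.exp (- (x - t)^2 / (2 * ((1:ℝ≥0):ℝ))))
      = (Real.sqrt (2 * π * ((1:ℝ≥0):ℝ)))⁻¹ * (Real.exp (t ^ 2 / 2) * Real.exp (- (x - t)^2 / (2 * ((1:ℝ≥0):ℝ)))) := by
    ring
  rw [h2, ← Real.exp_add]
  congr 1
  push_cast
  ring

lemma integrable_exp_mul_gauss (t : ℝ) :
    Integrable (fun x => Real.exp (t * x)) (gaussianReal 0 1) := by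
  rw [gaussianReal_of_var_ne_zero 0 one_ne_zero]
  rw [integrable_withDensity_iff (measurable_gaussianPDF 0 1)
    (Filter.Eventually.of_forall fun x => ENNReal.ofReal_lt_top)]
  have heq : (fun x => Real.exp (t * x) * (gaussianPDF 0 1 x).toReal)
      = fun x => Real.exp (t ^ 2 / 2) * gaussianPDFReal t 1 x := by
    funext x
    rw [gaussianPDF, ENNReal.toReal_ofReal (gaussianPDFReal_nonneg 0 1 x)]
    exact gauss_pdf_identity t x
  rw [heq]
  exact (integrable_gaussianPDFReal t 1).const_mul _

lemma integral_exp_mul_gauss (t : ℝ) :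
    ∫ x, Real.exp (t * x) ∂(gaussianReal 0 1) = Real.exp (t ^ 2 / 2) := by
  rw [gaussianReal_of_var_ne_zero 0 one_ne_zero]
  have hd : (gaussianPDF 0 1) = fun x => ((fun y => (gaussianPDFReal 0 1 y).toNNReal) x : ℝ≥0∞) := by
    funext x
    rw [gaussianPDF, ENNReal.ofReal]
  rw [hd, integral_withDensity_eq_integral_smul
    ((measurable_gaussianPDFReal 0 1).real_toNNReal) (fun x => Real.exp (t * x))]
  have heq : (fun x => (gaussianPDFReal 0 1 x).toNNReal • Real.exp (t * x))
      = fun x => Real.exp (t ^ 2 / 2) * gaussianPDFReal t 1 x := by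
    funext x
    rw [NNReal.smul_def, smul_eq_mul, Real.coe_toNNReal _ (gaussianPDFReal_nonneg 0 1 x),
      mul_comm]
    exact gauss_pdf_identity t x
  rw [heq, integral_const_mul, integral_gaussianPDFReal_eq_one t one_ne_zero, mul_one]

variable {Ω : Type} [MeasurableSpace Ω] {P : Measure Ω}

lemma integrable_exp_mul_of_gauss {X : Ω → ℝ} (hX : Measurable X)
    (hmap : P.map X = gaussianReal 0 1) (t : ℝ) :
    Integrable (fun ω => Real.exp (t * X ω)) P := by
  have : Integrable (fun x => Real.exp (t * x)) (P.map X) := by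
    rw [hmap]; exact integrable_exp_mul_gauss t
  rwa [integrable_map_measure (Measurable.aestronglyMeasurable (by fun_prop))
    hX.aemeasurable] at this

lemma mgf_of_gauss {X : Ω → ℝ} (hX : Measurable X)
    (hmap : P.map X = gaussianReal 0 1) (t : ℝ) :
    mgf X P t = Real.exp (t ^ 2 / 2) := by
  rw [mgf]
  have : ∫ ω, Real.exp (t * X ω) ∂P = ∫ x, Real.exp (t * x) ∂(P.map X) := by
    rw [integral_map hX.aemeasurable (Measurable.aestronglyMeasurable (by fun_prop))]
  rw [this, hmap, integral_exp_mul_gauss]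

/-- Lower bound for the upper tail of the standard Gaussian. -/
lemma gauss_Iic_le {a : ℝ} (ha : 0 ≤ a) :
    (gaussianReal 0 1) (Set.Iic a)
      ≤ 1 - ENNReal.ofReal (Real.exp (-(a+1)^2/2) / Real.sqrt (2 * π)) := by
  have hIoi : ENNReal.ofReal (Real.exp (-(a+1)^2/2) / Real.sqrt (2 * π))
      ≤ (gaussianReal 0 1) (Set.Ioi a) := by
    have hsub : (gaussianReal 0 1) (Set.Ioc a (a+1)) ≤ (gaussianReal 0 1) (Set.Ioi a) :=
      measure_mono Set.Ioc_subset_Ioi_self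
    refine le_trans ?_ hsub
    rw [gaussianReal_apply 0 one_ne_zero]
    have hpt : ∀ x ∈ Set.Ioc a (a+1),
        ENNReal.ofReal (Real.exp (-(a+1)^2/2) / Real.sqrt (2 * π)) ≤ gaussianPDF 0 1 x := by
      intro x hx
      rcases hx with ⟨hx1, hx2⟩
      apply ENNReal.ofReal_le_ofReal
      rw [gaussianPDFReal, div_eq_inv_mul]
      push_cast
      rw [mul_one, mul_one]
      apply mul_le_mul_of_nonneg_left _ (inv_nonneg.2 (Real.sqrt_nonneg _))
      apply Real.exp_le_exp.2
      have hx0 : 0 < x := lt_of_le_of_lt ha hx1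
      have hsq : (x - 0)^2 ≤ (a+1)^2 := by nlinarith
      linarith
    calc ENNReal.ofReal (Real.exp (-(a+1)^2/2) / Real.sqrt (2 * π))
        = ENNReal.ofReal (Real.exp (-(a+1)^2/2) / Real.sqrt (2 * π))
            * volume (Set.Ioc a (a+1)) := by
          rw [Real.volume_Ioc]
          norm_num
      _ = ∫⁻ _x in Set.Ioc a (a+1), ENNReal.ofReal (Real.exp (-(a+1)^2/2) / Real.sqrt (2 * π)) := by
          rw [MeasureTheory.setLIntegral_const]
      _ ≤ ∫⁻ x in Set.Ioc a (a+1), gaussianPDF 0 1 x := by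
          apply MeasureTheory.setLIntegral_mono (measurable_gaussianPDF 0 1)
          exact hpt
  have hcompl : (gaussianReal 0 1) (Set.Iic a) = 1 - (gaussianReal 0 1) (Set.Ioi a) := by
    rw [← Set.compl_Ioi]
    exact prob_compl_eq_one_sub measurableSet_Ioi
  rw [hcompl]
  exact tsub_le_tsub_left hIoi 1

end Aux3
section Aux4

open scoped ENNReal NNReal

variable {Ω : Type} [MeasurableSpace Ω] {P : Measure Ω} [IsProbabilityMeasure P]
  {ε : ℕ → Ω → ℝ}

lemma chernoff_pos (hmeas : ∀ i, Measurable (ε i))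
    (hind : iIndepFun ε P)
    (hmap : ∀ i, P.map (ε i) = gaussianReal 0 1) (n : ℕ) :
    P {ω | (n:ℝ) ≤ ∑ i ∈ Finset.Icc 1 n, ε i ω} ≤ ENNReal.ofReal (Real.exp (-(n:ℝ)/2)) := by
  have hint : ∀ i ∈ Finset.Icc 1 n, Integrable (fun ω => Real.exp (1 * ε i ω)) P :=
    fun i _ => integrable_exp_mul_of_gauss (hmeas i) (hmap i) 1
  have hintX : Integrable (fun ω => Real.exp (1 * (∑ i ∈ Finset.Icc 1 n, ε i) ω)) P :=
    hind.integrable_exp_mul_sum hmeas hint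
  have hch := measure_ge_le_exp_mul_mgf (μ := P) (X := ∑ i ∈ Finset.Icc 1 n, ε i)
    (t := 1) (n:ℝ) zero_le_one hintX
  have hmgf : mgf (∑ i ∈ Finset.Icc 1 n, ε i) P 1 = Real.exp ((n:ℝ)/2) := by
    rw [hind.mgf_sum hmeas]
    have : ∀ i ∈ Finset.Icc 1 n, mgf (ε i) P 1 = Real.exp ((1:ℝ)/2) := by
      intro i _
      rw [mgf_of_gauss (hmeas i) (hmap i) 1]
      norm_num
    rw [Finset.prod_congr rfl this, Finset.prod_const, Nat.card_Icc]
    rw [← Real.exp_nat_mul]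
    congr 1
    push_cast
    ring
  rw [hmgf] at hch
  have hch2 : (P {ω | (n:ℝ) ≤ (∑ i ∈ Finset.Icc 1 n, ε i) ω}).toReal
      ≤ Real.exp (-(n:ℝ)/2) := by
    refine hch.trans_eq ?_
    rw [← Real.exp_add]
    congr 1
    ring
  have hset : {ω | (n:ℝ) ≤ (∑ i ∈ Finset.Icc 1 n, ε i) ω}
      = {ω | (n:ℝ) ≤ ∑ i ∈ Finset.Icc 1 n, ε i ω} := by
    ext ω; simp [Finset.sum_apply]
  rw [hset] at hch2
  calc P {ω | (n:ℝ) ≤ ∑ i ∈ Finset.Icc 1 n, ε i ω}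
      = ENNReal.ofReal ((P {ω | (n:ℝ) ≤ ∑ i ∈ Finset.Icc 1 n, ε i ω}).toReal) :=
        (ENNReal.ofReal_toReal (measure_ne_top _ _)).symm
    _ ≤ ENNReal.ofReal (Real.exp (-(n:ℝ)/2)) := ENNReal.ofReal_le_ofReal hch2

lemma chernoff_neg (hmeas : ∀ i, Measurable (ε i))
    (hind : iIndepFun ε P)
    (hmap : ∀ i, P.map (ε i) = gaussianReal 0 1) (n : ℕ) :
    P {ω | (n:ℝ) ≤ -∑ i ∈ Finset.Icc 1 n, ε i ω} ≤ ENNReal.ofReal (Real.exp (-(n:ℝ)/2)) := by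
  have hint : ∀ i ∈ Finset.Icc 1 n, Integrable (fun ω => Real.exp ((-1) * ε i ω)) P :=
    fun i _ => integrable_exp_mul_of_gauss (hmeas i) (hmap i) (-1)
  have hintX : Integrable (fun ω => Real.exp ((-1) * (∑ i ∈ Finset.Icc 1 n, ε i) ω)) P :=
    hind.integrable_exp_mul_sum hmeas hint
  have hintX' : Integrable (fun ω => Real.exp (1 * (-(∑ i ∈ Finset.Icc 1 n, ε i)) ω)) P := by
    have : (fun ω => Real.exp (1 * (-(∑ i ∈ Finset.Icc 1 n, ε i)) ω))
        = fun ω => Real.exp ((-1) * (∑ i ∈ Finset.Icc 1 n, ε i) ω) := by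
      funext ω
      simp
    rw [this]; exact hintX
  have hch := measure_ge_le_exp_mul_mgf (μ := P) (X := -(∑ i ∈ Finset.Icc 1 n, ε i))
    (t := 1) (n:ℝ) zero_le_one hintX'
  have hmgf : mgf (-(∑ i ∈ Finset.Icc 1 n, ε i)) P 1 = Real.exp ((n:ℝ)/2) := by
    rw [mgf_neg, hind.mgf_sum hmeas]
    have : ∀ i ∈ Finset.Icc 1 n, mgf (ε i) P (-1) = Real.exp ((1:ℝ)/2) := by
      intro i _
      rw [mgf_of_gauss (hmeas i) (hmap i) (-1)]
      norm_num
    rw [Finset.prod_congr rfl this, Finset.prod_const, Nat.card_Icc]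
    rw [← Real.exp_nat_mul]
    congr 1
    push_cast
    ring
  rw [hmgf] at hch
  have hch2 : (P {ω | (n:ℝ) ≤ (-(∑ i ∈ Finset.Icc 1 n, ε i)) ω}).toReal
      ≤ Real.exp (-(n:ℝ)/2) := by
    refine hch.trans_eq ?_
    rw [← Real.exp_add]
    congr 1
    ring
  have hset : {ω | (n:ℝ) ≤ (-(∑ i ∈ Finset.Icc 1 n, ε i)) ω}
      = {ω | (n:ℝ) ≤ -∑ i ∈ Finset.Icc 1 n, ε i ω} := by
    ext ω; simp [Finset.sum_apply]
  rw [hset] at hch2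
  calc P {ω | (n:ℝ) ≤ -∑ i ∈ Finset.Icc 1 n, ε i ω}
      = ENNReal.ofReal ((P {ω | (n:ℝ) ≤ -∑ i ∈ Finset.Icc 1 n, ε i ω}).toReal) :=
        (ENNReal.ofReal_toReal (measure_ne_top _ _)).symm
    _ ≤ ENNReal.ofReal (Real.exp (-(n:ℝ)/2)) := ENNReal.ofReal_le_ofReal hch2

lemma tail_prod (hmeas : ∀ i, Measurable (ε i))
    (hind : iIndepFun ε P)
    (hmap : ∀ i, P.map (ε i) = gaussianReal 0 1) (J : Finset ℕ) {a d : ℝ} (ha : 0 ≤ a)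
    (hd : d ≤ Real.exp (-(a+1)^2/2) / Real.sqrt (2 * π)) (hd0 : 0 ≤ d) (hd1 : d ≤ 1) :
    P (⋂ j ∈ J, {ω | ε j ω ≤ a}) ≤ ENNReal.ofReal (Real.exp (-(d * J.card))) := by
  have hprod : P (⋂ j ∈ J, {ω | ε j ω ≤ a}) = ∏ j ∈ J, P {ω | ε j ω ≤ a} := by
    apply hind.meas_biInter
    intro j _
    exact ⟨Set.Iic a, measurableSet_Iic, rfl⟩
  have hone : ∀ j ∈ J, P {ω | ε j ω ≤ a} ≤ 1 - ENNReal.ofReal d := by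
    intro j _
    have h1 : P {ω | ε j ω ≤ a} = (P.map (ε j)) (Set.Iic a) := by
      rw [Measure.map_apply (hmeas j) measurableSet_Iic]
      rfl
    rw [h1, hmap j]
    refine (gauss_Iic_le ha).trans ?_
    exact tsub_le_tsub_left (ENNReal.ofReal_le_ofReal hd) 1
  calc P (⋂ j ∈ J, {ω | ε j ω ≤ a})
      = ∏ j ∈ J, P {ω | ε j ω ≤ a} := hprod
    _ ≤ ∏ _j ∈ J, (1 - ENNReal.ofReal d) := Finset.prod_le_prod' hone
    _ = (1 - ENNReal.ofReal d) ^ J.card := Finset.prod_const _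
    _ = ENNReal.ofReal ((1 - d) ^ J.card) := by
        rw [← ENNReal.ofReal_one, ← ENNReal.ofReal_sub _ hd0, ENNReal.ofReal_pow (by linarith)]
    _ ≤ ENNReal.ofReal (Real.exp (-(d * J.card))) := by
        apply ENNReal.ofReal_le_ofReal
        have h1 : (1 - d) ^ J.card ≤ (Real.exp (-d)) ^ J.card := by
          apply pow_le_pow_left₀ (by linarith)
          linarith [Real.add_one_le_exp (-d)]
        refine h1.trans_eq ?_
        rw [← Real.exp_nat_mul]
        congr 1
        ring
  
end Aux4
section Aux5

open Filter

lemma sqrt_add_le' {x y : ℝ} (hx : 0 ≤ x) (hy : 0 ≤ y) :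
    Real.sqrt (x + y) ≤ Real.sqrt x + Real.sqrt y := by
  have h : x + y ≤ (Real.sqrt x + Real.sqrt y) ^ 2 := by
    nlinarith [Real.sq_sqrt hx, Real.sq_sqrt hy, Real.sqrt_nonneg x, Real.sqrt_nonneg y]
  calc Real.sqrt (x + y) ≤ Real.sqrt ((Real.sqrt x + Real.sqrt y) ^ 2) := Real.sqrt_le_sqrt h
    _ = Real.sqrt x + Real.sqrt y := Real.sqrt_sq (by positivity)

lemma ev_linear_sqrt {δ κ c : ℝ} (hδ : 0 < δ) :
    ∀ᶠ u in atTop, c + κ * Real.sqrt u ≤ δ * u := by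
  filter_upwards [eventually_ge_atTop (max (max 1 ((2*|κ|/δ)^2)) (2*|c|/δ))] with u hu
  have hu1 : (1:ℝ) ≤ u := le_trans (le_max_of_le_left (le_max_left _ _)) hu
  have hu2 : (2*|κ|/δ)^2 ≤ u := le_trans (le_max_of_le_left (le_max_right _ _)) hu
  have hu3 : 2*|c|/δ ≤ u := le_trans (le_max_right _ _) hu
  have hu0 : 0 ≤ u := by linarith
  have hs1 : 2*|κ|/δ ≤ Real.sqrt u := by
    calc 2*|κ|/δ = Real.sqrt ((2*|κ|/δ)^2) := (Real.sqrt_sq (by positivity)).symm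
      _ ≤ Real.sqrt u := Real.sqrt_le_sqrt hu2
  have hs2 : Real.sqrt u * Real.sqrt u = u := Real.mul_self_sqrt hu0
  have hsn : 0 ≤ Real.sqrt u := Real.sqrt_nonneg u
  have hκ : κ * Real.sqrt u ≤ |κ| * Real.sqrt u :=
    mul_le_mul_of_nonneg_right (le_abs_self κ) hsn
  have hc : c ≤ |c| := le_abs_self c
  have h5 : 2*|κ| ≤ δ * Real.sqrt u := by
    rw [div_le_iff₀ hδ] at hs1
    linarith
  have h6 : 2*|c| ≤ δ * u := by
    rw [div_le_iff₀ hδ] at hu3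
    linarith
  have h7 : (2*|κ|) * Real.sqrt u ≤ (δ * Real.sqrt u) * Real.sqrt u :=
    mul_le_mul_of_nonneg_right h5 hsn
  nlinarith [abs_nonneg κ, abs_nonneg c]

/-- Eventually `n^(-L'') ≤ d n`, with `L'' = (1+L')/2`. -/
lemma ev_C3 {L' q : ℝ} (hq : 0 ≤ q) (hL'0 : 0 ≤ L') (hL'1 : L' < 1) :
    ∀ᶠ n : ℕ in atTop,
      (n:ℝ) ^ (-((1+L')/2) : ℝ)
        ≤ Real.exp (-(Real.sqrt (L'*(2*q + 2*Real.log n + 4*Real.log 4) + 1) + 1 + 1)^2/2)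
            / Real.sqrt (2*π) := by
  have hδ : 0 < (1 - L')/2 := by linarith
  set c₂ : ℝ := L'*(2*q) + L'*(4*Real.log 4) + 1 with hc₂def
  have hc₂0 : 0 ≤ L'*(2*q) + L'*(4*Real.log 4) := by
    have h4 : (0:ℝ) ≤ Real.log 4 := Real.log_nonneg (by norm_num)
    positivity
  have hc₂ : 0 ≤ c₂ := by rw [hc₂def]; linarith
  have hev := ev_linear_sqrt (δ := (1 - L')/2)
    (κ := 2 * Real.sqrt (2*L'))
    (c := c₂/2 + 2 + Real.log (Real.sqrt (2*π)) + 2 * Real.sqrt c₂) hδ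
  have hlog : Tendsto (fun n : ℕ => Real.log n) atTop atTop :=
    Real.tendsto_log_atTop.comp tendsto_natCast_atTop_atTop
  filter_upwards [hlog.eventually hev, eventually_ge_atTop 1] with n hn hn1
  set u := Real.log n with hu
  have hn0 : (0:ℝ) < n := by exact_mod_cast hn1
  have hu0 : 0 ≤ u := Real.log_natCast_nonneg n
  set T : ℝ := L'*(2*q + 2*Real.log n + 4*Real.log 4) + 1 with hT
  have hT0 : 0 ≤ T := by
    rw [hT]
    have : L'*(2*q + 2*Real.log n + 4*Real.log 4) = c₂ - 1 + L' * (2*u) := by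
      rw [hc₂def]; ring
    rw [this]
    have : 0 ≤ L' * (2*u) := by positivity
    linarith
  have hTle : Real.sqrt T ≤ Real.sqrt c₂ + Real.sqrt (2*L') * Real.sqrt u := by
    have hTeq : T = c₂ + (2*L') * u := by rw [hT, hc₂def]; ring
    rw [hTeq]
    calc Real.sqrt (c₂ + (2*L')*u) ≤ Real.sqrt c₂ + Real.sqrt ((2*L')*u) :=
          sqrt_add_le' hc₂ (by positivity)
      _ = Real.sqrt c₂ + Real.sqrt (2*L') * Real.sqrt u := by
          rw [Real.sqrt_mul (by linarith) u]
  -- main inequality: (√T + 2)^2/2 + log √(2π) ≤ ((1+L')/2) * u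
  have hmain : (Real.sqrt T + 2)^2/2 + Real.log (Real.sqrt (2*π)) ≤ ((1+L')/2) * u := by
    have hsq : (Real.sqrt T)^2 = T := Real.sq_sqrt hT0
    have hTu : T = c₂ + (2*L') * u := by rw [hT, hc₂def]; ring
    have hexp : (Real.sqrt T + 2)^2/2 = T/2 + 2 * Real.sqrt T + 2 := by
      nlinarith [hsq]
    rw [hexp]
    have h2T : 2 * Real.sqrt T ≤ 2 * Real.sqrt c₂ + 2 * Real.sqrt (2*L') * Real.sqrt u := by
      nlinarith [hTle]
    have := hn  -- c + κ √u ≤ δ u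
    have hfin : c₂/2 + 2 + Real.log (Real.sqrt (2*π)) + 2*Real.sqrt c₂
        + 2 * Real.sqrt (2*L') * Real.sqrt u ≤ ((1-L')/2) * u := by
      have := hn
      nlinarith [this]
    have hTu2 : T/2 = c₂/2 + L' * u := by rw [hTu]; ring
    rw [hTu2]
    nlinarith [hfin]
  -- convert to the exponential form
  have hrw : (n:ℝ) ^ (-((1+L')/2) : ℝ) = Real.exp (-(((1+L')/2) * u)) := by
    rw [Real.rpow_def_of_pos hn0]
    congr 1
    rw [hu]
    ring
  have hsqrtpi : 0 < Real.sqrt (2*π) := Real.sqrt_pos.2 (by positivity)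
  have h112 : (Real.sqrt T + 1 + 1) = Real.sqrt T + 2 := by ring
  calc (n:ℝ) ^ (-((1+L')/2) : ℝ) = Real.exp (-(((1+L')/2) * u)) := hrw
    _ ≤ Real.exp (-(Real.sqrt T + 2)^2/2 - Real.log (Real.sqrt (2*π))) := by
        apply Real.exp_le_exp.2
        linarith [hmain]
    _ = Real.exp (-(Real.sqrt T + 2)^2/2) / Real.sqrt (2*π) := by
        rw [Real.exp_sub, Real.exp_log hsqrtpi]
    _ = Real.exp (-(Real.sqrt T + 1 + 1)^2/2) / Real.sqrt (2*π) := by rw [h112]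

/-- Eventually `8 log (2n) ≤ n^(1-L'')`. -/
lemma ev_C4 {L'' : ℝ} (hL'' : L'' < 1) :
    ∀ᶠ n : ℕ in atTop, 8 * Real.log (2*(n:ℝ)) ≤ (n:ℝ) ^ ((1:ℝ) - L'') := by
  have hr : 0 < 1 - L'' := by linarith
  have hlo := (isLittleO_log_rpow_atTop hr).def (by norm_num : (0:ℝ) < 1/32)
  have hcomp := tendsto_natCast_atTop_atTop (R := ℝ)
  filter_upwards [hcomp.eventually hlo, eventually_ge_atTop 2] with n hn hn2
  have hn2' : (2:ℝ) ≤ (n:ℝ) := by exact_mod_cast hn2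
  have hn0 : (0:ℝ) < n := by linarith
  have hlogn : 0 ≤ Real.log n := Real.log_nonneg (by linarith)
  have habs : ‖Real.log (n:ℝ)‖ = Real.log n := Real.norm_of_nonneg hlogn
  have hrp0 : (0:ℝ) ≤ (n:ℝ) ^ ((1:ℝ) - L'') := Real.rpow_nonneg (by linarith) _
  have habs2 : ‖(n:ℝ) ^ ((1:ℝ) - L'')‖ = (n:ℝ) ^ ((1:ℝ) - L'') := Real.norm_of_nonneg hrp0
  rw [habs, habs2] at hn
  have hlog2 : Real.log (2*(n:ℝ)) = Real.log 2 + Real.log n := by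
    rw [Real.log_mul (by norm_num) (by linarith)]
  have hl2 : Real.log 2 ≤ Real.log n := Real.log_le_log (by norm_num) hn2'
  rw [hlog2]
  nlinarith [hn]

lemma exp_small {n : ℕ} (hn : 64 ≤ n) : 2 * Real.exp (-(n:ℝ)/2) ≤ 1/(2*(n:ℝ)) := by
  have hn' : (64:ℝ) ≤ (n:ℝ) := by exact_mod_cast hn
  have h1 : (n:ℝ)/4 + 1 ≤ Real.exp ((n:ℝ)/4) := Real.add_one_le_exp _
  have h2 : Real.exp ((n:ℝ)/2) = Real.exp ((n:ℝ)/4) * Real.exp ((n:ℝ)/4) := by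
    rw [← Real.exp_add]; congr 1; ring
  have hkey : 2 * (2*(n:ℝ)) ≤ Real.exp ((n:ℝ)/2) := by nlinarith
  have hpos : 0 < Real.exp ((n:ℝ)/2) := Real.exp_pos _
  have heq : 2 * Real.exp (-(n:ℝ)/2) = 2 / Real.exp ((n:ℝ)/2) := by
    rw [neg_div, Real.exp_neg]
    ring
  rw [heq, div_le_div_iff₀ hpos (by positivity)]
  nlinarith

end Aux5
section Main

open scoped ENNReal

lemma segMean_shift (g : ℕ → ℝ) (m : ℝ) {n : ℕ} (hn : 1 ≤ n) :
    segMean (fun i => m + g i) 1 (n+1) = m + segMean g 1 (n+1) := by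
  have hc : ((n+1:ℕ):ℝ) - ((1:ℕ):ℝ) = (n:ℝ) := by push_cast; ring
  have hn0 : (n:ℝ) ≠ 0 := by
    have : (1:ℝ) ≤ (n:ℝ) := by exact_mod_cast hn
    linarith
  rw [segMean, segMean, hc, Finset.sum_add_distrib, Finset.sum_const, Nat.card_Ico,
    add_div, nsmul_eq_mul]
  congr 1
  have : ((n + 1 - 1 : ℕ) : ℝ) = (n:ℝ) := by push_cast; ring
  rw [this]
  field_simp

set_option maxHeartbeats 2000000 in
theorem penalized_ls_below_minimal_penalty_fails' :
    ∀ L : ℝ, L < 1 → ∀ q : ℝ, 0 < q → ∃ n₀ : ℕ, ∀ n : ℕ, n₀ ≤ n →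
    ∀ (Ω : Type) (_ : MeasurableSpace Ω) (P : Measure Ω), IsProbabilityMeasure P →
    ∀ ε : ℕ → Ω → ℝ, IsStdGaussianNoise P ε →
    ∀ m : ℝ,
    ∀ Shat : Ω → Finset ℕ,
      (∀ ω, Shat ω ⊆ Finset.Icc 2 n ∧
        ∀ S ⊆ Finset.Icc 2 n,
          Cr0 n L q (fun i => m + ε i ω) (Shat ω) ≤ Cr0 n L q (fun i => m + ε i ω) S) →
      ENNReal.ofReal (1 - 1 / (n : ℝ)) ≤ P {ω | 1 ≤ (Shat ω).card} := by
  intro L hL q hq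
  set L' : ℝ := max L 0 with hL'def
  have hL'0 : 0 ≤ L' := le_max_right _ _
  have hL'1 : L' < 1 := max_lt hL (by norm_num)
  have hLle : L ≤ L' := le_max_left _ _
  -- eventual conditions
  have hev := ((Filter.eventually_ge_atTop 64).and ((ev_C3 hq.le hL'0 hL'1).and
    (ev_C4 (L'' := (1+L')/2) (by linarith))))
  obtain ⟨n₀, hn₀⟩ := Filter.eventually_atTop.mp hev
  refine ⟨n₀, ?_⟩
  intro n hn Ω mΩ P hP ε hε m Shat hShat
  obtain ⟨h64, hC3, hC4⟩ := hn₀ n hn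
  obtain ⟨hmeas, hind, hmap⟩ := hε
  have hn1 : 1 ≤ n := by omega
  have hn0 : (0:ℝ) < (n:ℝ) := by exact_mod_cast (by omega : 0 < n)
  -- constants
  set Bn : ℝ := 2*q + 2*Real.log n + 4*Real.log 4 with hBdef
  set Tn : ℝ := L' * Bn + 1 with hTdef
  set an : ℝ := Real.sqrt Tn + 1 with hadef
  set dn : ℝ := Real.exp (-(an+1)^2/2) / Real.sqrt (2*π) with hddef
  have hlogn : 0 ≤ Real.log n := Real.log_nonneg (by exact_mod_cast hn1)
  have hlog4 : (0:ℝ) ≤ Real.log 4 := Real.log_nonneg (by norm_num)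
  have hB0 : 0 ≤ Bn := by rw [hBdef]; positivity
  have hT1 : 1 ≤ Tn := by
    have : 0 ≤ L' * Bn := mul_nonneg hL'0 hB0
    rw [hTdef]; linarith
  have hT0 : (0:ℝ) ≤ Tn := by linarith
  have han0 : 0 ≤ an := by
    have := Real.sqrt_nonneg Tn
    rw [hadef]; linarith
  have hsqrtpi1 : (1:ℝ) ≤ Real.sqrt (2*π) := by
    rw [show (1:ℝ) = Real.sqrt 1 from (Real.sqrt_one).symm]
    apply Real.sqrt_le_sqrt
    nlinarith [Real.pi_gt_three]
  have hd0 : 0 ≤ dn := by rw [hddef]; positivity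
  have hd1 : dn ≤ 1 := by
    rw [hddef]
    rw [div_le_one (by linarith)]
    calc Real.exp (-(an+1)^2/2) ≤ 1 := Real.exp_le_one_iff.2 (by nlinarith)
      _ ≤ Real.sqrt (2*π) := hsqrtpi1
  set J : Finset ℕ := Finset.Icc (n/4+2) (2*(n/4)) with hJdef
  -- the good event
  set A1 : Set Ω := {ω | 1 < |segMean (fun i => ε i ω) 1 (n+1)|} with hA1def
  set A2 : Set Ω := ⋂ j ∈ J, {ω | ε j ω ≤ an} with hA2def
  set G : Set Ω := A1ᶜ ∩ A2ᶜ with hGdef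
  -- G implies a spurious change point
  have hsub : G ⊆ {ω | 1 ≤ (Shat ω).card} := by
    rintro ω ⟨hω1, hω2⟩
    have hmean : |segMean (fun i => ε i ω) 1 (n+1)| ≤ 1 := not_lt.1 hω1
    have hex : ∃ j ∈ J, an < ε j ω := by
      by_contra hcon
      push_neg at hcon
      apply hω2
      rw [hA2def]
      simp only [Set.mem_iInter, Set.mem_setOf_eq]
      intro j hj
      exact not_lt.1 (fun h => absurd h (not_lt.2 (hcon j hj)))
    obtain ⟨j, hjJ, hj⟩ := hex
    rw [hJdef, Finset.mem_Icc] at hjJ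
    have h2j : 2 ≤ j := by omega
    have hjn : j + 1 ≤ n := by omega
    have hleft : (n:ℝ) ≤ 4 * ((j:ℝ) - 1) := by
      have hnat : n ≤ 4 * (j - 1) := by omega
      have : ((4 * (j-1) : ℕ) : ℝ) = 4 * ((j:ℝ) - 1) := by
        push_cast [Nat.cast_sub (by omega : 1 ≤ j)]
        ring
      rw [← this]
      exact_mod_cast hnat
    have hright : (n:ℝ) ≤ 4 * ((n:ℝ) - (j:ℝ)) := by
      have hnat : n ≤ 4 * (n - j) := by omega
      have : ((4 * (n-j) : ℕ) : ℝ) = 4 * ((n:ℝ) - (j:ℝ)) := by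
        push_cast [Nat.cast_sub (by omega : j ≤ n)]
        ring
      rw [← this]
      exact_mod_cast hnat
    set Y : ℕ → ℝ := fun i => m + ε i ω with hYdef
    have hkey : L * pen0 n q ({j, j+1} : Finset ℕ) < (Y j - segMean Y 1 (n+1)) ^ 2 := by
      have hYseg : segMean Y 1 (n+1) = m + segMean (fun i => ε i ω) 1 (n+1) :=
        segMean_shift _ m hn1
      have hdiff : Y j - segMean Y 1 (n+1) = ε j ω - segMean (fun i => ε i ω) 1 (n+1) := by
        rw [hYseg, hYdef]
        ring
      have hEb : segMean (fun i => ε i ω) 1 (n+1) ≤ 1 := le_of_abs_le hmean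
      have hgt : Real.sqrt Tn ≤ Y j - segMean Y 1 (n+1) := by
        rw [hdiff]
        have : an - 1 = Real.sqrt Tn := by rw [hadef]; ring
        linarith
      have hsq : Tn ≤ (Y j - segMean Y 1 (n+1)) ^ 2 := by
        have := Real.sq_sqrt hT0
        nlinarith [Real.sqrt_nonneg Tn]
      have hpenB : L * pen0 n q ({j, j+1} : Finset ℕ) ≤ L' * Bn := by
        have hpen0 : 0 ≤ pen0 n q ({j, j+1} : Finset ℕ) := pen0_pair_nonneg h2j hjn hq.le
        have hpenle : pen0 n q ({j, j+1} : Finset ℕ) ≤ Bn := by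
          rw [hBdef]
          have := pen0_pair_le h2j hjn hleft hright hq.le
          linarith
        rcases le_or_gt 0 L with hL0 | hL0
        · calc L * pen0 n q ({j, j+1} : Finset ℕ) ≤ L * Bn :=
                mul_le_mul_of_nonneg_left hpenle hL0
            _ ≤ L' * Bn := mul_le_mul_of_nonneg_right hLle hB0
        · have h1 : L * pen0 n q ({j, j+1} : Finset ℕ) ≤ 0 :=
            mul_nonpos_of_nonpos_of_nonneg hL0.le hpen0
          have h2 : 0 ≤ L' * Bn := mul_nonneg hL'0 hB0
          linarith
      rw [hTdef] at hsq
      linarith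
    have hcrit := crit_lt h2j hjn L q Y hkey
    simp only [Set.mem_setOf_eq]
    by_contra hcard
    have hempty : Shat ω = ∅ := Finset.card_eq_zero.1 (by omega)
    have hpairsub : ({j, j+1} : Finset ℕ) ⊆ Finset.Icc 2 n := by
      intro x hx
      simp only [Finset.mem_insert, Finset.mem_singleton] at hx
      rw [Finset.mem_Icc]
      omega
    have hmin := (hShat ω).2 ({j, j+1} : Finset ℕ) hpairsub
    rw [hempty] at hmin
    rw [hYdef] at hcrit
    linarith
  -- measurability
  have hmeassum : Measurable (fun ω => segMean (fun i => ε i ω) 1 (n+1)) := by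
    have h1 : Measurable (fun ω => ∑ i ∈ Finset.Ico 1 (n+1), ε i ω) :=
      Finset.measurable_sum _ (fun i _ => hmeas i)
    exact h1.div_const _
  have hA1meas : MeasurableSet A1 := by
    rw [hA1def]
    exact measurableSet_lt measurable_const hmeassum.abs
  have hA2meas : MeasurableSet A2 := by
    rw [hA2def]
    apply MeasurableSet.biInter (Finset.countable_toSet J)
    intro j _
    exact measurableSet_le (hmeas j) measurable_const
  have hGmeas : MeasurableSet G := hA1meas.compl.inter hA2meas.compl
  -- bound P(A1)
  have hA1bound : P A1 ≤ ENNReal.ofReal (2 * Real.exp (-(n:ℝ)/2)) := by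
    have hsub1 : A1 ⊆ {ω | (n:ℝ) ≤ ∑ i ∈ Finset.Icc 1 n, ε i ω}
        ∪ {ω | (n:ℝ) ≤ -∑ i ∈ Finset.Icc 1 n, ε i ω} := by
      intro ω hω
      rw [hA1def] at hω
      simp only [Set.mem_setOf_eq] at hω
      have hIco : Finset.Ico 1 (n+1) = Finset.Icc 1 n := Finset.Ico_add_one_right_eq_Icc 1 n
      have hc : ((n+1:ℕ):ℝ) - ((1:ℕ):ℝ) = (n:ℝ) := by push_cast; ring
      rw [segMean, hIco, hc] at hω
      set X := ∑ i ∈ Finset.Icc 1 n, ε i ω with hX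
      rw [abs_div] at hω
      have habsn : |(n:ℝ)| = (n:ℝ) := abs_of_pos hn0
      rw [habsn, lt_div_iff₀ hn0, one_mul] at hω
      rcases lt_abs.1 hω with h | h
      · left; exact Set.mem_setOf_eq ▸ h.le
      · right; simp only [Set.mem_setOf_eq]; linarith
    calc P A1 ≤ P ({ω | (n:ℝ) ≤ ∑ i ∈ Finset.Icc 1 n, ε i ω}
        ∪ {ω | (n:ℝ) ≤ -∑ i ∈ Finset.Icc 1 n, ε i ω}) := measure_mono hsub1
      _ ≤ P {ω | (n:ℝ) ≤ ∑ i ∈ Finset.Icc 1 n, ε i ω}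
          + P {ω | (n:ℝ) ≤ -∑ i ∈ Finset.Icc 1 n, ε i ω} := measure_union_le _ _
      _ ≤ ENNReal.ofReal (Real.exp (-(n:ℝ)/2)) + ENNReal.ofReal (Real.exp (-(n:ℝ)/2)) :=
          add_le_add (chernoff_pos hmeas hind hmap n) (chernoff_neg hmeas hind hmap n)
      _ = ENNReal.ofReal (2 * Real.exp (-(n:ℝ)/2)) := by
          rw [← ENNReal.ofReal_add (Real.exp_nonneg _) (Real.exp_nonneg _)]
          congr 1
          ring
  -- bound P(A2)
  have hA2bound : P A2 ≤ ENNReal.ofReal (Real.exp (-(dn * J.card))) := by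
    rw [hA2def]
    exact tail_prod hmeas hind hmap J han0 (le_of_eq hddef) hd0 hd1
  -- numeric bounds
  have hnum1 : 2 * Real.exp (-(n:ℝ)/2) ≤ 1/(2*(n:ℝ)) := exp_small h64
  have hnum2 : Real.exp (-(dn * J.card)) ≤ 1/(2*(n:ℝ)) := by
    have hKcard : (J.card : ℝ) ≥ (n:ℝ)/8 := by
      have hnat : n ≤ 8 * J.card := by
        rw [hJdef, Nat.card_Icc]
        omega
      have : (n:ℝ) ≤ 8 * (J.card : ℝ) := by exact_mod_cast hnat
      linarith
    have hd3 : (n:ℝ) ^ (-((1+L')/2) : ℝ) ≤ dn := by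
      rw [hddef, hadef, hTdef, hBdef]
      exact hC3
    have hrp0 : (0:ℝ) ≤ (n:ℝ) ^ (-((1+L')/2) : ℝ) := Real.rpow_nonneg hn0.le _
    have hprod : (n:ℝ) ^ (-((1+L')/2) : ℝ) * ((n:ℝ)/8) ≤ dn * J.card := by
      apply mul_le_mul hd3 hKcard (by positivity) hd0
    have hrpeq : (n:ℝ) ^ (-((1+L')/2) : ℝ) * ((n:ℝ)/8) = (n:ℝ) ^ ((1:ℝ) - (1+L')/2) / 8 := by
      rw [show ((1:ℝ) - (1+L')/2) = (-((1+L')/2)) + 1 by ring, Real.rpow_add hn0,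
        Real.rpow_one]
      ring
    have hlogle : Real.log (2*(n:ℝ)) ≤ dn * J.card := by
      have h4 := hC4
      rw [hrpeq] at hprod
      linarith
    calc Real.exp (-(dn * J.card)) ≤ Real.exp (-(Real.log (2*(n:ℝ)))) :=
          Real.exp_le_exp.2 (by linarith)
      _ = 1/(2*(n:ℝ)) := by
          rw [Real.exp_neg, Real.exp_log (by positivity)]
          ring
  -- assemble
  have hGc : Gᶜ = A1 ∪ A2 := by
    rw [hGdef, Set.compl_inter, compl_compl, compl_compl]
  have hGcbound : P Gᶜ ≤ ENNReal.ofReal (1/(n:ℝ)) := by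
    rw [hGc]
    calc P (A1 ∪ A2) ≤ P A1 + P A2 := measure_union_le _ _
      _ ≤ ENNReal.ofReal (1/(2*(n:ℝ))) + ENNReal.ofReal (1/(2*(n:ℝ))) :=
          add_le_add (hA1bound.trans (ENNReal.ofReal_le_ofReal hnum1))
            (hA2bound.trans (ENNReal.ofReal_le_ofReal hnum2))
      _ = ENNReal.ofReal (1/(n:ℝ)) := by
          rw [← ENNReal.ofReal_add (by positivity) (by positivity)]
          congr 1
          have hne : (n:ℝ) ≠ 0 := ne_of_gt hn0
          rw [← add_div, div_eq_div_iff (by positivity) hne]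
          ring
  have hPG : ENNReal.ofReal (1 - 1/(n:ℝ)) ≤ P G := by
    have hGeq : P G = 1 - P Gᶜ := by
      have := prob_compl_eq_one_sub (μ := P) hGmeas.compl
      rw [compl_compl] at this
      exact this
    rw [hGeq]
    have h1 : ENNReal.ofReal (1 - 1/(n:ℝ)) = 1 - ENNReal.ofReal (1/(n:ℝ)) := by
      rw [ENNReal.ofReal_sub _ (by positivity), ENNReal.ofReal_one]
    rw [h1]
    exact tsub_le_tsub_left hGcbound 1
  exact hPG.trans (measure_mono hsub)

end Main

/-- Proposition 9 of the paper: with a penalty constant `L < 1`, the penalized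
least-squares estimator selects at least one spurious change-point with probability at least
`1 - 1/n`, for any constant signal. -/
theorem penalized_ls_below_minimal_penalty_fails :
    ∀ L : ℝ, L < 1 → ∀ q : ℝ, 0 < q → ∃ n₀ : ℕ, ∀ n : ℕ, n₀ ≤ n →
    ∀ (Ω : Type) (_ : MeasurableSpace Ω) (P : Measure Ω), IsProbabilityMeasure P →
    ∀ ε : ℕ → Ω → ℝ, IsStdGaussianNoise P ε →
    ∀ m : ℝ,
    ∀ Shat : Ω → Finset ℕ,
      (∀ ω, Shat ω ⊆ Finset.Icc 2 n ∧
        ∀ S ⊆ Finset.Icc 2 n,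
          Cr0 n L q (fun i => m + ε i ω) (Shat ω) ≤ Cr0 n L q (fun i => m + ε i ω) S) →
      ENNReal.ofReal (1 - 1 / (n : ℝ)) ≤ P {ω | 1 ≤ (Shat ω).card} :=
  penalized_ls_below_minimal_penalty_fails'
end

section
/- There exist universal constants κ and c such that the following holds for any α ∈ (0,1). On the event B_{1−α}, which has probability at least 1 − α, and for any change-point vector τ (possibly data-dependent): (a) the pruned vector P(τ) satisfies (NoSp); (b) any (κ, ζ²_{1−α})-high-energy change-point τ*_k that is reasonably well localized by τ also satisfies d_{H,1}( P(τ), τ*_k ) ≤ max( 2 d_{H,1}(τ, τ*_k), c ( log(n Δ_k²) + ζ²_{1−α} ) / Δ_k² ). -/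
open MeasureTheory ProbabilityTheory Finset Real

open scoped ENNReal NNReal

/-- The piecewise constant signal with change-points `τ 1 < … < τ K` and levels
`μ 1, …, μ (K+1)`:  `θ i = μ k` for `τ (k-1) ≤ i < τ k`. -/
noncomputable def cpSignal (K : ℕ) (τ : ℕ → ℕ) (μ : ℕ → ℝ) : ℕ → ℝ :=
  fun i => μ (((Finset.Icc 1 K).filter (fun k => τ k ≤ i)).card + 1)

/-- `ψ_q²` evaluated at the triad `(a, b, c)`:
`2 log (n (c - a) / ((c - b)(b - a))) + q`. -/
noncomputable def psiSq (n : ℕ) (q : ℝ) (a b c : ℕ) : ℝ :=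
  2 * Real.log ((n : ℝ) * ((c : ℝ) - (a : ℝ)) / (((c : ℝ) - (b : ℝ)) * ((b : ℝ) - (a : ℝ)))) + q

/-- `d_{H,1}(S, t) = min_{s ∈ S} |s - t|` (with value `∞` for `S = ∅`). -/
noncomputable def dH1 (S : Finset ℕ) (t : ℕ) : ℝ≥0∞ :=
  ⨅ s ∈ S, ((((s : ℤ) - (t : ℤ)).natAbs : ℕ) : ℝ≥0∞)

/-- Property (NoSp): no spurious change-point is detected by `S`. -/
def NoSp (n K : ℕ) (τ : ℕ → ℕ) (S : Finset ℕ) : Prop :=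
  (∀ k, 2 ≤ k → k ≤ K - 1 →
    (S.filter (fun s : ℕ =>
      ((τ (k - 1) : ℝ) + (τ k : ℝ)) / 2 < (s : ℝ) ∧
      (s : ℝ) ≤ ((τ k : ℝ) + (τ (k + 1) : ℝ)) / 2)).card ≤ 1) ∧
  (S.filter (fun s : ℕ => 2 ≤ s ∧ (s : ℝ) ≤ ((τ 1 : ℝ) + (τ 2 : ℝ)) / 2)).card ≤ 1 ∧
  (S.filter (fun s : ℕ =>
      ((τ (K - 1) : ℝ) + (τ K : ℝ)) / 2 < (s : ℝ) ∧ s ≤ n)).card ≤ 1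

/-- The change-point data: `τ 0 = 1 < τ 1 < … < τ K < τ (K+1) = n+1` and consecutive levels
`μ k ≠ μ (k+1)`. -/
def IsCPData (n K : ℕ) (τ : ℕ → ℕ) (μ : ℕ → ℝ) : Prop :=
  τ 0 = 1 ∧ τ (K + 1) = n + 1 ∧ (∀ k, k ≤ K → τ k < τ (k + 1)) ∧
  (∀ k, 1 ≤ k → k ≤ K → μ k ≠ μ (k + 1))

/-- The threshold `sqrt(2 log(n (t₃-t₁)/((t₃-t₂)(t₂-t₁))))`. -/
noncomputable def thrB (n t₁ t₂ t₃ : ℕ) : ℝ :=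
  Real.sqrt (2 * Real.log ((n : ℝ) * ((t₃ : ℝ) - t₁) / (((t₃ : ℝ) - t₂) * ((t₂ : ℝ) - t₁))))

/-- The event `ℬ_{1-α}` on which `|N(t)| ≤ thr(t) + ζ` for every triad `t`. -/
def eventB (n : ℕ) (ζ : ℝ) {Ω : Type} (ε : ℕ → Ω → ℝ) : Set Ω :=
  {ω | ∀ t₁ t₂ t₃ : ℕ, 1 ≤ t₁ → t₁ < t₂ → t₂ < t₃ → t₃ ≤ n + 1 →
    |cusum (fun i => ε i ω) t₁ t₂ t₃| ≤ thrB n t₁ t₂ t₃ + ζ}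

/-- Left endpoint `(τ - r) ∨ 1` of the symmetric window of radius `r` around `τ`. -/
def tlo (τ r : ℕ) : ℕ := max (τ - r) 1

/-- Right endpoint `(τ + r) ∧ (n+1)` of the symmetric window of radius `r` around `τ`. -/
def thi (n τ r : ℕ) : ℕ := min (τ + r) (n + 1)

/-- The smallest radius `r ≥ 1` at which the CUSUM centered at `τ` exceeds the threshold
(`⊤` if there is none). -/
noncomputable def rhat (n : ℕ) (ζ : ℝ) (Y : ℕ → ℝ) (τ : ℕ) : ℕ∞ :=
  ⨅ r ∈ {r : ℕ | 1 ≤ r ∧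
      thrB n (tlo τ r) τ (thi n τ r) + ζ < |cusum Y (tlo τ r) τ (thi n τ r)|}, (r : ℕ∞)

/-- The confidence interval `I_τ = [t₁^{(τ, r̂_τ)} + 1, t₃^{(τ, r̂_τ)} - 1]`
(empty if `r̂_τ = ∞`). -/
noncomputable def Itau (n : ℕ) (ζ : ℝ) (Y : ℕ → ℝ) (τ : ℕ) : Finset ℕ :=
  if rhat n ζ Y τ = ⊤ then ∅
  else Finset.Icc (tlo τ (rhat n ζ Y τ).toNat + 1) (thi n τ (rhat n ζ Y τ).toNat - 1)

/-- The pruning procedure applied to a list of candidate change-points, ordered by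
nonincreasing values of `r̂`:  a point is removed if its radius is infinite or if its
confidence interval intersects the confidence interval of a later point; the last point
is always kept. -/
noncomputable def pruneList (rh : ℕ → ℕ∞) (I : ℕ → Finset ℕ) : List ℕ → Finset ℕ
  | [] => ∅
  | a :: rest =>
    if rest = [] then {a}
    else if rh a = ⊤ ∨ ∃ b ∈ rest, ((I a) ∩ (I b)).Nonempty then pruneList rh I rest
    else insert a (pruneList rh I rest)

namespace PSaux

/-- `|a - b| ≤ m` for naturals, omega-friendly. -/
def AbsLe (a b m : ℕ) : Prop := a ≤ b + m ∧ b ≤ a + m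

section tau
variable {n K : ℕ} {τ : ℕ → ℕ} {μ : ℕ → ℝ}

lemma tau_mono (hlt : ∀ k, k ≤ K → τ k < τ (k + 1)) :
    ∀ i j, i ≤ j → j ≤ K + 1 → τ i ≤ τ j := by
  intro i j hij
  induction j with
  | zero =>
    intro _
    have : i = 0 := by omega
    simp [this]
  | succ j ih =>
    intro hj
    rcases Nat.lt_or_ge i (j + 1) with h | h
    · have h1 : τ i ≤ τ j := ih (by omega) (by omega)
      have h2 : τ j < τ (j + 1) := hlt j (by omega)
      omega
    · have : i = j + 1 := by omega
      simp [this]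

lemma cpSignal_eq (hlt : ∀ k, k ≤ K → τ k < τ (k + 1)) {j : ℕ} (hjK : j ≤ K) {i : ℕ}
    (h1 : τ j ≤ i) (h2 : i < τ (j + 1)) : cpSignal K τ μ i = μ (j + 1) := by
  unfold cpSignal
  have hset : ((Finset.Icc 1 K).filter (fun k => τ k ≤ i)) = Finset.Icc 1 j := by
    ext k
    simp only [Finset.mem_filter, Finset.mem_Icc]
    constructor
    · rintro ⟨⟨h1k, hkK⟩, hki⟩
      refine ⟨h1k, ?_⟩
      by_contra hkj
      push_neg at hkj
      have : τ (j + 1) ≤ τ k := tau_mono hlt (j + 1) k (by omega) (by omega)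
      omega
    · rintro ⟨h1k, hkj⟩
      exact ⟨⟨h1k, hkj.trans hjK⟩, le_trans (tau_mono hlt k j hkj (by omega)) h1⟩
  rw [hset, Nat.card_Icc]
  norm_num

lemma sum_cpSignal_const (hlt : ∀ k, k ≤ K → τ k < τ (k + 1)) {j : ℕ} (hjK : j ≤ K)
    {u v : ℕ} (hu : τ j ≤ u) (hv : v ≤ τ (j + 1)) (huv : u ≤ v) :
    ∑ i ∈ Finset.Ico u v, cpSignal K τ μ i = ((v : ℝ) - u) * μ (j + 1) := by
  have hval : ∀ i ∈ Finset.Ico u v, cpSignal K τ μ i = μ (j + 1) := by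
    intro i hi
    rw [Finset.mem_Ico] at hi
    exact cpSignal_eq hlt hjK (le_trans hu hi.1) (lt_of_lt_of_le hi.2 hv)
  rw [Finset.sum_congr rfl hval, Finset.sum_const, Nat.card_Ico, nsmul_eq_mul,
    Nat.cast_sub huv]

end tau

end PSaux
namespace PSaux

lemma cusum_add (f g : ℕ → ℝ) (t1 t2 t3 : ℕ) :
    cusum (fun i => f i + g i) t1 t2 t3 = cusum f t1 t2 t3 + cusum g t1 t2 t3 := by
  unfold cusum segMean
  rw [Finset.sum_add_distrib, Finset.sum_add_distrib]
  ring

lemma segMean_const {Y : ℕ → ℝ} {a b : ℕ} {c : ℝ} (h : ∀ i ∈ Finset.Ico a b, Y i = c)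
    (hab : a < b) : segMean Y a b = c := by
  unfold segMean
  rw [Finset.sum_congr rfl h, Finset.sum_const, Nat.card_Ico, nsmul_eq_mul,
    Nat.cast_sub hab.le]
  have hne : (b : ℝ) - a ≠ 0 := by
    have : (a : ℝ) < b := by exact_mod_cast hab
    linarith
  field_simp

/-- cusum of a signal constant on the window is zero. -/
lemma cusum_const_zero {Y : ℕ → ℝ} {t1 t2 t3 : ℕ} (h12 : t1 < t2) (h23 : t2 < t3)
    (h : ∀ i ∈ Finset.Ico t1 t3, Y i = Y t1) : cusum Y t1 t2 t3 = 0 := by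
  have e1 : segMean Y t1 t2 = Y t1 :=
    segMean_const (fun i hi => h i (by rw [Finset.mem_Ico] at hi ⊢; omega)) h12
  have e2 : segMean Y t2 t3 = Y t1 :=
    segMean_const (fun i hi => h i (by rw [Finset.mem_Ico] at hi ⊢; omega)) h23
  unfold cusum
  rw [e1, e2]
  ring

end PSaux
namespace PSaux

variable {n K : ℕ} {τ : ℕ → ℕ} {μ : ℕ → ℝ}

/-- cusum of the signal over a window containing the single change-point `τ k`,
when `τ k` is to the right of the center. -/
lemma cusum_cp_right (hlt : ∀ k, k ≤ K → τ k < τ (k + 1)) {k t1 t2 t3 : ℕ}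
    (hk1 : 1 ≤ k) (hkK : k ≤ K) (ht1 : τ (k - 1) ≤ t1) (h12 : t1 < t2)
    (h2k : t2 ≤ τ k) (hk3 : τ k ≤ t3) (h23 : t2 < t3) (ht3 : t3 ≤ τ (k + 1)) :
    cusum (cpSignal K τ μ) t1 t2 t3 =
      (μ (k + 1) - μ k) * (((t3 : ℝ) - τ k) / ((t3 : ℝ) - t2)) *
        Real.sqrt ((((t2 : ℝ) - t1) * ((t3 : ℝ) - t2)) / ((t3 : ℝ) - t1)) := by
  have hk : k - 1 + 1 = k := by omega
  have hjK : k - 1 ≤ K := by omega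
  have hs1 : ∑ i ∈ Finset.Ico t1 t2, cpSignal K τ μ i = ((t2 : ℝ) - t1) * μ k := by
    rw [sum_cpSignal_const hlt hjK ht1 (by rw [hk]; exact h2k) h12.le, hk]
  have hs2 : ∑ i ∈ Finset.Ico t2 (τ k), cpSignal K τ μ i = ((τ k : ℝ) - t2) * μ k := by
    rw [sum_cpSignal_const hlt hjK (le_trans ht1 h12.le) (by rw [hk]) h2k, hk]
  have hs3 : ∑ i ∈ Finset.Ico (τ k) t3, cpSignal K τ μ i = ((t3 : ℝ) - τ k) * μ (k + 1) :=
    sum_cpSignal_const hlt hkK le_rfl ht3 hk3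
  have e1 : segMean (cpSignal K τ μ) t1 t2 = μ k := by
    unfold segMean
    rw [hs1]
    have h' : (t1 : ℝ) < t2 := by exact_mod_cast h12
    exact mul_div_cancel_left₀ _ (by linarith)
  have e2 : segMean (cpSignal K τ μ) t2 t3 =
      (((τ k : ℝ) - t2) * μ k + ((t3 : ℝ) - τ k) * μ (k + 1)) / ((t3 : ℝ) - t2) := by
    unfold segMean
    rw [← Finset.sum_Ico_consecutive _ h2k hk3, hs2, hs3]
  unfold cusum
  rw [e1, e2]
  have h32 : (t2 : ℝ) < t3 := by exact_mod_cast h23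
  have hne : (t3 : ℝ) - t2 ≠ 0 := by linarith
  have key : (((τ k : ℝ) - t2) * μ k + ((t3 : ℝ) - τ k) * μ (k + 1)) / ((t3 : ℝ) - t2) - μ k
      = (μ (k + 1) - μ k) * (((t3 : ℝ) - τ k) / ((t3 : ℝ) - t2)) := by
    field_simp
    ring
  rw [key]

/-- cusum of the signal over a window containing the single change-point `τ k`,
when `τ k` is to the left of the center. -/
lemma cusum_cp_left (hlt : ∀ k, k ≤ K → τ k < τ (k + 1)) {k t1 t2 t3 : ℕ}
    (hk1 : 1 ≤ k) (hkK : k ≤ K) (ht1 : τ (k - 1) ≤ t1) (h1k : t1 ≤ τ k)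
    (hk2 : τ k ≤ t2) (h12 : t1 < t2) (h23 : t2 < t3) (ht3 : t3 ≤ τ (k + 1)) :
    cusum (cpSignal K τ μ) t1 t2 t3 =
      (μ (k + 1) - μ k) * (((τ k : ℝ) - t1) / ((t2 : ℝ) - t1)) *
        Real.sqrt ((((t2 : ℝ) - t1) * ((t3 : ℝ) - t2)) / ((t3 : ℝ) - t1)) := by
  have hk : k - 1 + 1 = k := by omega
  have hjK : k - 1 ≤ K := by omega
  have hs1 : ∑ i ∈ Finset.Ico t1 (τ k), cpSignal K τ μ i = ((τ k : ℝ) - t1) * μ k := by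
    rw [sum_cpSignal_const hlt hjK ht1 (by rw [hk]) h1k, hk]
  have hs2 : ∑ i ∈ Finset.Ico (τ k) t2, cpSignal K τ μ i = ((t2 : ℝ) - τ k) * μ (k + 1) :=
    sum_cpSignal_const hlt hkK le_rfl (le_trans h23.le ht3) hk2
  have hs3 : ∑ i ∈ Finset.Ico t2 t3, cpSignal K τ μ i = ((t3 : ℝ) - t2) * μ (k + 1) :=
    sum_cpSignal_const hlt hkK hk2 ht3 h23.le
  have e1 : segMean (cpSignal K τ μ) t1 t2 =
      (((τ k : ℝ) - t1) * μ k + ((t2 : ℝ) - τ k) * μ (k + 1)) / ((t2 : ℝ) - t1) := by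
    unfold segMean
    rw [← Finset.sum_Ico_consecutive _ h1k hk2, hs1, hs2]
  have e2 : segMean (cpSignal K τ μ) t2 t3 = μ (k + 1) := by
    unfold segMean
    rw [hs3]
    have h' : (t2 : ℝ) < t3 := by exact_mod_cast h23
    exact mul_div_cancel_left₀ _ (by linarith)
  unfold cusum
  rw [e1, e2]
  have h21 : (t1 : ℝ) < t2 := by exact_mod_cast h12
  have hne : (t2 : ℝ) - t1 ≠ 0 := by linarith
  have key : μ (k + 1) - (((τ k : ℝ) - t1) * μ k + ((t2 : ℝ) - τ k) * μ (k + 1)) / ((t2 : ℝ) - t1)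
      = (μ (k + 1) - μ k) * (((τ k : ℝ) - t1) / ((t2 : ℝ) - t1)) := by
    field_simp
    ring
  rw [key]

end PSaux
namespace PSaux

/-- The detection set for `rhat`. -/
def detSet (n : ℕ) (ζ : ℝ) (Y : ℕ → ℝ) (τ : ℕ) : Set ℕ :=
  {r : ℕ | 1 ≤ r ∧
      thrB n (tlo τ r) τ (thi n τ r) + ζ < |cusum Y (tlo τ r) τ (thi n τ r)|}

lemma rhat_eq_iInf (n : ℕ) (ζ : ℝ) (Y : ℕ → ℝ) (τ : ℕ) :
    rhat n ζ Y τ = ⨅ r ∈ detSet n ζ Y τ, (r : ℕ∞) := rfl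

lemma rhat_le {n : ℕ} {ζ : ℝ} {Y : ℕ → ℝ} {τ r : ℕ} (hr : r ∈ detSet n ζ Y τ) :
    rhat n ζ Y τ ≤ (r : ℕ∞) := by
  rw [rhat_eq_iInf]
  exact iInf₂_le r hr

lemma rhat_spec {n : ℕ} {ζ : ℝ} {Y : ℕ → ℝ} {τ : ℕ} (h : rhat n ζ Y τ ≠ ⊤) :
    (rhat n ζ Y τ).toNat ∈ detSet n ζ Y τ ∧
      rhat n ζ Y τ = ((rhat n ζ Y τ).toNat : ℕ∞) := by
  have hS : (detSet n ζ Y τ).Nonempty := by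
    by_contra h'
    rw [Set.not_nonempty_iff_eq_empty] at h'
    apply h
    rw [rhat_eq_iInf, h']
    simp
  have he : rhat n ζ Y τ = ((sInf (detSet n ζ Y τ) : ℕ) : ℕ∞) := by
    rw [rhat_eq_iInf]
    refine le_antisymm (iInf₂_le _ (Nat.sInf_mem hS)) (le_iInf₂ fun r hr => ?_)
    exact_mod_cast Nat.sInf_le hr
  have ht : (rhat n ζ Y τ).toNat = sInf (detSet n ζ Y τ) := by
    rw [he]; simp
  rw [ht]
  exact ⟨Nat.sInf_mem hS, by rw [he]⟩

lemma Itau_of_ne_top {n : ℕ} {ζ : ℝ} {Y : ℕ → ℝ} {τ : ℕ} (h : rhat n ζ Y τ ≠ ⊤) :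
    Itau n ζ Y τ =
      Finset.Icc (tlo τ (rhat n ζ Y τ).toNat + 1) (thi n τ (rhat n ζ Y τ).toNat - 1) := by
  rw [Itau, if_neg h]

lemma rhat_ne_top_of_Itau {n : ℕ} {ζ : ℝ} {Y : ℕ → ℝ} {τ : ℕ}
    (h : (Itau n ζ Y τ).Nonempty) : rhat n ζ Y τ ≠ ⊤ := by
  intro htop
  rw [Itau, if_pos htop] at h
  exact Finset.not_nonempty_empty h

section prune
variable {rh : ℕ → ℕ∞} {I : ℕ → Finset ℕ}

lemma pruneList_subset : ∀ l : List ℕ, pruneList rh I l ⊆ l.toFinset := by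
  intro l
  induction l with
  | nil => simp [pruneList]
  | cons x rest ih =>
    rw [pruneList]
    by_cases h0 : rest = []
    · subst h0; simp
    rw [if_neg h0]
    by_cases h1 : rh x = ⊤ ∨ ∃ b ∈ rest, ((I x) ∩ (I b)).Nonempty
    · rw [if_pos h1]
      intro a ha
      simp only [List.toFinset_cons, Finset.mem_insert]
      exact Or.inr (by simpa using ih ha)
    · rw [if_neg h1]
      intro a ha
      simp only [List.toFinset_cons, Finset.mem_insert]
      rcases Finset.mem_insert.mp ha with h | h
      · exact Or.inl h
      · exact Or.inr (by simpa using ih h)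

/-- kept points have pairwise disjoint confidence intervals. -/
lemma pruneList_disjoint : ∀ l : List ℕ, ∀ a ∈ pruneList rh I l, ∀ b ∈ pruneList rh I l,
    a ≠ b → I a ∩ I b = ∅ := by
  intro l
  induction l with
  | nil => simp [pruneList]
  | cons x rest ih =>
    intro a ha b hb hab
    rw [pruneList] at ha hb
    by_cases h0 : rest = []
    · rw [if_pos h0] at ha hb
      simp only [Finset.mem_singleton] at ha hb
      exact absurd (ha.trans hb.symm) hab
    rw [if_neg h0] at ha hb
    by_cases h1 : rh x = ⊤ ∨ ∃ b ∈ rest, ((I x) ∩ (I b)).Nonempty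
    · rw [if_pos h1] at ha hb
      exact ih a ha b hb hab
    · rw [if_neg h1] at ha hb
      push_neg at h1
      obtain ⟨-, h2⟩ := h1
      rcases Finset.mem_insert.mp ha with rfl | ha' <;>
        rcases Finset.mem_insert.mp hb with rfl | hb'
      · exact absurd rfl hab
      · have hbrest : b ∈ rest := by simpa using pruneList_subset rest hb'
        rw [← Finset.not_nonempty_iff_eq_empty]
        exact Finset.not_nonempty_iff_eq_empty.mpr (h2 b hbrest)
      · have harest : a ∈ rest := by simpa using pruneList_subset rest ha'
        rw [Finset.inter_comm, ← Finset.not_nonempty_iff_eq_empty]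
        exact Finset.not_nonempty_iff_eq_empty.mpr (h2 a harest)
      · exact ih a ha' b hb' hab

/-- if a kept point has infinite radius, it is the only kept point. -/
lemma pruneList_top_singleton : ∀ l : List ℕ, l.Pairwise (fun a b => rh b ≤ rh a) →
    ∀ a ∈ pruneList rh I l, rh a = ⊤ → pruneList rh I l = {a} := by
  intro l
  induction l with
  | nil => simp [pruneList]
  | cons x rest ih =>
    intro hp a ha htop
    rw [pruneList] at ha ⊢
    by_cases h0 : rest = []
    · rw [if_pos h0] at ha ⊢
      simp only [Finset.mem_singleton] at ha
      rw [ha]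
    rw [if_neg h0] at ha ⊢
    rw [List.pairwise_cons] at hp
    by_cases h1 : rh x = ⊤ ∨ ∃ b ∈ rest, ((I x) ∩ (I b)).Nonempty
    · rw [if_pos h1] at ha ⊢
      exact ih hp.2 a ha htop
    · rw [if_neg h1] at ha ⊢
      push_neg at h1
      rcases Finset.mem_insert.mp ha with rfl | ha'
      · exact absurd htop h1.1
      · have harest : a ∈ rest := by simpa using pruneList_subset rest ha'
        have : rh a ≤ rh x := hp.1 a harest
        rw [htop] at this
        exact absurd (top_le_iff.mp this) h1.1

/-- the pruned set of a nonempty list is nonempty. -/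
lemma pruneList_nonempty : ∀ l : List ℕ, l ≠ [] → (pruneList rh I l).Nonempty := by
  intro l
  induction l with
  | nil => intro h; exact absurd rfl h
  | cons x rest ih =>
    intro _
    rw [pruneList]
    by_cases h0 : rest = []
    · rw [if_pos h0]; exact ⟨x, Finset.mem_singleton_self x⟩
    rw [if_neg h0]
    by_cases h1 : rh x = ⊤ ∨ ∃ b ∈ rest, ((I x) ∩ (I b)).Nonempty
    · rw [if_pos h1]; exact ih h0
    · rw [if_neg h1]
      exact ⟨x, Finset.mem_insert_self x _⟩

/-- chain lemma: a good point propagates to a kept good point. -/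
lemma pruneList_chain (Q : ℕ → Prop) (hQtop : ∀ x, Q x → rh x ≠ ⊤) :
    ∀ l : List ℕ, l.Pairwise (fun a b => rh b ≤ rh a) →
    (∀ x ∈ l, ∀ y ∈ l, Q x → rh y ≤ rh x → ((I x) ∩ (I y)).Nonempty → Q y) →
    ∀ a ∈ l, Q a → ∃ b ∈ pruneList rh I l, Q b := by
  intro l
  induction l with
  | nil => intro _ _ a ha; exact absurd ha List.not_mem_nil
  | cons x rest ih =>
    intro hp hstep a ha hQa
    rw [List.pairwise_cons] at hp
    rw [pruneList]
    by_cases h0 : rest = []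
    · rw [if_pos h0]
      subst h0
      rcases List.mem_singleton.mp ha with rfl
      exact ⟨a, Finset.mem_singleton_self a, hQa⟩
    rw [if_neg h0]
    have hstep' : ∀ x' ∈ rest, ∀ y ∈ rest, Q x' → rh y ≤ rh x' →
        ((I x') ∩ (I y)).Nonempty → Q y := fun x' hx' y hy =>
      hstep x' (List.mem_cons_of_mem _ hx') y (List.mem_cons_of_mem _ hy)
    by_cases h1 : rh x = ⊤ ∨ ∃ b ∈ rest, ((I x) ∩ (I b)).Nonempty
    · rw [if_pos h1]
      rcases List.mem_cons.mp ha with rfl | ha'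
      · -- a = x is removed; follow the chain
        rcases h1 with htop | ⟨y, hy, hxy⟩
        · exact absurd htop (hQtop a hQa)
        · have hQy : Q y := hstep a List.mem_cons_self y
            (List.mem_cons_of_mem _ hy) hQa (hp.1 y hy) hxy
          exact ih hp.2 hstep' y hy hQy
      · exact ih hp.2 hstep' a ha' hQa
    · rw [if_neg h1]
      rcases List.mem_cons.mp ha with rfl | ha'
      · exact ⟨a, Finset.mem_insert_self a _, hQa⟩
      · obtain ⟨b, hb, hQb⟩ := ih hp.2 hstep' a ha' hQa
        exact ⟨b, Finset.mem_insert_of_mem hb, hQb⟩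

end prune

section dH1
variable {S : Finset ℕ} {t : ℕ}

lemma dH1_le {b : ℕ} (hb : b ∈ S) : dH1 S t ≤ ((((b : ℤ) - t).natAbs : ℕ) : ℝ≥0∞) := by
  rw [dH1]
  exact iInf₂_le b hb

lemma dH1_empty : dH1 (∅ : Finset ℕ) t = ⊤ := by simp [dH1]

lemma dH1_eq_min (h : S.Nonempty) : ∃ a ∈ S, dH1 S t = ((((a : ℤ) - t).natAbs : ℕ) : ℝ≥0∞) ∧
    ∀ s ∈ S, ((a : ℤ) - t).natAbs ≤ ((s : ℤ) - t).natAbs := by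
  obtain ⟨a, ha, hmin⟩ := S.exists_min_image (fun s => ((s : ℤ) - t).natAbs) h
  refine ⟨a, ha, le_antisymm (dH1_le ha) ?_, hmin⟩
  rw [dH1]
  refine le_iInf₂ fun s hs => ?_
  exact_mod_cast hmin s hs

end dH1

end PSaux
namespace PSaux

section near
variable {n K : ℕ} {τ : ℕ → ℕ} {μ : ℕ → ℝ}

lemma tau_bounds (h0 : τ 0 = 1) (hK1 : τ (K + 1) = n + 1)
    (hlt : ∀ k, k ≤ K → τ k < τ (k + 1)) {k : ℕ} (hk1 : 1 ≤ k) (hkK : k ≤ K) :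
    2 ≤ τ k ∧ τ k ≤ n := by
  have h1 : τ 0 < τ 1 := hlt 0 (by omega)
  have h2 : τ 1 ≤ τ k := tau_mono hlt 1 k hk1 (by omega)
  have h3 : τ k ≤ τ K := tau_mono hlt k K hkK (by omega)
  have h4 : τ K < τ (K + 1) := hlt K le_rfl
  omega

lemma tau_eq_of_close (hlt : ∀ k, k ≤ K → τ k < τ (k + 1)) {j k m : ℕ}
    (hj1 : 1 ≤ j) (hjK : j ≤ K) (hk1 : 1 ≤ k) (hkK : k ≤ K)
    (h : AbsLe (τ j) (τ k) m)
    (hL : τ (k - 1) + m < τ k) (hR : τ k + m < τ (k + 1)) : j = k := by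
  rcases lt_trichotomy j k with hlt' | he | hgt
  · have h1 : τ j ≤ τ (k - 1) := tau_mono hlt j (k - 1) (by omega) (by omega)
    rcases h with ⟨ha, hb⟩
    omega
  · exact he
  · have h1 : τ (k + 1) ≤ τ j := tau_mono hlt (k + 1) j (by omega) (by omega)
    rcases h with ⟨ha, hb⟩
    omega

/-- if `s` is in the NoSp-window of `τ k`, then `τ k` is (one of) the nearest
change-points to `s`. -/
lemma near (hlt : ∀ k, k ≤ K → τ k < τ (k + 1)) {k j s m : ℕ}
    (hk1 : 1 ≤ k) (hkK : k ≤ K) (hj1 : 1 ≤ j) (hjK : j ≤ K)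
    (hL : s < τ k → 1 < k → τ (k - 1) + τ k ≤ 2 * s)
    (hR : τ k < s → k < K → 2 * s ≤ τ k + τ (k + 1))
    (hm : AbsLe (τ j) s m) : AbsLe (τ k) s m := by
  rcases lt_trichotomy j k with hjk | he | hjk
  · have h1 : τ j ≤ τ (k - 1) := tau_mono hlt j (k - 1) (by omega) (by omega)
    have h2 : τ (k - 1) ≤ τ k := tau_mono hlt (k - 1) k (by omega) (by omega)
    rcases hm with ⟨ha, hb⟩
    rcases le_or_gt (τ k) s with hc | hc
    · exact ⟨by omega, by omega⟩
    · have := hL hc (by omega)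
      exact ⟨by omega, by omega⟩
  · rw [← he]; exact hm
  · have h1 : τ (k + 1) ≤ τ j := tau_mono hlt (k + 1) j (by omega) (by omega)
    have h2 : τ k ≤ τ (k + 1) := tau_mono hlt k (k + 1) (by omega) (by omega)
    rcases hm with ⟨ha, hb⟩
    rcases le_or_gt s (τ k) with hc | hc
    · exact ⟨by omega, by omega⟩
    · have := hR hc (by omega)
      exact ⟨by omega, by omega⟩
  
lemma cpSignal_const_noCP (hlt : ∀ k, k ≤ K → τ k < τ (k + 1)) {t1 t3 : ℕ}
    (h : ∀ j, 1 ≤ j → j ≤ K → ¬(t1 < τ j ∧ τ j < t3)) :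
    ∀ i ∈ Finset.Ico t1 t3, cpSignal K τ μ i = cpSignal K τ μ t1 := by
  intro i hi
  rw [Finset.mem_Ico] at hi
  unfold cpSignal
  have hfe : (Finset.Icc 1 K).filter (fun k => τ k ≤ i) =
      (Finset.Icc 1 K).filter (fun k => τ k ≤ t1) := by
    apply Finset.filter_congr
    intro j hj
    rw [Finset.mem_Icc] at hj
    constructor
    · intro hji
      by_contra hjt1
      push_neg at hjt1
      exact h j hj.1 hj.2 ⟨hjt1, by omega⟩
    · intro hjt1
      omega
  rw [hfe]

end near

section windowcp
variable {n K : ℕ} {τ : ℕ → ℕ} {μ : ℕ → ℝ} {ζ : ℝ} {g : ℕ → ℝ}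

/-- on the event `B`, the detection window of any point contains a true change-point. -/
lemma window_cp (h0 : τ 0 = 1) (hK1 : τ (K + 1) = n + 1)
    (hlt : ∀ k, k ≤ K → τ k < τ (k + 1))
    (hB : ∀ t1 t2 t3 : ℕ, 1 ≤ t1 → t1 < t2 → t2 < t3 → t3 ≤ n + 1 →
      |cusum g t1 t2 t3| ≤ thrB n t1 t2 t3 + ζ)
    {s : ℕ} (hs2 : 2 ≤ s) (hsn : s ≤ n)
    (hfin : rhat n ζ (fun i => cpSignal K τ μ i + g i) s ≠ ⊤) :
    ∃ j, 1 ≤ j ∧ j ≤ K ∧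
      AbsLe (τ j) s ((rhat n ζ (fun i => cpSignal K τ μ i + g i) s).toNat - 1) := by
  set Y := fun i => cpSignal K τ μ i + g i with hY
  obtain ⟨⟨hr1, hdet⟩, -⟩ := rhat_spec hfin
  set r' := (rhat n ζ Y s).toNat with hr'
  have ht1lo : 1 ≤ tlo s r' := le_max_right _ _
  have ht1s : tlo s r' < s := by
    rw [tlo]; omega
  have hst3 : s < thi n s r' := by
    rw [thi]; omega
  have ht3n : thi n s r' ≤ n + 1 := min_le_right _ _
  by_contra hno
  push_neg at hno
  have hnoCP : ∀ j, 1 ≤ j → j ≤ K → ¬(tlo s r' < τ j ∧ τ j < thi n s r') := by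
    intro j hj1 hjK hcon
    apply hno j hj1 hjK
    have h1 : τ j + 1 ≤ thi n s r' := hcon.2
    have h2 : tlo s r' + 1 ≤ τ j := hcon.1
    rw [thi] at h1
    rw [tlo] at h2
    exact ⟨by omega, by omega⟩
  have hzero : cusum (cpSignal K τ μ) (tlo s r') s (thi n s r') = 0 :=
    cusum_const_zero ht1s hst3 (cpSignal_const_noCP hlt hnoCP)
  have hsplit : cusum Y (tlo s r') s (thi n s r') =
      cusum (cpSignal K τ μ) (tlo s r') s (thi n s r') + cusum g (tlo s r') s (thi n s r') :=
    cusum_add _ _ _ _ _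
  rw [hsplit, hzero, zero_add] at hdet
  exact absurd (hB _ _ _ ht1lo ht1s hst3 ht3n) (not_le.mpr hdet)

/-- on the event `B`, if the nearest-CP conditions hold at `s` for index `k`,
then `τ k` belongs to the confidence interval of `s`. -/
lemma tau_mem_Itau (h0 : τ 0 = 1) (hK1 : τ (K + 1) = n + 1)
    (hlt : ∀ k, k ≤ K → τ k < τ (k + 1))
    (hB : ∀ t1 t2 t3 : ℕ, 1 ≤ t1 → t1 < t2 → t2 < t3 → t3 ≤ n + 1 →
      |cusum g t1 t2 t3| ≤ thrB n t1 t2 t3 + ζ)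
    {s k : ℕ} (hs2 : 2 ≤ s) (hsn : s ≤ n) (hk1 : 1 ≤ k) (hkK : k ≤ K)
    (hL : s < τ k → 1 < k → τ (k - 1) + τ k ≤ 2 * s)
    (hR : τ k < s → k < K → 2 * s ≤ τ k + τ (k + 1))
    (hfin : rhat n ζ (fun i => cpSignal K τ μ i + g i) s ≠ ⊤) :
    τ k ∈ Itau n ζ (fun i => cpSignal K τ μ i + g i) s := by
  obtain ⟨j, hj1, hjK, hjabs⟩ := window_cp h0 hK1 hlt hB hs2 hsn hfin
  have hkabs : AbsLe (τ k) s ((rhat n ζ (fun i => cpSignal K τ μ i + g i) s).toNat - 1) :=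
    near hlt hk1 hkK hj1 hjK hL hR hjabs
  obtain ⟨⟨hr1, -⟩, -⟩ := rhat_spec hfin
  obtain ⟨h2k, hkn⟩ := tau_bounds h0 hK1 hlt hk1 hkK
  rw [Itau_of_ne_top hfin, Finset.mem_Icc]
  rcases hkabs with ⟨ha, hb⟩
  constructor
  · rw [tlo]; omega
  · rw [thi]; omega

end windowcp

end PSaux
namespace PSaux

lemma log_ge_one {x : ℝ} (hx : 4 ≤ x) : 1 ≤ Real.log x := by
  rw [Real.le_log_iff_exp_le (by linarith)]
  have := Real.exp_one_lt_d9
  linarith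

lemma log_6400_le : Real.log 6400 ≤ 9 := by
  rw [Real.log_le_iff_le_exp (by norm_num)]
  have h1 : (2.7182818283 : ℝ) ^ (9 : ℕ) ≤ Real.exp 1 ^ (9 : ℕ) :=
    pow_le_pow_left₀ (by norm_num) Real.exp_one_gt_d9.le 9
  have h2 : Real.exp 1 ^ (9 : ℕ) = Real.exp 9 := by
    rw [← Real.exp_nat_mul]; norm_num
  nlinarith [h1, h2]

/-- consequences of the high-energy condition, with `κ = 1000`. -/
lemma energy_consequences {nr A B dl z : ℝ} (hA : 1 ≤ A) (hB : 1 ≤ B) (hAB : A + B ≤ nr)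
    (hE : 1000000 * (2 * Real.log (nr * (A + B) / (A * B)) + z ^ 2) <
      dl ^ 2 * (A * B / (A + B))) :
    0 < dl ^ 2 ∧ 1 ≤ Real.log (nr * dl ^ 2) ∧
      1600 * (Real.log (nr * dl ^ 2) + z ^ 2) ≤ dl ^ 2 * (A * B / (A + B)) := by
  have hABpos : (0 : ℝ) < A + B := by linarith
  have hABmul : (0 : ℝ) < A * B := by nlinarith
  set h := A * B / (A + B) with hh
  have hpos : 0 < h := div_pos hABmul hABpos
  set ρ := nr * (A + B) / (A * B) with hρ
  have hρ4 : 4 ≤ ρ := by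
    rw [hρ, le_div_iff₀ hABmul]
    nlinarith [sq_nonneg (A - B)]
  have hlogρ : 1 ≤ Real.log ρ := log_ge_one hρ4
  have hz : 0 ≤ z ^ 2 := sq_nonneg z
  have hEh : 2000000 < dl ^ 2 * h := by nlinarith
  have hdl : 0 < dl ^ 2 := by nlinarith
  have hρh : ρ = nr / h := by
    rw [hρ, hh]
    field_simp
  have hnr : 0 < nr := by linarith
  have hhdl : 0 < h * dl ^ 2 := by positivity
  have heq : Real.log (nr * dl ^ 2) = Real.log ρ + Real.log (h * dl ^ 2) := by
    rw [← Real.log_mul (by positivity) (by positivity), hρh]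
    congr 1
    field_simp
  have c2 : 1 ≤ Real.log (nr * dl ^ 2) := by
    rw [heq]
    have : 1 ≤ Real.log (h * dl ^ 2) := log_ge_one (by nlinarith)
    linarith
  refine ⟨hdl, c2, ?_⟩
  have h1 : Real.log ρ ≤ dl ^ 2 * h / 2000000 := by nlinarith
  have h2 : z ^ 2 ≤ dl ^ 2 * h / 1000000 := by nlinarith
  have h3 : Real.log (h * dl ^ 2) ≤ h * dl ^ 2 / 6400 + 9 := by
    have e1 : Real.log (h * dl ^ 2) = Real.log (h * dl ^ 2 / 6400) + Real.log 6400 := by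
      rw [← Real.log_mul (by positivity) (by norm_num)]
      congr 1
      field_simp
    have e2 : Real.log (h * dl ^ 2 / 6400) ≤ h * dl ^ 2 / 6400 - 1 :=
      Real.log_le_sub_one_of_pos (by positivity)
    have := log_6400_le
    linarith
  rw [heq]
  have hcomm : h * dl ^ 2 = dl ^ 2 * h := by ring
  linarith [hcomm]

/-- the analytic detection inequality, with `c = 200`. -/
lemma detect_analytic {nr dl z D R : ℝ} (hnr : 2 ≤ nr)
    (hD : 0 ≤ D) (hRD : 2 * D + 1 ≤ R)
    (hRx : 200 * (Real.log (nr * dl ^ 2) + z ^ 2) < dl ^ 2 * R)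
    (hlog1 : 1 ≤ Real.log (nr * dl ^ 2)) :
    2 * (Real.sqrt (2 * Real.log (nr * (R + R) / (R * R))) + z) <
      |dl| * ((R - D) / R) * Real.sqrt ((R * R) / (R + R)) := by
  have hR0 : (0 : ℝ) < R := by linarith
  have hdl : 0 < dl ^ 2 := by
    rcases (sq_nonneg dl).lt_or_eq with h | h
    · exact h
    · exfalso
      rw [← h, mul_zero, Real.log_zero] at hlog1
      linarith
  have hnrdl : 0 < nr * dl ^ 2 := by nlinarith
  have e1 : nr * (R + R) / (R * R) = 2 * nr / R := by
    field_simp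
    ring
  have e2 : (R * R) / (R + R) = R / 2 := by
    field_simp
    ring
  rw [e1, e2]
  set T := 2 * Real.log (2 * nr / R) with hT
  set M := max T 0 with hM
  have hM0 : 0 ≤ M := le_max_right _ _
  have hTM : Real.sqrt T ≤ Real.sqrt M := Real.sqrt_le_sqrt (le_max_left _ _)
  have hzs : z ≤ Real.sqrt (z ^ 2) := by
    rw [Real.sqrt_sq_eq_abs]
    exact le_abs_self z
  -- key quantitative bound : 64*M + 64*z^2 < dl^2*R
  have hkey : 64 * M + 64 * z ^ 2 < dl ^ 2 * R := by
    have hMle : M ≤ 2 * Real.log (nr * dl ^ 2) := by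
      rw [hM]
      rcases le_or_gt T 0 with h | h
      · rw [max_eq_right h]
        linarith
      · rw [max_eq_left h.le, hT]
        have h2nrR : 0 < 2 * nr / R := by positivity
        have hle : 2 * nr / R ≤ nr * dl ^ 2 := by
          rw [div_le_iff₀ hR0]
          have hR200 : 200 / dl ^ 2 ≤ R := by
            rw [div_le_iff₀ hdl]
            nlinarith [sq_nonneg z]
          have : 200 ≤ dl ^ 2 * R := by
            rw [div_le_iff₀ hdl] at hR200
            linarith
          nlinarith
        have := Real.log_le_log h2nrR hle
        linarith
    have hz := sq_nonneg z
    nlinarith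
  -- reduce to squares
  have hRHS : Real.sqrt (dl ^ 2 * R / 8) ≤ |dl| * ((R - D) / R) * Real.sqrt (R / 2) := by
    have e3 : dl ^ 2 * R / 8 = (|dl| * (1 / 2)) ^ 2 * (R / 2) := by
      rw [mul_pow, sq_abs]
      ring
    rw [e3, Real.sqrt_mul (by positivity)]
    rw [Real.sqrt_sq (by positivity)]
    have h4 : |dl| * (1 / 2) ≤ |dl| * ((R - D) / R) := by
      apply mul_le_mul_of_nonneg_left _ (abs_nonneg dl)
      rw [div_le_div_iff₀ (by norm_num) hR0]
      linarith
    exact mul_le_mul_of_nonneg_right h4 (Real.sqrt_nonneg _)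
  have hLHS : 2 * (Real.sqrt T + z) ≤ 2 * Real.sqrt M + 2 * Real.sqrt (z ^ 2) := by
    linarith
  have hmid : 2 * Real.sqrt M + 2 * Real.sqrt (z ^ 2) < Real.sqrt (dl ^ 2 * R / 8) := by
    have hsq : (2 * Real.sqrt M + 2 * Real.sqrt (z ^ 2)) ^ 2 < dl ^ 2 * R / 8 := by
      have hMs : Real.sqrt M ^ 2 = M := Real.sq_sqrt hM0
      have hzs2 : Real.sqrt (z ^ 2) ^ 2 = z ^ 2 := Real.sq_sqrt (sq_nonneg z)
      have hcross : 2 * (Real.sqrt M * Real.sqrt (z ^ 2)) ≤ M + z ^ 2 := by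
        nlinarith [sq_nonneg (Real.sqrt M - Real.sqrt (z ^ 2))]
      nlinarith
    have h0 : 0 ≤ 2 * Real.sqrt M + 2 * Real.sqrt (z ^ 2) := by positivity
    calc 2 * Real.sqrt M + 2 * Real.sqrt (z ^ 2)
        = Real.sqrt ((2 * Real.sqrt M + 2 * Real.sqrt (z ^ 2)) ^ 2) := (Real.sqrt_sq h0).symm
      _ < Real.sqrt (dl ^ 2 * R / 8) := Real.sqrt_lt_sqrt (by positivity) hsq
  calc 2 * (Real.sqrt T + z) ≤ 2 * Real.sqrt M + 2 * Real.sqrt (z ^ 2) := hLHS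
    _ < Real.sqrt (dl ^ 2 * R / 8) := hmid
    _ ≤ |dl| * ((R - D) / R) * Real.sqrt (R / 2) := hRHS

end PSaux
namespace PSaux

section detect
variable {n K : ℕ} {τ : ℕ → ℕ} {μ : ℕ → ℝ} {ζ : ℝ} {g : ℕ → ℝ}

set_option maxHeartbeats 1000000 in
lemma detect (h0 : τ 0 = 1) (hK1 : τ (K + 1) = n + 1)
    (hlt : ∀ k, k ≤ K → τ k < τ (k + 1)) (hK : 1 ≤ K)
    (hB : ∀ t1 t2 t3 : ℕ, 1 ≤ t1 → t1 < t2 → t2 < t3 → t3 ≤ n + 1 →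
      |cusum g t1 t2 t3| ≤ thrB n t1 t2 t3 + ζ)
    {a k d : ℕ} (hk1 : 1 ≤ k) (hkK : k ≤ K)
    (habs : AbsLe a (τ k) d)
    (hdl8 : 8 * d + τ (k - 1) < τ k) (hdr8 : 8 * d + τ k < τ (k + 1))
    (hE : 1000 * Real.sqrt (psiSq n (ζ ^ 2) (τ (k - 1)) (τ k) (τ (k + 1))) <
      |cusum (cpSignal K τ μ) (τ (k - 1)) (τ k) (τ (k + 1))|) :
    ∃ r : ℕ, 1 ≤ r ∧
      rhat n ζ (fun i => cpSignal K τ μ i + g i) a ≤ (r : ℕ∞) ∧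
      4 * (r - 1) + τ (k - 1) < τ k ∧ 4 * (r - 1) + τ k < τ (k + 1) ∧
      (r - 1 ≤ 2 * d ∨ ((r : ℝ) - 1) ≤
        200 * (Real.log ((n : ℝ) * (μ (k + 1) - μ k) ^ 2) + ζ ^ 2) / (μ (k + 1) - μ k) ^ 2) := by
  have hkk : k - 1 + 1 = k := by omega
  have hA1 : τ (k - 1) + 1 ≤ τ k := by
    have := hlt (k - 1) (by omega)
    omega
  have hB1 : τ k + 1 ≤ τ (k + 1) := hlt k hkK
  have hn2 : 2 ≤ n := by
    obtain ⟨h2, h3⟩ := tau_bounds h0 hK1 hlt (le_refl 1) hK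
    omega
  have htk1low : 1 ≤ τ (k - 1) := by
    have := tau_mono hlt 0 (k - 1) (by omega) (by omega)
    omega
  have htkK : τ (k + 1) ≤ n + 1 := by
    have := tau_mono hlt (k + 1) (K + 1) (by omega) (by omega)
    omega
  set dl := μ (k + 1) - μ k with hdl_def
  -- real versions of the segment lengths
  have hA1R : (τ (k - 1) : ℝ) + 1 ≤ τ k := by exact_mod_cast hA1
  have hB1R : (τ k : ℝ) + 1 ≤ τ (k + 1) := by exact_mod_cast hB1
  have hApos : (0 : ℝ) < (τ k : ℝ) - τ (k - 1) := by linarith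
  have hBpos : (0 : ℝ) < (τ (k + 1) : ℝ) - τ k := by linarith
  -- 1. compute the cusum at the true triad
  have hval := cusum_cp_right (μ := μ) hlt hk1 hkK (le_refl (τ (k - 1)))
    (by omega) (le_refl (τ k)) (by omega) (by omega) (le_refl (τ (k + 1)))
  rw [div_self (by linarith : (τ (k + 1) : ℝ) - τ k ≠ 0), mul_one] at hval
  -- 2. convert the energy hypothesis
  have hpsi : psiSq n (ζ ^ 2) (τ (k - 1)) (τ k) (τ (k + 1)) =
      2 * Real.log ((n : ℝ) * (((τ k : ℝ) - τ (k - 1)) + ((τ (k + 1) : ℝ) - τ k)) /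
        (((τ k : ℝ) - τ (k - 1)) * ((τ (k + 1) : ℝ) - τ k))) + ζ ^ 2 := by
    rw [psiSq]
    congr 3
    ring
  have hHpos : (0 : ℝ) < ((τ k : ℝ) - τ (k - 1)) * ((τ (k + 1) : ℝ) - τ k) /
      (((τ k : ℝ) - τ (k - 1)) + ((τ (k + 1) : ℝ) - τ k)) := by positivity
  have hEsq : 1000000 * (2 * Real.log ((n : ℝ) *
        (((τ k : ℝ) - τ (k - 1)) + ((τ (k + 1) : ℝ) - τ k)) /
        (((τ k : ℝ) - τ (k - 1)) * ((τ (k + 1) : ℝ) - τ k))) + ζ ^ 2) <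
      dl ^ 2 * (((τ k : ℝ) - τ (k - 1)) * ((τ (k + 1) : ℝ) - τ k) /
        (((τ k : ℝ) - τ (k - 1)) + ((τ (k + 1) : ℝ) - τ k))) := by
    set ψ := 2 * Real.log ((n : ℝ) *
        (((τ k : ℝ) - τ (k - 1)) + ((τ (k + 1) : ℝ) - τ k)) /
        (((τ k : ℝ) - τ (k - 1)) * ((τ (k + 1) : ℝ) - τ k))) + ζ ^ 2 with hψ
    set H := ((τ k : ℝ) - τ (k - 1)) * ((τ (k + 1) : ℝ) - τ k) /
        (((τ k : ℝ) - τ (k - 1)) + ((τ (k + 1) : ℝ) - τ k)) with hH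
    have hHarg : (((τ k : ℝ) - τ (k - 1)) * ((τ (k + 1) : ℝ) - τ k)) /
        ((τ (k + 1) : ℝ) - τ (k - 1)) = H := by
      rw [hH]
      congr 1
      ring
    rw [hval, hpsi] at hE
    rw [hHarg] at hE
    have habs2 : |dl * Real.sqrt H| = |dl| * Real.sqrt H := by
      rw [abs_mul, abs_of_nonneg (Real.sqrt_nonneg H)]
    rw [habs2] at hE
    rcases le_or_gt 0 ψ with hψ0 | hψ0
    · have hsq := mul_self_lt_mul_self (by positivity) hE
      have e1 : Real.sqrt ψ * Real.sqrt ψ = ψ := Real.mul_self_sqrt hψ0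
      have e2 : Real.sqrt H * Real.sqrt H = H := Real.mul_self_sqrt hHpos.le
      have e3 : |dl| * |dl| = dl ^ 2 := by rw [← abs_mul, abs_mul_self]; ring
      nlinarith [hsq]
    · have hdlH : 0 ≤ dl ^ 2 * H := by positivity
      nlinarith
  obtain ⟨hdlpos, hlog1, hG⟩ := energy_consequences
    (by linarith : (1 : ℝ) ≤ (τ k : ℝ) - τ (k - 1))
    (by linarith : (1 : ℝ) ≤ (τ (k + 1) : ℝ) - τ k)
    (by
      have e1 : (τ (k - 1) : ℝ) ≥ 1 := by exact_mod_cast htk1low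
      have e2 : (τ (k + 1) : ℝ) ≤ n + 1 := by exact_mod_cast htkK
      linarith) hEsq
  -- 3. the crucial radius
  set L := Real.log ((n : ℝ) * dl ^ 2) + ζ ^ 2 with hL
  have hLpos : (1 : ℝ) ≤ L := by
    rw [hL]
    have := sq_nonneg ζ
    linarith
  set x' := 200 * L / dl ^ 2 with hx'
  have hx'pos : 0 < x' := by positivity
  set f := ⌊x'⌋₊ with hf
  have hfx : (f : ℝ) ≤ x' := Nat.floor_le hx'pos.le
  have hxf1 : x' < (f : ℝ) + 1 := Nat.lt_floor_add_one x'
  -- 8 x' ≤ H ≤ A, B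
  have h8x : 8 * x' * dl ^ 2 ≤ dl ^ 2 * (((τ k : ℝ) - τ (k - 1)) * ((τ (k + 1) : ℝ) - τ k) /
      (((τ k : ℝ) - τ (k - 1)) + ((τ (k + 1) : ℝ) - τ k))) := by
    rw [hx']
    have : 8 * (200 * L / dl ^ 2) * dl ^ 2 = 1600 * L := by
      rw [mul_assoc, div_mul_cancel₀ _ hdlpos.ne']
      ring
    rw [this]
    exact hG
  have h8xH : 8 * x' ≤ ((τ k : ℝ) - τ (k - 1)) * ((τ (k + 1) : ℝ) - τ k) /
      (((τ k : ℝ) - τ (k - 1)) + ((τ (k + 1) : ℝ) - τ k)) := by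
    have h := h8x
    rw [mul_comm (dl ^ 2)] at h
    exact (mul_le_mul_iff_of_pos_right hdlpos).mp h
  have hHA : ((τ k : ℝ) - τ (k - 1)) * ((τ (k + 1) : ℝ) - τ k) /
      (((τ k : ℝ) - τ (k - 1)) + ((τ (k + 1) : ℝ) - τ k)) ≤ (τ k : ℝ) - τ (k - 1) := by
    rw [div_le_iff₀ (by linarith)]
    nlinarith
  have hHB : ((τ k : ℝ) - τ (k - 1)) * ((τ (k + 1) : ℝ) - τ k) /
      (((τ k : ℝ) - τ (k - 1)) + ((τ (k + 1) : ℝ) - τ k)) ≤ (τ (k + 1) : ℝ) - τ k := by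
    rw [div_le_iff₀ (by linarith)]
    nlinarith
  have h8fA : 8 * f + τ (k - 1) ≤ τ k := by
    have : (8 : ℝ) * f + τ (k - 1) ≤ τ k := by linarith
    exact_mod_cast this
  have h8fB : 8 * f + τ k ≤ τ (k + 1) := by
    have : (8 : ℝ) * f + τ k ≤ τ (k + 1) := by linarith
    exact_mod_cast this
  set r := max (2 * d + 1) (f + 1) with hr
  have hr1 : 1 ≤ r := by omega
  have hchainA : 4 * (r - 1) + τ (k - 1) < τ k := by omega
  have hchainB : 4 * (r - 1) + τ k < τ (k + 1) := by omega
  have hwinA : d + r + τ (k - 1) ≤ τ k := by omega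
  have hwinB : d + r + τ k ≤ τ (k + 1) := by omega
  obtain ⟨habs1, habs2⟩ := habs
  have hra : r + 1 ≤ a := by omega
  have ht1 : τ (k - 1) ≤ a - r := by omega
  have ht3 : a + r ≤ τ (k + 1) := by omega
  have htlo : tlo a r = a - r := by rw [tlo]; omega
  have hthi : thi n a r = a + r := by rw [thi]; omega
  -- cast facts
  have hc1 : ((a - r : ℕ) : ℝ) = (a : ℝ) - r := by
    rw [Nat.cast_sub (by omega)]
  have hRpos : (0 : ℝ) < (r : ℝ) := by exact_mod_cast hr1
  have hdrR : (d : ℝ) ≤ (r : ℝ) - 1 := by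
    have h2d1 : 2 * d + 1 ≤ r := le_max_left _ _
    have : (2 * (d : ℝ) + 1) ≤ r := by exact_mod_cast h2d1
    linarith
  have hd0R : (0 : ℝ) ≤ (d : ℝ) := Nat.cast_nonneg d
  -- 4. the cusum at the detection triad
  have hcus : ∃ DD : ℝ, 0 ≤ DD ∧ DD ≤ (d : ℝ) ∧
      |cusum (cpSignal K τ μ) (a - r) a (a + r)| =
        |dl| * (((r : ℝ) - DD) / r) * Real.sqrt (((r : ℝ) * r) / ((r : ℝ) + r)) := by
    rcases le_or_gt a (τ k) with hcase | hcase
    · have hcak : (a : ℝ) ≤ τ k := by exact_mod_cast hcase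
      have hkad : (τ k : ℝ) ≤ (a : ℝ) + d := by exact_mod_cast habs2
      have hv := cusum_cp_right (μ := μ) (t3 := a + r) hlt hk1 hkK ht1 (by omega) hcase (by omega)
        (by omega) ht3
      refine ⟨(τ k : ℝ) - a, by linarith, by linarith, ?_⟩
      rw [hv, hc1]
      push_cast
      have hX0 : (0 : ℝ) ≤ ((a : ℝ) + r - τ k) / ((a : ℝ) + r - a) := by
        apply div_nonneg <;> linarith
      rw [abs_mul, abs_mul, abs_of_nonneg hX0, abs_of_nonneg (Real.sqrt_nonneg _)]
      congr 1
      · ring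
      · congr 1
        ring
    · have hcak : (τ k : ℝ) ≤ a := by
        have : (τ k : ℝ) < a := by exact_mod_cast hcase
        linarith
      have hkad : (a : ℝ) ≤ (τ k : ℝ) + d := by exact_mod_cast habs1
      have hv := cusum_cp_left (μ := μ) (t2 := a) (t3 := a + r) hlt hk1 hkK ht1 (by omega) (by omega) (by omega)
        (by omega) ht3
      refine ⟨(a : ℝ) - τ k, by linarith, by linarith, ?_⟩
      rw [hv, hc1]
      push_cast
      have hX0 : (0 : ℝ) ≤ ((τ k : ℝ) - ((a : ℝ) - r)) / ((a : ℝ) - ((a : ℝ) - r)) := by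
        apply div_nonneg <;> linarith
      rw [abs_mul, abs_mul, abs_of_nonneg hX0, abs_of_nonneg (Real.sqrt_nonneg _)]
      congr 1
      · ring
      · congr 1
        ring
  obtain ⟨DD, hDD0, hDDd, habsval⟩ := hcus
  have h2d1R : 2 * (d : ℝ) + 1 ≤ (r : ℝ) := by
    have h' : 2 * d + 1 ≤ r := le_max_left _ _
    exact_mod_cast h'
  have hRD : 2 * DD + 1 ≤ (r : ℝ) := by linarith
  have hRx : 200 * L < dl ^ 2 * r := by
    have hfr : (f : ℝ) + 1 ≤ r := by
      have : f + 1 ≤ r := le_max_right _ _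
      exact_mod_cast this
    have hxr : x' < (r : ℝ) := lt_of_lt_of_le hxf1 hfr
    have he : 200 * L = x' * dl ^ 2 := by
      rw [hx']
      rw [div_mul_cancel₀ _ hdlpos.ne']
    rw [he]
    nlinarith
  have hnrR : (2 : ℝ) ≤ n := by exact_mod_cast hn2
  have hana := detect_analytic hnrR hDD0 hRD hRx hlog1
  have harg : (n : ℝ) * (((a + r : ℕ) : ℝ) - ((a - r : ℕ) : ℝ)) /
      ((((a + r : ℕ) : ℝ) - a) * ((a : ℝ) - ((a - r : ℕ) : ℝ))) =
      (n : ℝ) * ((r : ℝ) + r) / ((r : ℝ) * r) := by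
    rw [hc1]
    push_cast
    ring
  have hthr : thrB n (a - r) a (a + r) =
      Real.sqrt (2 * Real.log ((n : ℝ) * ((r : ℝ) + r) / ((r : ℝ) * r))) := by
    rw [thrB, harg]
  have hvalid : |cusum g (a - r) a (a + r)| ≤ thrB n (a - r) a (a + r) + ζ :=
    hB (a - r) a (a + r) (by omega) (by omega) (by omega) (by omega)
  have hYsplit : cusum (fun i => cpSignal K τ μ i + g i) (a - r) a (a + r) =
      cusum (cpSignal K τ μ) (a - r) a (a + r) + cusum g (a - r) a (a + r) :=
    cusum_add _ _ _ _ _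
  have hdetIneq : thrB n (a - r) a (a + r) + ζ <
      |cusum (fun i => cpSignal K τ μ i + g i) (a - r) a (a + r)| := by
    have h1 : 2 * (thrB n (a - r) a (a + r) + ζ) <
        |cusum (cpSignal K τ μ) (a - r) a (a + r)| := by
      rw [habsval, hthr]
      linarith [hana]
    have h2 : |cusum (cpSignal K τ μ) (a - r) a (a + r)| ≤
        |cusum (fun i => cpSignal K τ μ i + g i) (a - r) a (a + r)| +
          |cusum g (a - r) a (a + r)| := by
      have e : cusum (cpSignal K τ μ) (a - r) a (a + r) =
          cusum (fun i => cpSignal K τ μ i + g i) (a - r) a (a + r) -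
            cusum g (a - r) a (a + r) := by
        rw [hYsplit]
        ring
      rw [e, sub_eq_add_neg]
      exact (abs_add_le _ _).trans (by rw [abs_neg])
    linarith
  have hrdet : r ∈ detSet n ζ (fun i => cpSignal K τ μ i + g i) a := by
    refine ⟨hr1, ?_⟩
    rw [htlo, hthi]
    exact hdetIneq
  refine ⟨r, hr1, rhat_le hrdet, hchainA, hchainB, ?_⟩
  rcases max_choice (2 * d + 1) (f + 1) with hmax | hmax
  · left
    omega
  · right
    have her : r = f + 1 := by rw [hr, hmax]
    rw [her]
    push_cast
    linarith

end detect

end PSaux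
namespace PSaux

lemma enat_toNat_le {m : ℕ∞} {r : ℕ} (h : m ≤ (r : ℕ∞)) : m.toNat ≤ r := by
  have hne : m ≠ ⊤ := ne_top_of_le_ne_top (WithTop.natCast_ne_top r) h
  lift m to ℕ using hne
  exact_mod_cast h

lemma absLe_of_mem_Icc {n x rx z : ℕ} (h : z ∈ Finset.Icc (tlo x rx + 1) (thi n x rx - 1))
    (h1 : 1 ≤ rx) : AbsLe z x (rx - 1) := by
  rw [Finset.mem_Icc, tlo, thi] at h
  exact ⟨by omega, by omega⟩

lemma mem_Icc_of_absLe {n x rx z : ℕ} (h : AbsLe z x (rx - 1)) (h1 : 1 ≤ rx)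
    (hz2 : 2 ≤ z) (hzn : z ≤ n) : z ∈ Finset.Icc (tlo x rx + 1) (thi n x rx - 1) := by
  rw [Finset.mem_Icc, tlo, thi]
  rcases h with ⟨ha, hb⟩
  exact ⟨by omega, by omega⟩

end PSaux

open PSaux in
set_option maxHeartbeats 2000000 in
/-- Proposition 12 of the paper: the pruning step keeps no spurious
change-point and does not deteriorate the localization of reasonably well-localized
high-energy change-points. -/
theorem pruning_step :
    ∃ κ > (0 : ℝ), ∃ c > (0 : ℝ),
    ∀ α : ℝ, 0 < α → α < 1 →
    ∀ n : ℕ,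
    ∀ (Ω : Type) (_ : MeasurableSpace Ω) (P : Measure Ω), IsProbabilityMeasure P →
    ∀ ε : ℕ → Ω → ℝ, IsStdSubGaussian P ε →
    ∀ ζ : ℝ, P ((eventB n ζ ε)ᶜ) ≤ ENNReal.ofReal α →
      ENNReal.ofReal (1 - α) ≤ P (eventB n ζ ε) ∧
      ∀ K : ℕ, 0 < K → ∀ τs : ℕ → ℕ, ∀ μ : ℕ → ℝ, IsCPData n K τs μ →
      ∀ ω ∈ eventB n ζ ε,
      ∀ l : List ℕ, l.Nodup → (∀ a ∈ l, 2 ≤ a ∧ a ≤ n) →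
        l.Pairwise (fun a b =>
          rhat n ζ (fun i => cpSignal K τs μ i + ε i ω) b ≤
            rhat n ζ (fun i => cpSignal K τs μ i + ε i ω) a) →
        -- (a) (NoSp) for the pruned vector
        NoSp n K τs
          (pruneList (rhat n ζ (fun i => cpSignal K τs μ i + ε i ω))
            (Itau n ζ (fun i => cpSignal K τs μ i + ε i ω)) l) ∧
        -- (b) detection of reasonably well-localized high-energy change-points
        (∀ k, 1 ≤ k → k ≤ K →
          κ * Real.sqrt (psiSq n (ζ ^ 2) (τs (k - 1)) (τs k) (τs (k + 1))) <
            |cusum (cpSignal K τs μ) (τs (k - 1)) (τs k) (τs (k + 1))| →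
          dH1 l.toFinset (τs k) <
            ENNReal.ofReal
              (min ((τs k : ℝ) - (τs (k - 1) : ℝ)) ((τs (k + 1) : ℝ) - (τs k : ℝ)) / 8) →
          dH1 (pruneList (rhat n ζ (fun i => cpSignal K τs μ i + ε i ω))
              (Itau n ζ (fun i => cpSignal K τs μ i + ε i ω)) l) (τs k) ≤
            max (2 * dH1 l.toFinset (τs k))
              (ENNReal.ofReal (c * (Real.log ((n : ℝ) * (μ (k + 1) - μ k) ^ 2) + ζ ^ 2) /
                (μ (k + 1) - μ k) ^ 2))) := by
  refine ⟨1000, by norm_num, 200, by norm_num, ?_⟩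
  intro α hα0 hα1 n Ω mΩ P hP ε hε ζ hζ
  constructor
  · -- probability bound
    have hmeas : MeasurableSet (eventB n ζ ε) := by
      have he : eventB n ζ ε = ⋂ (t1 : ℕ) (t2 : ℕ) (t3 : ℕ) (_ : 1 ≤ t1) (_ : t1 < t2)
          (_ : t2 < t3) (_ : t3 ≤ n + 1),
          {ω | |cusum (fun i => ε i ω) t1 t2 t3| ≤ thrB n t1 t2 t3 + ζ} := by
        ext ω
        simp only [eventB, Set.mem_setOf_eq, Set.mem_iInter]
      rw [he]
      refine MeasurableSet.iInter fun t1 => MeasurableSet.iInter fun t2 =>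
        MeasurableSet.iInter fun t3 => MeasurableSet.iInter fun _ =>
        MeasurableSet.iInter fun _ => MeasurableSet.iInter fun _ =>
        MeasurableSet.iInter fun _ => ?_
      have hc : Measurable fun ω => |cusum (fun i => ε i ω) t1 t2 t3| := by
        apply Measurable.abs
        unfold cusum segMean
        exact (((Finset.measurable_sum _ fun i _ => hε.1 i).div_const _).sub
          ((Finset.measurable_sum _ fun i _ => hε.1 i).div_const _)).mul_const _
      exact measurableSet_le hc measurable_const
    have h1 : P (eventB n ζ ε) = 1 - P ((eventB n ζ ε)ᶜ) := by
      have := prob_compl_eq_one_sub (μ := P) hmeas.compl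
      rwa [compl_compl] at this
    rw [h1]
    have h2 : ENNReal.ofReal (1 - α) + ENNReal.ofReal α = 1 := by
      rw [← ENNReal.ofReal_add (by linarith) (by linarith)]
      norm_num
    have h3 : ENNReal.ofReal (1 - α) + P ((eventB n ζ ε)ᶜ) ≤ 1 := by
      calc ENNReal.ofReal (1 - α) + P ((eventB n ζ ε)ᶜ)
          ≤ ENNReal.ofReal (1 - α) + ENNReal.ofReal α := by
            exact add_le_add le_rfl hζ
        _ = 1 := h2
    exact ENNReal.le_sub_of_add_le_right (ne_top_of_le_ne_top ENNReal.one_ne_top (le_trans hζ (by simp [ENNReal.ofReal_le_one]; linarith))) h3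
  · intro K hK τs μ hcp ω hω l hnodup hbound hsort
    obtain ⟨h0, hK1, hlt, hμne⟩ := hcp
    have hB : ∀ t1 t2 t3 : ℕ, 1 ≤ t1 → t1 < t2 → t2 < t3 → t3 ≤ n + 1 →
        |cusum (fun i => ε i ω) t1 t2 t3| ≤ thrB n t1 t2 t3 + ζ := hω
    constructor
    · -- part (a) : NoSp
      by_cases htop : ∃ a ∈ (pruneList (rhat n ζ (fun i => cpSignal K τs μ i + ε i ω)) (Itau n ζ (fun i => cpSignal K τs μ i + ε i ω)) l), (rhat n ζ (fun i => cpSignal K τs μ i + ε i ω)) a = ⊤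
      · obtain ⟨a, haS, hatop⟩ := htop
        have hsingle : (pruneList (rhat n ζ (fun i => cpSignal K τs μ i + ε i ω)) (Itau n ζ (fun i => cpSignal K τs μ i + ε i ω)) l) = {a} := pruneList_top_singleton l hsort a haS hatop
        refine ⟨fun k _ _ => ?_, ?_, ?_⟩ <;>
          · rw [hsingle]
            exact (Finset.card_filter_le _ _).trans (by simp)
      · push_neg at htop
        have hwin : ∀ k, 1 ≤ k → k ≤ K →
            ∀ s ∈ (pruneList (rhat n ζ (fun i => cpSignal K τs μ i + ε i ω)) (Itau n ζ (fun i => cpSignal K τs μ i + ε i ω)) l), (s < τs k → 1 < k → τs (k - 1) + τs k ≤ 2 * s) →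
            (τs k < s → k < K → 2 * s ≤ τs k + τs (k + 1)) → τs k ∈ (Itau n ζ (fun i => cpSignal K τs μ i + ε i ω)) s := by
          intro k hk1 hkK s hsS hL hR
          have hsl : s ∈ l := by
            have := pruneList_subset l hsS
            simpa using this
          obtain ⟨hs2, hsn⟩ := hbound s hsl
          exact tau_mem_Itau h0 hK1 hlt hB hs2 hsn hk1 hkK hL hR (htop s hsS)
        have huniq : ∀ s ∈ (pruneList (rhat n ζ (fun i => cpSignal K τs μ i + ε i ω)) (Itau n ζ (fun i => cpSignal K τs μ i + ε i ω)) l), ∀ s' ∈ (pruneList (rhat n ζ (fun i => cpSignal K τs μ i + ε i ω)) (Itau n ζ (fun i => cpSignal K τs μ i + ε i ω)) l), ∀ k, τs k ∈ (Itau n ζ (fun i => cpSignal K τs μ i + ε i ω)) s → τs k ∈ (Itau n ζ (fun i => cpSignal K τs μ i + ε i ω)) s' → s = s' := by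
          intro s hs s' hs' k hm hm'
          by_contra hne
          have hd := pruneList_disjoint l s hs s' hs' hne
          have hmm : τs k ∈ (Itau n ζ (fun i => cpSignal K τs μ i + ε i ω)) s ∩ (Itau n ζ (fun i => cpSignal K τs μ i + ε i ω)) s' := Finset.mem_inter.mpr ⟨hm, hm'⟩
          rw [hd] at hmm
          simp at hmm
        refine ⟨?_, ?_, ?_⟩
        · intro k hk2 hkK1
          rw [Finset.card_le_one]
          intro s hs s' hs'
          rw [Finset.mem_filter] at hs hs'
          obtain ⟨hsS, hc1, hc2⟩ := hs
          obtain ⟨hs'S, hc1', hc2'⟩ := hs'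
          have hn1 : τs (k - 1) + τs k < 2 * s := by
            have h' : ((τs (k - 1) + τs k : ℕ) : ℝ) < ((2 * s : ℕ) : ℝ) := by
              push_cast
              linarith
            exact_mod_cast h'
          have hn2 : 2 * s ≤ τs k + τs (k + 1) := by
            have h' : ((2 * s : ℕ) : ℝ) ≤ ((τs k + τs (k + 1) : ℕ) : ℝ) := by
              push_cast
              linarith
            exact_mod_cast h'
          have hn1' : τs (k - 1) + τs k < 2 * s' := by
            have h' : ((τs (k - 1) + τs k : ℕ) : ℝ) < ((2 * s' : ℕ) : ℝ) := by
              push_cast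
              linarith
            exact_mod_cast h'
          have hn2' : 2 * s' ≤ τs k + τs (k + 1) := by
            have h' : ((2 * s' : ℕ) : ℝ) ≤ ((τs k + τs (k + 1) : ℕ) : ℝ) := by
              push_cast
              linarith
            exact_mod_cast h'
          have hm := hwin k (by omega) (by omega) s hsS (fun _ _ => by omega)
            (fun _ _ => by omega)
          have hm' := hwin k (by omega) (by omega) s' hs'S (fun _ _ => by omega)
            (fun _ _ => by omega)
          exact huniq s hsS s' hs'S k hm hm'
        · rw [Finset.card_le_one]
          intro s hs s' hs'
          rw [Finset.mem_filter] at hs hs'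
          obtain ⟨hsS, hc1, hc2⟩ := hs
          obtain ⟨hs'S, hc1', hc2'⟩ := hs'
          have he12 : τs (1 + 1) = τs 2 := by norm_num
          have hn2 : 2 * s ≤ τs 1 + τs 2 := by
            have h' : ((2 * s : ℕ) : ℝ) ≤ ((τs 1 + τs 2 : ℕ) : ℝ) := by
              push_cast
              linarith
            exact_mod_cast h'
          have hn2' : 2 * s' ≤ τs 1 + τs 2 := by
            have h' : ((2 * s' : ℕ) : ℝ) ≤ ((τs 1 + τs 2 : ℕ) : ℝ) := by
              push_cast
              linarith
            exact_mod_cast h'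
          have hm := hwin 1 le_rfl hK s hsS (fun _ h => by omega) (fun _ _ => by omega)
          have hm' := hwin 1 le_rfl hK s' hs'S (fun _ h => by omega) (fun _ _ => by omega)
          exact huniq s hsS s' hs'S 1 hm hm'
        · rw [Finset.card_le_one]
          intro s hs s' hs'
          rw [Finset.mem_filter] at hs hs'
          obtain ⟨hsS, hc1, hc2⟩ := hs
          obtain ⟨hs'S, hc1', hc2'⟩ := hs'
          have hn1 : τs (K - 1) + τs K < 2 * s := by
            have h' : ((τs (K - 1) + τs K : ℕ) : ℝ) < ((2 * s : ℕ) : ℝ) := by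
              push_cast
              linarith
            exact_mod_cast h'
          have hn1' : τs (K - 1) + τs K < 2 * s' := by
            have h' : ((τs (K - 1) + τs K : ℕ) : ℝ) < ((2 * s' : ℕ) : ℝ) := by
              push_cast
              linarith
            exact_mod_cast h'
          have hm := hwin K hK le_rfl s hsS (fun _ _ => by omega) (fun _ h => by omega)
          have hm' := hwin K hK le_rfl s' hs'S (fun _ _ => by omega) (fun _ h => by omega)
          exact huniq s hsS s' hs'S K hm hm'
    · -- part (b)
      intro k hk1 hkK hE hdH
      have hlne : l.toFinset.Nonempty := by
        by_contra hne
        rw [Finset.not_nonempty_iff_eq_empty] at hne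
        rw [hne, dH1_empty] at hdH
        exact absurd hdH (by simp)
      obtain ⟨a, haF, hdeq, hamin⟩ := dH1_eq_min (t := τs k) hlne
      have hal : a ∈ l := by simpa using haF
      set d := ((a : ℤ) - τs k).natAbs with hd
      have habs : AbsLe a (τs k) d := by
        constructor <;> omega
      have hdR : (d : ℝ) < min ((τs k : ℝ) - τs (k - 1)) ((τs (k + 1) : ℝ) - τs k) / 8 := by
        rw [hdeq] at hdH
        by_cases hpos : 0 < min ((τs k : ℝ) - τs (k - 1)) ((τs (k + 1) : ℝ) - τs k) / 8
        · rw [← ENNReal.ofReal_natCast d, ENNReal.ofReal_lt_ofReal_iff hpos] at hdH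
          exact hdH
        · exfalso
          push_neg at hpos
          rw [ENNReal.ofReal_eq_zero.mpr hpos] at hdH
          simp at hdH
      have hd8l : 8 * d + τs (k - 1) < τs k := by
        have h1 : min ((τs k : ℝ) - τs (k - 1)) ((τs (k + 1) : ℝ) - τs k) ≤
            (τs k : ℝ) - τs (k - 1) := min_le_left _ _
        have h2 : ((8 * d + τs (k - 1) : ℕ) : ℝ) < ((τs k : ℕ) : ℝ) := by
          push_cast
          linarith
        exact_mod_cast h2
      have hd8r : 8 * d + τs k < τs (k + 1) := by
        have h1 : min ((τs k : ℝ) - τs (k - 1)) ((τs (k + 1) : ℝ) - τs k) ≤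
            (τs (k + 1) : ℝ) - τs k := min_le_right _ _
        have h2 : ((8 * d + τs k : ℕ) : ℝ) < ((τs (k + 1) : ℕ) : ℝ) := by
          push_cast
          linarith
        exact_mod_cast h2
      obtain ⟨r, hr1, hrle, hchA, hchB, hrbound⟩ :=
        detect h0 hK1 hlt hK hB hk1 hkK habs hd8l hd8r hE
      obtain ⟨htk2, htkn⟩ := tau_bounds h0 hK1 hlt hk1 hkK
      have hrtop : (r : ℕ∞) ≠ ⊤ := WithTop.natCast_ne_top r
      have hQtop : ∀ x, (τs k ∈ (Itau n ζ (fun i => cpSignal K τs μ i + ε i ω)) x ∧ (rhat n ζ (fun i => cpSignal K τs μ i + ε i ω)) x ≤ (r : ℕ∞)) → (rhat n ζ (fun i => cpSignal K τs μ i + ε i ω)) x ≠ ⊤ :=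
        fun x hx => ne_top_of_le_ne_top hrtop hx.2
      have hstep : ∀ x ∈ l, ∀ y ∈ l, (τs k ∈ (Itau n ζ (fun i => cpSignal K τs μ i + ε i ω)) x ∧ (rhat n ζ (fun i => cpSignal K τs μ i + ε i ω)) x ≤ (r : ℕ∞)) → (rhat n ζ (fun i => cpSignal K τs μ i + ε i ω)) y ≤ (rhat n ζ (fun i => cpSignal K τs μ i + ε i ω)) x →
          (((Itau n ζ (fun i => cpSignal K τs μ i + ε i ω)) x) ∩ ((Itau n ζ (fun i => cpSignal K τs μ i + ε i ω)) y)).Nonempty → (τs k ∈ (Itau n ζ (fun i => cpSignal K τs μ i + ε i ω)) y ∧ (rhat n ζ (fun i => cpSignal K τs μ i + ε i ω)) y ≤ (r : ℕ∞)) := by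
        intro x hx y hy hQx hyx hinter
        obtain ⟨z, hz⟩ := hinter
        rw [Finset.mem_inter] at hz
        have hxtop : (rhat n ζ (fun i => cpSignal K τs μ i + ε i ω)) x ≠ ⊤ := hQtop x hQx
        have hytop : (rhat n ζ (fun i => cpSignal K τs μ i + ε i ω)) y ≠ ⊤ := ne_top_of_le_ne_top hrtop (hyx.trans hQx.2)
        have hrx1 := (rhat_spec hxtop).1.1
        have hry1 := (rhat_spec hytop).1.1
        have hrxr : ((rhat n ζ (fun i => cpSignal K τs μ i + ε i ω)) x).toNat ≤ r := enat_toNat_le hQx.2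
        have hryrx : ((rhat n ζ (fun i => cpSignal K τs μ i + ε i ω)) y).toNat ≤ ((rhat n ζ (fun i => cpSignal K τs μ i + ε i ω)) x).toNat := by
          have hyx' := hyx
          rw [(rhat_spec hytop).2, (rhat_spec hxtop).2] at hyx'
          exact_mod_cast hyx'
        have hzx : AbsLe z x (((rhat n ζ (fun i => cpSignal K τs μ i + ε i ω)) x).toNat - 1) := by
          have hm := hz.1
          rw [Itau_of_ne_top hxtop] at hm
          exact absLe_of_mem_Icc hm hrx1
        have hzy : AbsLe z y (((rhat n ζ (fun i => cpSignal K τs μ i + ε i ω)) y).toNat - 1) := by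
          have hm := hz.2
          rw [Itau_of_ne_top hytop] at hm
          exact absLe_of_mem_Icc hm hry1
        have hkx : AbsLe (τs k) x (((rhat n ζ (fun i => cpSignal K τs μ i + ε i ω)) x).toNat - 1) := by
          have hm := hQx.1
          rw [Itau_of_ne_top hxtop] at hm
          exact absLe_of_mem_Icc hm hrx1
        obtain ⟨j, hj1, hjK, hjy⟩ :=
          window_cp h0 hK1 hlt hB (hbound y hy).1 (hbound y hy).2 hytop
        have hjk : j = k := by
          apply tau_eq_of_close hlt hj1 hjK hk1 hkK (m := 4 * (r - 1)) ?_ (by omega) (by omega)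
          rcases hjy with ⟨e1, e2⟩
          rcases hzy with ⟨e3, e4⟩
          rcases hzx with ⟨e5, e6⟩
          rcases hkx with ⟨e7, e8⟩
          constructor <;> omega
        subst hjk
        refine ⟨?_, hyx.trans hQx.2⟩
        rw [Itau_of_ne_top hytop]
        exact mem_Icc_of_absLe hjy hry1 htk2 htkn
      have hratop : (rhat n ζ (fun i => cpSignal K τs μ i + ε i ω)) a ≠ ⊤ := ne_top_of_le_ne_top hrtop hrle
      have hQa : τs k ∈ (Itau n ζ (fun i => cpSignal K τs μ i + ε i ω)) a ∧ (rhat n ζ (fun i => cpSignal K τs μ i + ε i ω)) a ≤ (r : ℕ∞) := by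
        refine ⟨?_, hrle⟩
        obtain ⟨j, hj1, hjK, hja⟩ :=
          window_cp h0 hK1 hlt hB (hbound a hal).1 (hbound a hal).2 hratop
        have hra1 := (rhat_spec hratop).1.1
        have hrar : ((rhat n ζ (fun i => cpSignal K τs μ i + ε i ω)) a).toNat ≤ r := enat_toNat_le hrle
        have hjk : j = k := by
          apply tau_eq_of_close hlt hj1 hjK hk1 hkK (m := (r - 1) + d) ?_ (by omega) (by omega)
          rcases hja with ⟨e1, e2⟩
          rcases habs with ⟨e3, e4⟩
          constructor <;> omega
        subst hjk
        rw [Itau_of_ne_top hratop]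
        exact mem_Icc_of_absLe hja hra1 htk2 htkn
      obtain ⟨b, hbS, hQb⟩ :=
        pruneList_chain (fun x => τs k ∈ (Itau n ζ (fun i => cpSignal K τs μ i + ε i ω)) x ∧ (rhat n ζ (fun i => cpSignal K τs μ i + ε i ω)) x ≤ (r : ℕ∞)) hQtop l hsort hstep a hal hQa
      have hbtop : (rhat n ζ (fun i => cpSignal K τs μ i + ε i ω)) b ≠ ⊤ := hQtop b hQb
      have hrb1 := (rhat_spec hbtop).1.1
      have hrbr : ((rhat n ζ (fun i => cpSignal K τs μ i + ε i ω)) b).toNat ≤ r := enat_toNat_le hQb.2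
      have hbabs : AbsLe (τs k) b (((rhat n ζ (fun i => cpSignal K τs μ i + ε i ω)) b).toNat - 1) := by
        have hm := hQb.1
        rw [Itau_of_ne_top hbtop] at hm
        exact absLe_of_mem_Icc hm hrb1
      have hnbr : ((b : ℤ) - τs k).natAbs ≤ r - 1 := by
        rcases hbabs with ⟨e1, e2⟩
        omega
      have hdle : dH1 (pruneList (rhat n ζ (fun i => cpSignal K τs μ i + ε i ω)) (Itau n ζ (fun i => cpSignal K τs μ i + ε i ω)) l) (τs k) ≤ ((((b : ℤ) - τs k).natAbs : ℕ) : ℝ≥0∞) := dH1_le hbS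
      rw [hdeq]
      rcases hrbound with hcase | hcase
      · refine le_trans hdle (le_trans ?_ (le_max_left _ _))
        have hle : ((b : ℤ) - τs k).natAbs ≤ 2 * d := by omega
        calc ((((b : ℤ) - τs k).natAbs : ℕ) : ℝ≥0∞) ≤ ((2 * d : ℕ) : ℝ≥0∞) := by
              exact_mod_cast hle
          _ = 2 * ((d : ℕ) : ℝ≥0∞) := by push_cast; ring
      · refine le_trans hdle (le_trans ?_ (le_max_right _ _))
        have h1 : ((((b : ℤ) - τs k).natAbs : ℕ) : ℝ) ≤ (r : ℝ) - 1 := by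
          have h2 : ((((b : ℤ) - τs k).natAbs : ℕ) : ℝ) ≤ ((r - 1 : ℕ) : ℝ) := by
            exact_mod_cast hnbr
          rw [Nat.cast_sub hr1, Nat.cast_one] at h2
          exact h2
        calc ((((b : ℤ) - τs k).natAbs : ℕ) : ℝ≥0∞)
            = ENNReal.ofReal ((((b : ℤ) - τs k).natAbs : ℕ) : ℝ) :=
              (ENNReal.ofReal_natCast _).symm
          _ ≤ ENNReal.ofReal (200 * (Real.log ((n : ℝ) * (μ (k + 1) - μ k) ^ 2) + ζ ^ 2) /
                (μ (k + 1) - μ k) ^ 2) := ENNReal.ofReal_le_ofReal (by linarith)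
end

section
/- Let ε_1,…,ε_n be independent centered random variables with E[exp(s ε_i)] ≤ exp(s²/2) for all s > 0 and all i. Then, for any positive integer d, any α > 0 and any x > 0: P( max over integers k with d ≤ k ≤ (1+α)d of (Σ_{i=1}^k ε_i)/√k ≥ x ) ≤ exp( −x²/(2(1+α)) ). -/
open MeasureTheory ProbabilityTheory Finset Real NNReal ENNReal

/-- Lemma: maximal inequality for normalized partial sums of independent
centered `1`-sub-Gaussian random variables. -/
theorem maximal_inequality_normalized_partial_sums
    {Ω : Type} [MeasurableSpace Ω] (P : Measure Ω) [IsProbabilityMeasure P]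
    (ε : ℕ → Ω → ℝ)
    (hmeas : ∀ i, Measurable (ε i))
    (hindep : iIndepFun ε P)
    (hcent : ∀ i, ∫ ω, ε i ω ∂P = 0)
    (hint : ∀ i (s : ℝ), 0 < s → Integrable (fun ω => Real.exp (s * ε i ω)) P)
    (hsub : ∀ i (s : ℝ), 0 < s → ∫ ω, Real.exp (s * ε i ω) ∂P ≤ Real.exp (s ^ 2 / 2))
    (d : ℕ) (hd : 0 < d) (α x : ℝ) (hα : 0 < α) (hx : 0 < x) :
    P {ω | ∃ k : ℕ, d ≤ k ∧ (k : ℝ) ≤ (1 + α) * d ∧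
        x ≤ (∑ i ∈ Finset.Icc 1 k, ε i ω) / Real.sqrt k} ≤
      ENNReal.ofReal (Real.exp (-(x ^ 2) / (2 * (1 + α)))) := by
  classical
  have hd' : (0:ℝ) < d := by exact_mod_cast hd
  set n : ℕ := ⌊(1 + α) * d⌋₊ with hn_def
  have hdn : d ≤ n := Nat.le_floor (by nlinarith)
  have hn_le : (n : ℝ) ≤ (1 + α) * d := Nat.floor_le (by positivity)
  have hn_pos : (0:ℝ) < n := lt_of_lt_of_le hd' (by exact_mod_cast hdn)
  set l : ℝ := x * Real.sqrt d / n with hl_def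
  have hsd : (0:ℝ) < Real.sqrt d := Real.sqrt_pos.mpr hd'
  have hl : 0 < l := by positivity
  set c : ℕ → ℝ := fun i => ∫ ω, Real.exp (l * ε i ω) ∂P with hc_def
  have hc_pos : ∀ i, 0 < c i := by
    intro i
    have := mgf_pos (X := ε i) (μ := P) (t := l) (hint i l hl)
    simpa [mgf] using this
  have hc_le : ∀ i, c i ≤ Real.exp (l ^ 2 / 2) := fun i => hsub i l hl
  set S : ℕ → Ω → ℝ := fun k ω => ∑ i ∈ Finset.Icc 1 k, ε i ω with hS_def
  set M : ℕ → Ω → ℝ := fun k ω => Real.exp (l * S k ω) / ∏ i ∈ Finset.Icc 1 k, c i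
    with hM_def
  have hprod_pos : ∀ k, 0 < ∏ i ∈ Finset.Icc 1 k, c i :=
    fun k => Finset.prod_pos fun i _ => hc_pos i
  have hM_nonneg : ∀ k ω, 0 ≤ M k ω :=
    fun k ω => div_nonneg (Real.exp_nonneg _) (hprod_pos k).le
  set 𝒢 := Filtration.natural ε (fun i => (hmeas i).stronglyMeasurable) with h𝒢_def
  have hS_meas : ∀ k, StronglyMeasurable[𝒢 k] (S k) := by
    intro k
    apply Finset.stronglyMeasurable_fun_sum
    intro i hi
    exact ((Filtration.stronglyAdapted_natural (fun j => (hmeas j).stronglyMeasurable)) i).mono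
      (𝒢.mono (Finset.mem_Icc.mp hi).2)
  have hM_meas : ∀ k, StronglyMeasurable[𝒢 k] (M k) := by
    intro k
    have h1 : StronglyMeasurable[𝒢 k] fun ω => Real.exp (l * S k ω) :=
      Real.continuous_exp.comp_stronglyMeasurable ((hS_meas k).const_mul l)
    simpa [hM_def, div_eq_mul_inv] using h1.mul_const (∏ i ∈ Finset.Icc 1 k, c i)⁻¹
  have hexp_int : ∀ k, Integrable (fun ω => Real.exp (l * S k ω)) P := by
    intro k
    have := hindep.integrable_exp_mul_sum hmeas (s := Finset.Icc 1 k)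
      (fun i _ => hint i l hl)
    simpa [Finset.sum_apply, hS_def] using this
  have hM_int : ∀ k, Integrable (M k) P := fun k => (hexp_int k).div_const _
  -- martingale property
  have hstep : ∀ k, M k =ᵐ[P] P[M (k + 1)|𝒢 k] := by
    intro k
    set h : Ω → ℝ := fun ω => Real.exp (l * ε (k + 1) ω) / c (k + 1) with hh_def
    have hMsucc : M (k + 1) = M k * h := by
      funext ω
      simp only [hM_def, hS_def, hh_def, Pi.mul_apply]
      rw [Finset.sum_Icc_succ_top (Nat.succ_le_succ (Nat.zero_le k)),
        Finset.prod_Icc_succ_top (Nat.succ_le_succ (Nat.zero_le k)), mul_add, Real.exp_add,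
        div_mul_div_comm]
    have hh_int : Integrable h P := (hint (k + 1) l hl).div_const _
    have hg : Measurable[MeasurableSpace.comap (ε (k + 1)) inferInstance] (ε (k + 1)) :=
      Measurable.of_comap_le le_rfl
    have hh_sm : StronglyMeasurable[MeasurableSpace.comap (ε (k + 1)) inferInstance] h := by
      apply Measurable.stronglyMeasurable
      exact (((measurable_id.const_mul l).exp.div_const _).comp hg)
    have hle : ∀ i, MeasurableSpace.comap (ε i) inferInstance ≤ ‹MeasurableSpace Ω› :=
      fun i => (hmeas i).comap_le
    have hIndep₂ : Indep (MeasurableSpace.comap (ε (k + 1)) inferInstance) (𝒢 k) P := by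
      have h1 := ProbabilityTheory.indep_biSup_compl hle hindep (Set.Iic k)
      have h2 : MeasurableSpace.comap (ε (k + 1)) inferInstance ≤
          ⨆ m ∈ (Set.Iic k)ᶜ, MeasurableSpace.comap (ε m) inferInstance :=
        le_biSup (fun m : ℕ => MeasurableSpace.comap (ε m) inferInstance)
          (show (k + 1) ∈ (Set.Iic k)ᶜ by simp)
      exact indep_of_indep_of_le_left h1.symm h2
    have hcond_h : P[h|𝒢 k] =ᵐ[P] fun _ => ∫ ω', h ω' ∂P :=
      condExp_indep_eq (hle (k + 1)) (𝒢.le k) hh_sm hIndep₂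
    have hint_h : ∫ ω', h ω' ∂P = 1 := by
      simp only [hh_def]
      rw [integral_div]
      exact div_self (hc_pos (k + 1)).ne'
    have hpull : P[M (k + 1)|𝒢 k] =ᵐ[P] M k * P[h|𝒢 k] := by
      rw [hMsucc]
      exact condExp_mul_of_stronglyMeasurable_left (hM_meas k)
        (by rw [← hMsucc]; exact hM_int (k + 1)) hh_int
    have hfin : M k * P[h|𝒢 k] =ᵐ[P] M k := by
      filter_upwards [hcond_h] with ω hω
      simp [Pi.mul_apply, hω, hint_h]
    exact (hpull.trans hfin).symm
  have hmart : Martingale M 𝒢 P := martingale_nat (fun k => hM_meas k) hM_int hstep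
  -- threshold
  set b : ℝ := Real.exp (x ^ 2 * d / (2 * n)) with hb_def
  have hb : 0 < b := Real.exp_pos _
  -- inclusion of events
  have hsubset : {ω | ∃ k : ℕ, d ≤ k ∧ (k : ℝ) ≤ (1 + α) * d ∧
        x ≤ (∑ i ∈ Finset.Icc 1 k, ε i ω) / Real.sqrt k} ⊆
      {ω | ((b.toNNReal : ℝ≥0) : ℝ) ≤
        (Finset.range (n + 1)).sup' Finset.nonempty_range_add_one fun k => M k ω} := by
    rintro ω ⟨k, hk1, hk2, hk3⟩
    have hk_le_n : k ≤ n := Nat.le_floor hk2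
    have hkpos : (0:ℝ) < k := lt_of_lt_of_le hd' (by exact_mod_cast hk1)
    have hsk : Real.sqrt d ≤ Real.sqrt k := Real.sqrt_le_sqrt (by exact_mod_cast hk1)
    have hSk : x * Real.sqrt d ≤ S k ω := by
      have h1 : x * Real.sqrt k ≤ S k ω := by
        have := (le_div_iff₀ (Real.sqrt_pos.mpr hkpos)).mp hk3
        simpa [hS_def] using this
      have h2 : x * Real.sqrt d ≤ x * Real.sqrt k := by
        apply mul_le_mul_of_nonneg_left hsk hx.le
      linarith
    have hprod_le : ∏ i ∈ Finset.Icc 1 k, c i ≤ Real.exp ((k : ℝ) * (l ^ 2 / 2)) := by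
      calc ∏ i ∈ Finset.Icc 1 k, c i ≤ ∏ _i ∈ Finset.Icc 1 k, Real.exp (l ^ 2 / 2) :=
            Finset.prod_le_prod (fun i _ => (hc_pos i).le) (fun i _ => hc_le i)
        _ = Real.exp (l ^ 2 / 2) ^ k := by
            rw [Finset.prod_const, Nat.card_Icc]; norm_num
        _ = Real.exp ((k : ℝ) * (l ^ 2 / 2)) := by
            rw [← Real.exp_nat_mul]
    have hkey : x ^ 2 * d / (2 * n) ≤ l * S k ω - (k : ℝ) * (l ^ 2 / 2) := by
      have h2 : l * (x * Real.sqrt d) ≤ l * S k ω :=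
        mul_le_mul_of_nonneg_left hSk hl.le
      have h3 : (k : ℝ) * (l ^ 2 / 2) ≤ (n : ℝ) * (l ^ 2 / 2) := by
        apply mul_le_mul_of_nonneg_right (by exact_mod_cast hk_le_n) (by positivity)
      have h4 : l * (x * Real.sqrt d) - (n : ℝ) * (l ^ 2 / 2) = x ^ 2 * d / (2 * n) := by
        have hs : Real.sqrt d * Real.sqrt d = (d : ℝ) := Real.mul_self_sqrt hd'.le
        rw [hl_def]
        field_simp
        ring_nf
        rw [Real.sq_sqrt hd'.le]
      linarith
    have hMk : b ≤ M k ω := by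
      have h1 : Real.exp (l * S k ω) / Real.exp ((k : ℝ) * (l ^ 2 / 2)) ≤ M k ω := by
        simp only [hM_def]
        exact div_le_div_of_nonneg_left (Real.exp_nonneg _) (hprod_pos k) hprod_le
      have h2 : b ≤ Real.exp (l * S k ω) / Real.exp ((k : ℝ) * (l ^ 2 / 2)) := by
        rw [← Real.exp_sub, hb_def]
        exact Real.exp_le_exp.mpr hkey
      linarith
    have hmem : k ∈ Finset.range (n + 1) := Finset.mem_range.mpr (Nat.lt_succ_of_le hk_le_n)
    have : M k ω ≤ (Finset.range (n + 1)).sup' Finset.nonempty_range_add_one fun j => M j ω :=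
      Finset.le_sup' (fun j => M j ω) hmem
    rw [Set.mem_setOf_eq, Real.coe_toNNReal _ hb.le]
    linarith
  -- Doob's maximal inequality
  have hmax := maximal_ineq (μ := P) hmart.submartingale
    (fun k ω => hM_nonneg k ω) (ε := b.toNNReal) n
  have hEMn : ∫ ω, M n ω ∂P = 1 := by
    have hmg : ∫ ω, Real.exp (l * S n ω) ∂P = ∏ i ∈ Finset.Icc 1 n, c i := by
      have h := hindep.mgf_sum hmeas (Finset.Icc 1 n) (t := l)
      simp only [mgf, Finset.sum_apply, hS_def, hc_def] at h ⊢
      convert h using 2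
    simp only [hM_def]
    rw [integral_div, hmg, div_self (hprod_pos n).ne']
  have hset_le : ENNReal.ofReal (∫ ω in
      {ω | ((b.toNNReal : ℝ≥0) : ℝ) ≤
        (Finset.range (n + 1)).sup' Finset.nonempty_range_add_one fun k => M k ω}, M n ω ∂P) ≤ 1 := by
    rw [← ENNReal.ofReal_one]
    apply ENNReal.ofReal_le_ofReal
    rw [← hEMn]
    exact setIntegral_le_integral (hM_int n) (Filter.Eventually.of_forall (hM_nonneg n))
  have hone : (b.toNNReal : ℝ≥0∞) * P {ω | ((b.toNNReal : ℝ≥0) : ℝ) ≤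
      (Finset.range (n + 1)).sup' Finset.nonempty_range_add_one fun k => M k ω} ≤ 1 := by
    have := hmax.trans hset_le
    simpa [ENNReal.smul_def, smul_eq_mul] using this
  have hPE' : P {ω | ((b.toNNReal : ℝ≥0) : ℝ) ≤
      (Finset.range (n + 1)).sup' Finset.nonempty_range_add_one fun k => M k ω} ≤
      (b.toNNReal : ℝ≥0∞)⁻¹ :=
    ENNReal.le_inv_iff_mul_le.mpr (by rwa [mul_comm])
  have hfinal : ((b.toNNReal : ℝ≥0∞))⁻¹ ≤ ENNReal.ofReal (Real.exp (-(x ^ 2) / (2 * (1 + α)))) := by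
    have hcoe : ((b.toNNReal : ℝ≥0) : ℝ≥0∞) = ENNReal.ofReal b := rfl
    rw [hcoe, ← ENNReal.ofReal_inv_of_pos hb]
    apply ENNReal.ofReal_le_ofReal
    rw [hb_def, ← Real.exp_neg]
    apply Real.exp_le_exp.mpr
    rw [neg_div]
    have hx2 : (0:ℝ) ≤ x ^ 2 := sq_nonneg x
    have h5 : x ^ 2 / (2 * (1 + α)) ≤ x ^ 2 * d / (2 * n) := by
      rw [div_le_div_iff₀ (by positivity) (by positivity)]
      nlinarith [hn_le, hx2]
    linarith
  calc P {ω | ∃ k : ℕ, d ≤ k ∧ (k : ℝ) ≤ (1 + α) * d ∧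
        x ≤ (∑ i ∈ Finset.Icc 1 k, ε i ω) / Real.sqrt k}
      ≤ P {ω | ((b.toNNReal : ℝ≥0) : ℝ) ≤
        (Finset.range (n + 1)).sup' Finset.nonempty_range_add_one fun k => M k ω} :=
        measure_mono hsubset
    _ ≤ (b.toNNReal : ℝ≥0∞)⁻¹ := hPE'
    _ ≤ ENNReal.ofReal (Real.exp (-(x ^ 2) / (2 * (1 + α)))) := hfinal
end
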